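/- arXiv:0707.1577 — 7 statements merged into one kernel-verified Lean document; each statement's English description precedes it below -/
import Mathlib

section
/- Let G be a digraph such that d^+(x) + d^-(x) ≥ |G| + 3 for every vertex x, and d^+(x) + d^-(y) ≥ |G| + 1 for every pair of vertices x, y. Let z_1 and z_2 be distinct vertices of G such that z_1z_2 is not an edge of G. Then there exists a vertex a that is an out-neighbour of z_1 and an in-neighbour of z_2 such that the digraph G - {z_1, z_2, a} is strongly connected. -/
/-- `l` is a directed cycle in the digraph with edge relation `A`: at least two
distinct vertices, with consecutive vertices (cyclically) joined by edges. -/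
def IsCycleList {V : Type*} (A : V → V → Prop) (l : List V) : Prop :=
  2 ≤ l.length ∧ l.Nodup ∧ l.Chain' A ∧
    ∀ a ∈ l.getLast?, ∀ b ∈ l.head?, A a b

/-- The cycle `l` encounters the vertices `s 0, …, s (k-1)` in this cyclic order:
some rotation of `l` contains them as a sublist in this order. -/
def EncountersInOrder {V : Type*} {k : ℕ} (l : List V) (s : Fin k → V) : Prop :=
  ∃ r, List.Sublist (List.ofFn s) (l.rotate r)

open Finset

section Aux

variable {V : Type*} [Fintype V] [DecidableEq V]

/-- A "bad cut": the vertex set minus `{z₁, z₂, a}` splits into nonempty `X`, `Y`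
with no edges from `X` to `Y`. -/
def BadCut (A : V → V → Prop) (z₁ z₂ a : V) : Prop :=
  ∃ X Y : Finset V, X.Nonempty ∧ Y.Nonempty ∧ Disjoint X Y ∧
    X ∪ Y = Finset.univ \ {z₁, z₂, a} ∧ ∀ x ∈ X, ∀ y ∈ Y, ¬ A x y

lemma cut_facts (A : V → V → Prop) [DecidableRel A] (hirr : Irreflexive A)
    (hdeg1 : ∀ x : V, Fintype.card V + 3 ≤
      (Finset.univ.filter fun w => A x w).card + (Finset.univ.filter fun w => A w x).card)
    (hdeg2 : ∀ x y : V, Fintype.card V + 1 ≤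
      (Finset.univ.filter fun w => A x w).card + (Finset.univ.filter fun w => A w y).card)
    (z₁ z₂ a : V) (h12 : z₁ ≠ z₂) (ha1 : a ≠ z₁) (ha2 : a ≠ z₂)
    (X Y : Finset V) (hX : X.Nonempty) (hY : Y.Nonempty) (hd : Disjoint X Y)
    (hu : X ∪ Y = Finset.univ \ {z₁, z₂, a})
    (he : ∀ x ∈ X, ∀ y ∈ Y, ¬ A x y) :
    (∀ x ∈ X, Finset.univ.filter (fun w => A x w) = X.erase x ∪ {z₁, z₂, a}) ∧
    (∀ y ∈ Y, Finset.univ.filter (fun w => A w y) = Y.erase y ∪ {z₁, z₂, a}) ∧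
    Fintype.card V = X.card + Y.card + 3 ∧ 2 ≤ X.card ∧
    (∀ x ∈ X, (Finset.univ.filter fun w => A x w).card = X.card + 2) ∧
    (∀ y ∈ Y, (Finset.univ.filter fun w => A w y).card = Y.card + 2) := by
  have htrio : ({z₁, z₂, a} : Finset V).card = 3 := by
    rw [card_insert_of_notMem (by simp [h12, Ne.symm ha1]),
      card_insert_of_notMem (by simp [Ne.symm ha2]), card_singleton]
  have hmemX : ∀ x ∈ X, x ≠ z₁ ∧ x ≠ z₂ ∧ x ≠ a := by
    intro x hx
    have : x ∈ Finset.univ \ ({z₁, z₂, a} : Finset V) := by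
      rw [← hu]; exact mem_union_left _ hx
    simp only [mem_sdiff, mem_insert, mem_singleton] at this
    tauto
  have hmemY : ∀ y ∈ Y, y ≠ z₁ ∧ y ≠ z₂ ∧ y ≠ a := by
    intro y hy
    have : y ∈ Finset.univ \ ({z₁, z₂, a} : Finset V) := by
      rw [← hu]; exact mem_union_right _ hy
    simp only [mem_sdiff, mem_insert, mem_singleton] at this
    tauto
  have hcover : ∀ w : V, w ∈ X ∨ w ∈ Y ∨ w = z₁ ∨ w = z₂ ∨ w = a := by
    intro w
    by_cases hw : w = z₁ ∨ w = z₂ ∨ w = a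
    · tauto
    · have : w ∈ X ∪ Y := by
        rw [hu]; simp only [mem_sdiff, mem_insert, mem_singleton]
        exact ⟨mem_univ w, by tauto⟩
      rcases mem_union.mp this with h | h <;> tauto
  have hcard : Fintype.card V = X.card + Y.card + 3 := by
    have h1 : (Finset.univ \ ({z₁, z₂, a} : Finset V)).card
        = Fintype.card V - 3 := by
      rw [card_sdiff_of_subset (subset_univ _), htrio, card_univ]
    have h2 : (X ∪ Y).card = X.card + Y.card := card_union_of_disjoint hd
    have h3 : 3 ≤ Fintype.card V := by
      rw [← htrio, ← card_univ]; exact card_le_card (subset_univ _)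
    rw [hu, h1] at h2
    omega
  -- subset bounds
  have hsubX : ∀ x ∈ X, Finset.univ.filter (fun w => A x w) ⊆ X.erase x ∪ {z₁, z₂, a} := by
    intro x hx w hw
    simp only [mem_filter, mem_univ, true_and] at hw
    rcases hcover w with h | h | h | h | h
    · exact mem_union_left _ (mem_erase.mpr ⟨fun hwx => hirr x (hwx ▸ hw), h⟩)
    · exact absurd hw (he x hx w h)
    · exact mem_union_right _ (by simp [h])
    · exact mem_union_right _ (by simp [h])
    · exact mem_union_right _ (by simp [h])
  have hsubY : ∀ y ∈ Y, Finset.univ.filter (fun w => A w y) ⊆ Y.erase y ∪ {z₁, z₂, a} := by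
    intro y hy w hw
    simp only [mem_filter, mem_univ, true_and] at hw
    rcases hcover w with h | h | h | h | h
    · exact absurd hw (he w h y hy)
    · exact mem_union_left _ (mem_erase.mpr ⟨fun hwy => hirr y (hwy ▸ hw), h⟩)
    · exact mem_union_right _ (by simp [h])
    · exact mem_union_right _ (by simp [h])
    · exact mem_union_right _ (by simp [h])
  have hcardX : ∀ x ∈ X, (X.erase x ∪ ({z₁, z₂, a} : Finset V)).card = X.card + 2 := by
    intro x hx
    have hdisj : Disjoint (X.erase x) ({z₁, z₂, a} : Finset V) := by
      rw [disjoint_left]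
      intro w hw hw'
      have := hmemX w (mem_of_mem_erase hw)
      simp only [mem_insert, mem_singleton] at hw'
      tauto
    rw [card_union_of_disjoint hdisj, card_erase_of_mem hx, htrio]
    have : 1 ≤ X.card := card_pos.mpr ⟨x, hx⟩
    omega
  have hcardY : ∀ y ∈ Y, (Y.erase y ∪ ({z₁, z₂, a} : Finset V)).card = Y.card + 2 := by
    intro y hy
    have hdisj : Disjoint (Y.erase y) ({z₁, z₂, a} : Finset V) := by
      rw [disjoint_left]
      intro w hw hw'
      have := hmemY w (mem_of_mem_erase hw)
      simp only [mem_insert, mem_singleton] at hw'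
      tauto
    rw [card_union_of_disjoint hdisj, card_erase_of_mem hy, htrio]
    have : 1 ≤ Y.card := card_pos.mpr ⟨y, hy⟩
    omega
  -- tight equalities
  have hout : ∀ x ∈ X, Finset.univ.filter (fun w => A x w) = X.erase x ∪ {z₁, z₂, a} := by
    intro x hx
    obtain ⟨y, hy⟩ := hY
    refine eq_of_subset_of_card_le (hsubX x hx) ?_
    have h1 := hdeg2 x y
    have h2 := card_le_card (hsubY y hy)
    have h3 := hcardX x hx
    have h4 := hcardY y hy
    omega
  have hinn : ∀ y ∈ Y, Finset.univ.filter (fun w => A w y) = Y.erase y ∪ {z₁, z₂, a} := by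
    intro y hy
    obtain ⟨x, hx⟩ := hX
    refine eq_of_subset_of_card_le (hsubY y hy) ?_
    have h1 := hdeg2 x y
    have h2 := card_le_card (hsubX x hx)
    have h3 := hcardX x hx
    have h4 := hcardY y hy
    omega
  have hcout : ∀ x ∈ X, (Finset.univ.filter fun w => A x w).card = X.card + 2 := by
    intro x hx; rw [hout x hx, hcardX x hx]
  have hcinn : ∀ y ∈ Y, (Finset.univ.filter fun w => A w y).card = Y.card + 2 := by
    intro y hy; rw [hinn y hy, hcardY y hy]
  have hX2 : 2 ≤ X.card := by
    obtain ⟨x, hx⟩ := hX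
    have h1 := hdeg1 x
    have h2 : (Finset.univ.filter fun w => A w x).card ≤ Fintype.card V - 1 := by
      have hsub : Finset.univ.filter (fun w => A w x) ⊆ Finset.univ.erase x := by
        intro w hw
        simp only [mem_filter, mem_univ, true_and] at hw
        exact mem_erase.mpr ⟨fun hwx => hirr x (hwx ▸ hw), mem_univ w⟩
      have := card_le_card hsub
      rw [card_erase_of_mem (mem_univ x), card_univ] at this
      exact this
    have h3 := hcout x hx
    have h4 : 1 ≤ Fintype.card V := by omega
    omega
  exact ⟨hout, hinn, hcard, hX2, hcout, hcinn⟩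

lemma key_case (A : V → V → Prop) [DecidableRel A] (hirr : Irreflexive A)
    (hdeg1 : ∀ x : V, Fintype.card V + 3 ≤
      (Finset.univ.filter fun w => A x w).card + (Finset.univ.filter fun w => A w x).card)
    (hdeg2 : ∀ x y : V, Fintype.card V + 1 ≤
      (Finset.univ.filter fun w => A x w).card + (Finset.univ.filter fun w => A w y).card)
    (z₁ z₂ a₁ a₂ : V) (h12 : z₁ ≠ z₂)
    (ha11 : a₁ ≠ z₁) (ha12 : a₁ ≠ z₂) (ha21 : a₂ ≠ z₁) (ha22 : a₂ ≠ z₂)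
    (haa : a₁ ≠ a₂)
    (X₁ Y₁ X₂ Y₂ : Finset V)
    (hX1 : X₁.Nonempty) (hY1 : Y₁.Nonempty) (hd1 : Disjoint X₁ Y₁)
    (hu1 : X₁ ∪ Y₁ = Finset.univ \ {z₁, z₂, a₁}) (he1 : ∀ x ∈ X₁, ∀ y ∈ Y₁, ¬ A x y)
    (hX2 : X₂.Nonempty) (hY2 : Y₂.Nonempty) (hd2 : Disjoint X₂ Y₂)
    (hu2 : X₂ ∪ Y₂ = Finset.univ \ {z₁, z₂, a₂}) (he2 : ∀ x ∈ X₂, ∀ y ∈ Y₂, ¬ A x y)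
    (hmem : a₂ ∈ X₁) : False := by
  obtain ⟨hout1, hinn1, hn1, hX1c, hcout1, hcinn1⟩ :=
    cut_facts A hirr hdeg1 hdeg2 z₁ z₂ a₁ h12 ha11 ha12 X₁ Y₁ hX1 hY1 hd1 hu1 he1
  obtain ⟨hout2, hinn2, hn2, hX2c, hcout2, hcinn2⟩ :=
    cut_facts A hirr hdeg1 hdeg2 z₁ z₂ a₂ h12 ha21 ha22 X₂ Y₂ hX2 hY2 hd2 hu2 he2
  have hmemX1 : ∀ x ∈ X₁, x ≠ z₁ ∧ x ≠ z₂ ∧ x ≠ a₁ := by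
    intro x hx
    have : x ∈ Finset.univ \ ({z₁, z₂, a₁} : Finset V) := by
      rw [← hu1]; exact mem_union_left _ hx
    simp only [mem_sdiff, mem_insert, mem_singleton] at this
    tauto
  have hmemY1 : ∀ y ∈ Y₁, y ≠ z₁ ∧ y ≠ z₂ ∧ y ≠ a₁ := by
    intro y hy
    have : y ∈ Finset.univ \ ({z₁, z₂, a₁} : Finset V) := by
      rw [← hu1]; exact mem_union_right _ hy
    simp only [mem_sdiff, mem_insert, mem_singleton] at this
    tauto
  have hmemY2 : ∀ y ∈ Y₂, y ≠ z₁ ∧ y ≠ z₂ ∧ y ≠ a₂ := by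
    intro y hy
    have : y ∈ Finset.univ \ ({z₁, z₂, a₂} : Finset V) := by
      rw [← hu2]; exact mem_union_right _ hy
    simp only [mem_sdiff, mem_insert, mem_singleton] at this
    tauto
  have hcover2 : ∀ w : V, w ≠ z₁ → w ≠ z₂ → w ≠ a₂ → w ∈ X₂ ∨ w ∈ Y₂ := by
    intro w h1 h2 h3
    have : w ∈ X₂ ∪ Y₂ := by
      rw [hu2]; simp only [mem_sdiff, mem_insert, mem_singleton]
      exact ⟨mem_univ w, by tauto⟩
    exact mem_union.mp this
  -- out-neighbourhood of a₂ (as member of X₁)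
  have houtA2 := hout1 a₂ hmem
  -- x' witness in X₁ \ {a₂}
  obtain ⟨x', hx'e⟩ : (X₁.erase a₂).Nonempty := by
    apply card_pos.mp
    rw [card_erase_of_mem hmem]
    omega
  have hx'X1 : x' ∈ X₁ := mem_of_mem_erase hx'e
  have hx'ne : x' ≠ a₂ := (mem_erase.mp hx'e).1
  -- every member of Y₂ is an out-neighbour of a₂
  have hY2out : ∀ v ∈ Y₂, v ∈ X₁.erase a₂ ∪ ({z₁, z₂, a₁} : Finset V) := by
    intro v hv
    have hAv : A a₂ v := by
      have : a₂ ∈ Finset.univ.filter (fun w => A w v) := by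
        rw [hinn2 v hv]
        exact mem_union_right _ (by simp)
      simpa using this
    have : v ∈ Finset.univ.filter (fun w => A a₂ w) := by simpa using hAv
    rw [houtA2] at this
    exact this
  by_cases hwint : (Y₂ ∩ X₁).Nonempty
  · -- Case: Y₂ meets X₁
    obtain ⟨w, hwmem⟩ := hwint
    have hwY2 : w ∈ Y₂ := (mem_inter.mp hwmem).1
    have hwX1 : w ∈ X₁ := (mem_inter.mp hwmem).2
    -- Claim A : X₁.erase a₂ ⊆ Y₂
    have claimA : X₁.erase a₂ ⊆ Y₂ := by
      intro t ht
      have htX1 : t ∈ X₁ := mem_of_mem_erase ht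
      have htne : t ≠ a₂ := (mem_erase.mp ht).1
      obtain ⟨ht1, ht2, -⟩ := hmemX1 t htX1
      by_cases htw : t = w
      · exact htw ▸ hwY2
      · rcases hcover2 t ht1 ht2 htne with h | h
        · exfalso
          have hAtw : A t w := by
            have : w ∈ Finset.univ.filter (fun u => A t u) := by
              rw [hout1 t htX1]
              exact mem_union_left _ (mem_erase.mpr ⟨fun h => htw h.symm, hwX1⟩)
            simpa using this
          exact he2 t h w hwY2 hAtw
        · exact h
    -- Claim B : Y₁ ⊆ X₂
    have claimB : Y₁ ⊆ X₂ := by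
      intro y hy
      obtain ⟨hy1, hy2, hy3⟩ := hmemY1 y hy
      have hyne2 : y ≠ a₂ := by
        intro h
        exact absurd hmem (disjoint_right.mp hd1 (h ▸ hy))
      rcases hcover2 y hy1 hy2 hyne2 with h | h
      · exact h
      · exfalso
        have := hY2out y h
        rcases mem_union.mp this with h' | h'
        · exact absurd (mem_of_mem_erase h') (disjoint_right.mp hd1 hy)
        · simp only [mem_insert, mem_singleton] at h'
          tauto
    -- Claim C : X₂ ⊆ Y₁ ∪ {a₁}
    have claimC : X₂ ⊆ Y₁ ∪ {a₁} := by
      intro v hv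
      have hv2 : v ∉ Y₂ := disjoint_left.mp hd2 hv
      have : v ∈ X₂ ∪ Y₂ := mem_union_left _ hv
      rw [hu2] at this
      simp only [mem_sdiff, mem_insert, mem_singleton] at this
      obtain ⟨-, hv'⟩ := this
      push_neg at hv'
      obtain ⟨hv1', hv2', hv3'⟩ := hv'
      by_cases hva : v = a₁
      · exact mem_union_right _ (by simp [hva])
      · have : v ∈ X₁ ∪ Y₁ := by
          rw [hu1]; simp only [mem_sdiff, mem_insert, mem_singleton]
          exact ⟨mem_univ v, by tauto⟩
        rcases mem_union.mp this with h | h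
        · exact absurd (claimA (mem_erase.mpr ⟨hv3', h⟩)) hv2
        · exact mem_union_left _ h
    have hX2le : X₂.card ≤ Y₁.card + 1 := by
      have := card_le_card claimC
      have := card_union_le Y₁ ({a₁} : Finset V)
      simp only [card_singleton] at this
      omega
    -- from a vertex of Y₁ get Y₁.card ≥ X₁.card + 1
    obtain ⟨y, hy⟩ := hY1
    have hyX2 : y ∈ X₂ := claimB hy
    have h1 := hdeg1 y
    have h2 := hcout2 y hyX2
    have h3 := hcinn1 y hy
    have hY1big : X₁.card + 1 ≤ Y₁.card := by omega
    -- now the x' contradiction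
    have hx'Y2 : x' ∈ Y₂ := claimA hx'e
    have hnoY1 : ∀ u ∈ Y₁, ¬ A u x' := fun u hu => he2 u (claimB hu) x' hx'Y2
    have hinnx' : Finset.univ.filter (fun w => A w x') ⊆ Finset.univ \ insert x' Y₁ := by
      intro w hw
      simp only [mem_filter, mem_univ, true_and] at hw
      simp only [mem_sdiff, mem_insert, mem_univ, true_and]
      push_neg
      constructor
      · intro h; exact hirr x' (h ▸ hw)
      · intro h; exact hnoY1 w h hw
    have hcinsert : (insert x' Y₁).card = Y₁.card + 1 := by
      rw [card_insert_of_notMem (disjoint_left.mp hd1 hx'X1)]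
    have hinncard : (Finset.univ.filter fun w => A w x').card ≤
        Fintype.card V - (Y₁.card + 1) := by
      have := card_le_card hinnx'
      rw [card_sdiff_of_subset (subset_univ _), card_univ, hcinsert] at this
      exact this
    have h4 := hdeg1 x'
    have h5 := hcout1 x' hx'X1
    omega
  · -- Case: Y₂ ∩ X₁ = ∅, so Y₂ = {a₁}
    have hY2sub : Y₂ ⊆ {a₁} := by
      intro v hv
      have := hY2out v hv
      rcases mem_union.mp this with h | h
      · exfalso
        exact hwint ⟨v, mem_inter.mpr ⟨hv, mem_of_mem_erase h⟩⟩
      · simp only [mem_insert, mem_singleton] at h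
        obtain ⟨h1, h2, -⟩ := hmemY2 v hv
        simp only [mem_singleton]
        tauto
    obtain ⟨b, hb⟩ := hY2
    have hba : b = a₁ := by simpa using hY2sub hb
    have ha1Y2 : a₁ ∈ Y₂ := hba ▸ hb
    -- x' is in X₂
    obtain ⟨hx1', hx2', -⟩ := hmemX1 x' hx'X1
    have hx'X2 : x' ∈ X₂ := by
      rcases hcover2 x' hx1' hx2' hx'ne with h | h
      · exact h
      · exfalso
        have : x' = a₁ := by simpa using hY2sub h
        exact (hmemX1 x' hx'X1).2.2 this
    have hAx'a1 : A x' a₁ := by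
      have : a₁ ∈ Finset.univ.filter (fun u => A x' u) := by
        rw [hout1 x' hx'X1]
        exact mem_union_right _ (by simp)
      simpa using this
    exact he2 x' hx'X2 a₁ ha1Y2 hAx'a1

lemma not_both_bad (A : V → V → Prop) [DecidableRel A] (hirr : Irreflexive A)
    (hdeg1 : ∀ x : V, Fintype.card V + 3 ≤
      (Finset.univ.filter fun w => A x w).card + (Finset.univ.filter fun w => A w x).card)
    (hdeg2 : ∀ x y : V, Fintype.card V + 1 ≤
      (Finset.univ.filter fun w => A x w).card + (Finset.univ.filter fun w => A w y).card)
    (z₁ z₂ a₁ a₂ : V) (h12 : z₁ ≠ z₂)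
    (ha11 : a₁ ≠ z₁) (ha12 : a₁ ≠ z₂) (ha21 : a₂ ≠ z₁) (ha22 : a₂ ≠ z₂)
    (haa : a₁ ≠ a₂) :
    ¬ (BadCut A z₁ z₂ a₁ ∧ BadCut A z₁ z₂ a₂) := by
  rintro ⟨⟨X₁, Y₁, hX1, hY1, hd1, hu1, he1⟩, ⟨X₂, Y₂, hX2, hY2, hd2, hu2, he2⟩⟩
  have hmem : a₂ ∈ X₁ ∪ Y₁ := by
    rw [hu1]
    simp only [mem_sdiff, mem_insert, mem_singleton]
    exact ⟨mem_univ a₂, by tauto⟩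
  rcases mem_union.mp hmem with h | h
  · exact key_case A hirr hdeg1 hdeg2 z₁ z₂ a₁ a₂ h12 ha11 ha12 ha21 ha22 haa
      X₁ Y₁ X₂ Y₂ hX1 hY1 hd1 hu1 he1 hX2 hY2 hd2 hu2 he2 h
  · -- apply key_case to the reversed digraph
    let B : V → V → Prop := fun b c => A c b
    letI : DecidableRel B := fun b c => (inferInstance : Decidable (A c b))
    have hirr' : Irreflexive B := fun x hx => hirr x hx
    have e1 : ∀ x : V, (Finset.univ.filter fun w => B x w)
        = (Finset.univ.filter fun w => A w x) := fun x => rfl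
    have e2 : ∀ x : V, (Finset.univ.filter fun w => B w x)
        = (Finset.univ.filter fun w => A x w) := fun x => rfl
    have hdeg1' : ∀ x : V, Fintype.card V + 3 ≤
        (Finset.univ.filter fun w => B x w).card + (Finset.univ.filter fun w => B w x).card := by
      intro x
      rw [e1, e2]
      exact le_trans (hdeg1 x) (Nat.le_of_eq (Nat.add_comm _ _))
    have hdeg2' : ∀ x y : V, Fintype.card V + 1 ≤
        (Finset.univ.filter fun w => B x w).card + (Finset.univ.filter fun w => B w y).card := by
      intro x y
      rw [e1, e2]
      exact le_trans (hdeg2 y x) (Nat.le_of_eq (Nat.add_comm _ _))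
    have htrioswap : ∀ c : V, ({z₂, z₁, c} : Finset V) = {z₁, z₂, c} := by
      intro c; ext w; simp; tauto
    have hu1' : Y₁ ∪ X₁ = Finset.univ \ {z₂, z₁, a₁} := by
      rw [union_comm, htrioswap]; exact hu1
    have hu2' : Y₂ ∪ X₂ = Finset.univ \ {z₂, z₁, a₂} := by
      rw [union_comm, htrioswap]; exact hu2
    exact key_case B hirr' hdeg1' hdeg2' z₂ z₁ a₁ a₂ (Ne.symm h12) ha12 ha11 ha22 ha21 haa
      Y₁ X₁ Y₂ X₂ hY1 hX1 hd1.symm hu1' (fun y hy x hx hB => he1 x hx y hy hB)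
      hY2 hX2 hd2.symm hu2' (fun y hy x hx hB => he2 x hx y hy hB) h

lemma good_of_not_bad (A : V → V → Prop) (z₁ z₂ a : V)
    (hnb : ¬ BadCut A z₁ z₂ a) :
    ∀ u v : V, u ∉ ({z₁, z₂, a} : Set V) → v ∉ ({z₁, z₂, a} : Set V) →
      Relation.ReflTransGen
        (fun b c => b ∉ ({z₁, z₂, a} : Set V) ∧ c ∉ ({z₁, z₂, a} : Set V) ∧ A b c) u v := by
  classical
  intro u v hu hv
  by_contra hpath
  apply hnb
  set R : V → V → Prop :=
    fun b c => b ∉ ({z₁, z₂, a} : Set V) ∧ c ∉ ({z₁, z₂, a} : Set V) ∧ A b c with hR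
  refine ⟨Finset.univ.filter (fun x => x ∉ ({z₁, z₂, a} : Set V) ∧ Relation.ReflTransGen R u x),
          Finset.univ.filter (fun x => x ∉ ({z₁, z₂, a} : Set V) ∧ ¬ Relation.ReflTransGen R u x),
          ⟨u, by
            simp only [mem_filter, mem_univ, true_and]
            exact ⟨hu, Relation.ReflTransGen.refl⟩⟩,
          ⟨v, by
            simp only [mem_filter, mem_univ, true_and]
            exact ⟨hv, hpath⟩⟩, ?_, ?_, ?_⟩
  · rw [disjoint_left]
    intro w hw hw'
    simp only [mem_filter] at hw hw'
    exact hw'.2.2 hw.2.2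
  · ext w
    simp only [mem_union, mem_filter, mem_univ, true_and, mem_sdiff, mem_insert, mem_singleton,
      Set.mem_insert_iff, Set.mem_singleton_iff]
    tauto
  · intro x hx y hy hA
    simp only [mem_filter, mem_univ, true_and] at hx hy
    exact hy.2 (hx.2.tail ⟨hx.1, hy.1, hA⟩)

end Aux

/-- Lemma (strongconn): under the stated degree conditions, for non-adjacent
$z_1 \ne z_2$ there is $a \in N^+(z_1) \cap N^-(z_2)$ with $G - \{z_1,z_2,a\}$
strongly connected. -/
theorem exists_good_common_neighbour_strong_connectivity
    {V : Type*} [Fintype V] [DecidableEq V]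
    (A : V → V → Prop) [DecidableRel A] (hirr : Irreflexive A)
    (hdeg1 : ∀ x : V, Fintype.card V + 3 ≤
      (Finset.univ.filter fun w => A x w).card + (Finset.univ.filter fun w => A w x).card)
    (hdeg2 : ∀ x y : V, Fintype.card V + 1 ≤
      (Finset.univ.filter fun w => A x w).card + (Finset.univ.filter fun w => A w y).card)
    (z₁ z₂ : V) (hz : z₁ ≠ z₂) (hzz : ¬ A z₁ z₂) :
    ∃ a : V, A z₁ a ∧ A a z₂ ∧
      ∀ u v : V, u ∉ ({z₁, z₂, a} : Set V) → v ∉ ({z₁, z₂, a} : Set V) →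
        Relation.ReflTransGen
          (fun b c => b ∉ ({z₁, z₂, a} : Set V) ∧ c ∉ ({z₁, z₂, a} : Set V) ∧ A b c) u v := by
  classical
  -- there are at least 3 common neighbours
  have hS : 3 ≤ ((Finset.univ.filter fun w => A z₁ w) ∩
      (Finset.univ.filter fun w => A w z₂)).card := by
    have hunion : (Finset.univ.filter fun w => A z₁ w) ∪ (Finset.univ.filter fun w => A w z₂)
        ⊆ Finset.univ \ ({z₁, z₂} : Finset V) := by
      intro w hw
      simp only [Finset.mem_union, Finset.mem_filter, Finset.mem_univ, true_and] at hw
      simp only [Finset.mem_sdiff, Finset.mem_insert, Finset.mem_singleton, Finset.mem_univ,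
        true_and]
      push_neg
      constructor
      · rintro rfl
        rcases hw with h | h
        · exact hirr w h
        · exact hzz h
      · rintro rfl
        rcases hw with h | h
        · exact hzz h
        · exact hirr w h
    have h1 := Finset.card_union_add_card_inter
      (Finset.univ.filter fun w => A z₁ w) (Finset.univ.filter fun w => A w z₂)
    have h2 : ({z₁, z₂} : Finset V).card = 2 := by
      rw [Finset.card_insert_of_notMem (by simp [hz]), Finset.card_singleton]
    have h3 : (Finset.univ \ ({z₁, z₂} : Finset V)).card = Fintype.card V - 2 := by
      rw [Finset.card_sdiff_of_subset (Finset.subset_univ _), h2, Finset.card_univ]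
    have h4 : 2 ≤ Fintype.card V := by
      rw [← h2, ← Finset.card_univ]; exact Finset.card_le_card (Finset.subset_univ _)
    have h5 := Finset.card_le_card hunion
    have h6 := hdeg2 z₁ z₂
    omega
  obtain ⟨a₁, ha₁, a₂, ha₂, haa⟩ := Finset.one_lt_card.mp (by omega : 1 <
    ((Finset.univ.filter fun w => A z₁ w) ∩ (Finset.univ.filter fun w => A w z₂)).card)
  simp only [Finset.mem_inter, Finset.mem_filter, Finset.mem_univ, true_and] at ha₁ ha₂
  have hd11 : a₁ ≠ z₁ := fun h => hirr z₁ (h ▸ ha₁.1)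
  have hd12 : a₁ ≠ z₂ := fun h => hirr z₂ (h ▸ ha₁.2)
  have hd21 : a₂ ≠ z₁ := fun h => hirr z₁ (h ▸ ha₂.1)
  have hd22 : a₂ ≠ z₂ := fun h => hirr z₂ (h ▸ ha₂.2)
  have hnot := not_both_bad A hirr hdeg1 hdeg2 z₁ z₂ a₁ a₂ hz hd11 hd12 hd21 hd22 haa
  rcases Classical.em (BadCut A z₁ z₂ a₁) with hb | hb
  · exact ⟨a₂, ha₂.1, ha₂.2,
      good_of_not_bad A z₁ z₂ a₂ (fun h => hnot ⟨hb, h⟩)⟩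
  · exact ⟨a₁, ha₁.1, ha₁.2, good_of_not_bad A z₁ z₂ a₁ hb⟩
end

section
/- Let D be a digraph on n vertices with minimum semi-degree δ⁰(D) ≥ ⌈(n+k)/2⌉ - 1, where k ≥ 3. Let C be a longest cycle in D encountering a fixed sequence S = (s_1,…,s_k) of distinct vertices in this order, and assume C is not Hamiltonian. Let H be the subdigraph induced by the vertices outside C. Then for any two vertices x, y of H such that H contains a directed x–y path, d^-_H(x) + d^+_H(y) ≥ |H| + k - 2, where d^-_H(x) counts in-neighbours of x inside V(H) and d^+_H(y) counts out-neighbours of y inside V(H). -/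
lemma cyc_rotate_one {V : Type*} {A : V → V → Prop} {l : List V}
    (h1 : l.Chain' A) (h2 : ∀ a ∈ l.getLast?, ∀ b ∈ l.head?, A a b) :
    (l.rotate 1).Chain' A ∧
      ∀ a ∈ (l.rotate 1).getLast?, ∀ b ∈ (l.rotate 1).head?, A a b := by
  cases l with
  | nil => simp; exact h1
  | cons a t =>
    have hrot : (a :: t).rotate 1 = t ++ [a] := by
      simpa using List.rotate_cons_succ t a 0
    rw [hrot]
    constructor
    · change List.IsChain A _; rw [List.isChain_append]
      refine ⟨h1.tail, List.isChain_singleton a, ?_⟩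
      intro u hu b hb
      simp at hb
      subst hb
      apply h2
      · cases t with
        | nil => simp at hu
        | cons c t' => rw [List.getLast?_cons_cons]; exact hu
      · simp
    · intro u hu b hb
      rw [List.getLast?_concat] at hu
      simp at hu; subst hu
      cases t with
      | nil =>
        simp at hb; subst hb
        exact h2 a (by simp) a (by simp)
      | cons c t' =>
        simp at hb; subst hb
        exact (List.isChain_cons_cons.mp h1).1

lemma cyc_rotate {V : Type*} {A : V → V → Prop} {l : List V}
    (h1 : l.Chain' A) (h2 : ∀ a ∈ l.getLast?, ∀ b ∈ l.head?, A a b) (n : ℕ) :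
    (l.rotate n).Chain' A ∧
      ∀ a ∈ (l.rotate n).getLast?, ∀ b ∈ (l.rotate n).head?, A a b := by
  induction n with
  | zero => simpa using ⟨h1, h2⟩
  | succ m ih =>
    rw [show l.rotate (m + 1) = (l.rotate m).rotate 1 from (List.rotate_rotate l m 1).symm]
    exact cyc_rotate_one ih.1 ih.2

lemma splice_lemma {V : Type*} {A : V → V → Prop} {k : ℕ}
    {s : Fin k → V} {C p : List V} {x y : V}
    (hC : IsCycleList A C) (hCs : EncountersInOrder C s)
    (hpn : p.Nodup) (hpc : p.Chain' A)
    (hx : p.head? = some x) (hy : p.getLast? = some y)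
    (hdisj : ∀ v ∈ p, v ∉ C)
    (i : Fin C.length)
    (hvx : A (C.get i) x)
    (hyv : A y (C.get ⟨((i : ℕ) + 1) % C.length,
      Nat.mod_lt _ (lt_of_le_of_lt (Nat.zero_le _) i.isLt)⟩)) :
    ∃ C' : List V, IsCycleList A C' ∧ EncountersInOrder C' s ∧ C.length < C'.length := by
  obtain ⟨hc2, hnd, hch, hwrap⟩ := hC
  have hcpos : 0 < C.length := lt_of_le_of_lt (Nat.zero_le _) i.isLt
  set j := (i : ℕ) + 1 with hjdef
  set C₂ := C.rotate j with hC₂def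
  have hlen2 : C₂.length = C.length := List.length_rotate C j
  have hp0 : p ≠ [] := by intro h; rw [h] at hx; simp at hx
  have hC₂0 : C₂ ≠ [] := by
    intro h; rw [h] at hlen2; simp at hlen2; omega
  have hhead : C₂.head? = some (C.get ⟨j % C.length, Nat.mod_lt _ hcpos⟩) := by
    rw [List.head?_eq_head hC₂0]
    congr 1
    rw [List.head_eq_getElem]
    simp only [hC₂def, List.getElem_rotate]
    simp [List.get_eq_getElem]
  have hlast : C₂.getLast? = some (C.get i) := by
    rw [List.getLast?_eq_getLast hC₂0]
    congr 1
    rw [List.getLast_eq_getElem]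
    simp only [hC₂def, List.getElem_rotate, List.length_rotate]
    rw [List.get_eq_getElem]
    congr 1
    have h1 : C.length - 1 + j = C.length + (i : ℕ) := by omega
    rw [h1, Nat.add_mod_left, Nat.mod_eq_of_lt i.isLt]
  refine ⟨C₂ ++ p, ⟨?_, ?_, ?_, ?_⟩, ?_, ?_⟩
  · rw [List.length_append, hlen2]; omega
  · rw [List.nodup_append]
    exact ⟨List.nodup_rotate.mpr hnd, hpn, fun v hv w hw hvw =>
      hdisj v (hvw ▸ hw) (List.mem_rotate.mp hv)⟩
  · change List.IsChain A _; rw [List.isChain_append]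
    refine ⟨(cyc_rotate hch hwrap j).1, hpc, ?_⟩
    intro a ha b hb
    rw [hlast] at ha; simp at ha; subst ha
    rw [hx] at hb; simp at hb; subst hb
    exact hvx
  · intro a ha b hb
    rw [List.getLast?_append, hy] at ha; simp at ha; subst ha
    rw [List.head?_append_of_ne_nil _ hC₂0, hhead] at hb
    simp at hb; subst hb
    exact hyv
  · obtain ⟨r, hr⟩ := hCs
    set m := (r + (C.length - j % C.length)) % C.length with hmdef
    have hmc : m < C.length := Nat.mod_lt _ hcpos
    have hjm : (j + m) % C.length = r % C.length := by
      rw [hmdef, Nat.add_mod_mod]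
      have hjc : j % C.length + C.length * (j / C.length) = j := Nat.mod_add_div j C.length
      have hjcl : j % C.length < C.length := Nat.mod_lt _ hcpos
      have key : j + (r + (C.length - j % C.length)) = r + C.length * (j / C.length + 1) := by
        generalize hq : C.length * (j / C.length) = q at hjc
        rw [Nat.mul_add, Nat.mul_one, hq]
        omega
      rw [key, Nat.add_mul_mod_self_left]
    have hrot : C₂.rotate m = C.rotate r := by
      rw [hC₂def, List.rotate_rotate, ← List.rotate_mod C (j + m), hjm,
        List.rotate_mod]
    refine ⟨m, ?_⟩
    have hmle : m ≤ C₂.length := by omega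
    have hsub1 : List.Sublist (List.ofFn s) (C₂.drop m ++ C₂.take m) := by
      rw [← List.rotate_eq_drop_append_take hmle, hrot]; exact hr
    have heq : (C₂ ++ p).rotate m = (C₂.drop m ++ p) ++ C₂.take m := by
      rw [List.rotate_eq_drop_append_take (by rw [List.length_append]; omega),
        List.drop_append, List.take_append]
      have h0 : m - C₂.length = 0 := by omega
      rw [h0]
      simp
    rw [heq]
    exact hsub1.trans (List.Sublist.append
      (List.sublist_append_left _ _) (List.Sublist.refl _))
  · rw [List.length_append, hlen2]
    have : 0 < p.length := List.length_pos_iff.mpr hp0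
    omega

lemma filter_split_card {V : Type*} [Fintype V] [DecidableEq V]
    (C : List V) (q : V → Prop) [DecidablePred q] :
    (Finset.univ.filter fun v => q v).card =
      (Finset.univ.filter fun v => v ∈ C ∧ q v).card +
      (Finset.univ.filter fun v => v ∉ C ∧ q v).card := by
  rw [← Finset.card_union_of_disjoint]
  · congr 1
    ext v
    simp only [Finset.mem_filter, Finset.mem_union, Finset.mem_univ, true_and]
    tauto
  · rw [Finset.disjoint_left]
    intro v hv hv'
    simp only [Finset.mem_filter] at hv hv'
    tauto

/-- If $H$ contains an $x$–$y$ path then $d^-_H(x)+d^+_H(y) \ge |H|+k-2$. -/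
theorem degree_sum_in_H_of_path
    {V : Type*} [Fintype V] [DecidableEq V]
    (A : V → V → Prop) [DecidableRel A] (hirr : Irreflexive A)
    (n k : ℕ) (hn : n = Fintype.card V) (hk : 3 ≤ k)
    (hdeg : ∀ v : V, (n + k + 1) / 2 - 1 ≤ (Finset.univ.filter fun w => A v w).card ∧
                     (n + k + 1) / 2 - 1 ≤ (Finset.univ.filter fun w => A w v).card)
    (s : Fin k → V) (hs : Function.Injective s)
    (C : List V) (hC : IsCycleList A C) (hCs : EncountersInOrder C s)
    (hmax : ∀ C' : List V, IsCycleList A C' → EncountersInOrder C' s → C'.length ≤ C.length)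
    (hnotHam : ∃ v : V, v ∉ C) :
    ∀ x y : V, x ∉ C → y ∉ C →
      (∃ p : List V, p.Nodup ∧ p.Chain' A ∧ p.head? = some x ∧
        p.getLast? = some y ∧ ∀ v ∈ p, v ∉ C) →
      (Finset.univ.filter fun v => (v ∉ C : Prop)).card + k - 2 ≤
        (Finset.univ.filter fun v => v ∉ C ∧ A v x).card +
        (Finset.univ.filter fun v => v ∉ C ∧ A y v).card := by
  intro x y hx hy hpath
  obtain ⟨p, hpn, hpc, hph, hpl, hpC⟩ := hpath
  have hcpos : 0 < C.length := by have := hC.1; omega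
  have hinj : Function.Injective C.get := List.nodup_iff_injective_get.mp hC.2.1
  -- the cardinality of C inside V
  have hmemcard : (Finset.univ.filter fun v => v ∈ C).card = C.length := by
    rw [show (Finset.univ.filter fun v => v ∈ C) = C.toFinset by ext v; simp]
    exact List.toFinset_card_of_nodup hC.2.1
  have htot : (Finset.univ.filter fun v => v ∈ C).card +
      (Finset.univ.filter fun v => (v ∉ C : Prop)).card = Fintype.card V := by
    rw [← Finset.card_univ, ← Finset.card_filter_add_card_filter_not
      (s := (Finset.univ : Finset V)) (p := fun v => v ∈ C)]
  -- degree splits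
  have h1 : (Finset.univ.filter fun w => A w x).card =
      (Finset.univ.filter fun v => v ∈ C ∧ A v x).card +
      (Finset.univ.filter fun v => v ∉ C ∧ A v x).card :=
    filter_split_card C (fun v => A v x)
  have h2 : (Finset.univ.filter fun w => A y w).card =
      (Finset.univ.filter fun v => v ∈ C ∧ A y v).card +
      (Finset.univ.filter fun v => v ∉ C ∧ A y v).card :=
    filter_split_card C (fun v => A y v)
  -- the key bound on the C-degrees
  have hkey : (Finset.univ.filter fun v => v ∈ C ∧ A v x).card +
      (Finset.univ.filter fun v => v ∈ C ∧ A y v).card ≤ C.length := by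
    set g : Fin C.length → Fin C.length :=
      fun i => ⟨((i : ℕ) + 1) % C.length, Nat.mod_lt _ hcpos⟩ with hgdef
    have hginj : Function.Injective g := by
      intro a b hab
      have hab' : ((a : ℕ) + 1) % C.length = ((b : ℕ) + 1) % C.length :=
        congrArg Fin.val hab
      have ha := a.isLt
      have hb := b.isLt
      apply Fin.ext
      rcases Nat.lt_or_ge ((a : ℕ) + 1) C.length with h | h
      · rw [Nat.mod_eq_of_lt h] at hab'
        rcases Nat.lt_or_ge ((b : ℕ) + 1) C.length with h' | h'
        · rw [Nat.mod_eq_of_lt h'] at hab'; omega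
        · have hb1 : (b : ℕ) + 1 = C.length := by omega
          rw [hb1, Nat.mod_self] at hab'; omega
      · have ha1 : (a : ℕ) + 1 = C.length := by omega
        rw [ha1, Nat.mod_self] at hab'
        rcases Nat.lt_or_ge ((b : ℕ) + 1) C.length with h' | h'
        · rw [Nat.mod_eq_of_lt h'] at hab'; omega
        · have hb1 : (b : ℕ) + 1 = C.length := by omega
          omega
    have hgsurj : Function.Surjective g := Finite.injective_iff_surjective.mp hginj
    set S1 : Finset (Fin C.length) :=
      Finset.univ.filter fun i => A (C.get i) x with hS1def
    set S2 : Finset (Fin C.length) :=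
      Finset.univ.filter fun i => A y (C.get (g i)) with hS2def
    have hS1card : S1.card = (Finset.univ.filter fun v => v ∈ C ∧ A v x).card := by
      rw [← Finset.card_image_of_injective S1 hinj]
      congr 1
      ext v
      simp only [Finset.mem_image, hS1def, Finset.mem_filter, Finset.mem_univ, true_and]
      constructor
      · rintro ⟨i, hi, rfl⟩
        exact ⟨List.mem_iff_get.mpr ⟨i, rfl⟩, hi⟩
      · rintro ⟨hv, hA⟩
        obtain ⟨i, rfl⟩ := List.mem_iff_get.mp hv
        exact ⟨i, hA, rfl⟩
    have hS2card : S2.card = (Finset.univ.filter fun v => v ∈ C ∧ A y v).card := by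
      have hinj2 : Function.Injective fun i => C.get (g i) :=
        fun a b hab => hginj (hinj hab)
      rw [← Finset.card_image_of_injective S2 hinj2]
      congr 1
      ext v
      simp only [Finset.mem_image, hS2def, Finset.mem_filter, Finset.mem_univ, true_and]
      constructor
      · rintro ⟨i, hi, rfl⟩
        exact ⟨List.mem_iff_get.mpr ⟨g i, rfl⟩, hi⟩
      · rintro ⟨hv, hA⟩
        obtain ⟨t, rfl⟩ := List.mem_iff_get.mp hv
        obtain ⟨i, rfl⟩ := hgsurj t
        exact ⟨i, hA, rfl⟩
    have hdisjS : Disjoint S1 S2 := by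
      rw [Finset.disjoint_left]
      intro i hi1 hi2
      simp only [hS1def, hS2def, Finset.mem_filter, Finset.mem_univ, true_and] at hi1 hi2
      obtain ⟨C', hC', hCs', hlt⟩ :=
        splice_lemma hC hCs hpn hpc hph hpl hpC i hi1 hi2
      exact absurd (hmax C' hC' hCs') (by omega)
    calc (Finset.univ.filter fun v => v ∈ C ∧ A v x).card +
        (Finset.univ.filter fun v => v ∈ C ∧ A y v).card
        = (S1 ∪ S2).card := by
          rw [Finset.card_union_of_disjoint hdisjS, hS1card, hS2card]
      _ ≤ (Finset.univ : Finset (Fin C.length)).card := Finset.card_le_univ _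
      _ = C.length := by simp
  have hdx := (hdeg x).2
  have hdy := (hdeg y).1
  rw [h1] at hdx
  rw [h2] at hdy
  have hk2 : 2 ≤ C.length := hC.1
  omega
end

section
/- Under the setup of a longest S-cycle C in D (with δ⁰(D) ≥ ⌈(n+k)/2⌉ - 1, k ≥ 3, and C not Hamiltonian), the digraph H induced on the vertices outside C satisfies: for every vertex x of H, d^-_H(x) + d^+_H(x) ≥ |H| + 1, and consequently |H| ≥ k. -/
section Aux

variable {V : Type*} {A : V → V → Prop}

lemma cyc_step {l : List V} (h : IsCycleList A l) {i : ℕ} (hi : i < l.length)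
    (hi1 : (i + 1) % l.length < l.length) :
    A (l[i]'hi) (l[(i + 1) % l.length]'hi1) := by
  obtain ⟨hlen, hnd, hch, hwrap⟩ := h
  rcases Nat.lt_or_ge (i + 1) l.length with h1 | h1
  · have e : (i + 1) % l.length = i + 1 := Nat.mod_eq_of_lt h1
    have := List.isChain_iff_getElem.1 hch i (by omega)
    simp only [e]
    exact this
  · have hie : i = l.length - 1 := by omega
    have e : (i + 1) % l.length = 0 := by
      have : i + 1 = l.length := by omega
      rw [this, Nat.mod_self]
    simp only [e]
    apply hwrap
    · rw [List.getLast?_eq_getElem?, List.getElem?_eq_getElem (by omega)]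
      simp [hie]
    · rw [List.head?_eq_getElem?, List.getElem?_eq_getElem (by omega)]
      simp

lemma cyc_mk {l : List V} (hlen : 2 ≤ l.length) (hnd : l.Nodup)
    (hstep : ∀ i (hi : i < l.length),
      A (l[i]'hi) (l[(i + 1) % l.length]'(Nat.mod_lt _ (by omega)))) :
    IsCycleList A l := by
  refine ⟨hlen, hnd, ?_, ?_⟩
  · rw [List.Chain', List.isChain_iff_getElem]
    intro i hi
    have := hstep i (by omega)
    simp only [Nat.mod_eq_of_lt (show i + 1 < l.length by omega)] at this
    exact this
  · intro a ha b hb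
    rw [List.getLast?_eq_getElem?, List.getElem?_eq_getElem (by omega)] at ha
    rw [List.head?_eq_getElem?, List.getElem?_eq_getElem (by omega)] at hb
    simp only [Option.mem_def, Option.some_inj] at ha hb
    subst ha; subst hb
    have := hstep (l.length - 1) (by omega)
    have e : (l.length - 1 + 1) % l.length = 0 := by
      have : l.length - 1 + 1 = l.length := by omega
      rw [this, Nat.mod_self]
    simp only [e] at this
    exact this

lemma cyc_rotate_s5 {l : List V} (h : IsCycleList A l) (j : ℕ) :
    IsCycleList A (l.rotate j) := by
  have hlen := h.1
  have hm : (l.rotate j).length = l.length := List.length_rotate l j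
  refine cyc_mk (by omega) (List.nodup_rotate.2 h.2.1) ?_
  intro i hi
  rw [List.getElem_rotate, List.getElem_rotate]
  have e : ((i + 1) % (l.rotate j).length + j) % l.length
      = ((i + j) % l.length + 1) % l.length := by
    rw [hm, Nat.mod_add_mod, Nat.mod_add_mod]
    ring_nf
  simp only [e]
  exact cyc_step h (Nat.mod_lt _ (by omega)) (Nat.mod_lt _ (by omega))

lemma cyc_insert {C : List V} (hC : IsCycleList A C)
    {x : V} (hx : x ∉ C) {i : ℕ} (hi : i < C.length)
    (h1 : A (C[i]'hi) x)
    (h2 : A x (C[(i + 1) % C.length]'(Nat.mod_lt _ (by omega)))) :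
    IsCycleList A (C.rotate ((i + 1) % C.length) ++ [x]) := by
  have hm2 : 2 ≤ C.length := hC.1
  have hj : (i + 1) % C.length < C.length := Nat.mod_lt _ (by omega)
  have hL : IsCycleList A (C.rotate ((i + 1) % C.length)) := cyc_rotate_s5 hC _
  have hLlen : (C.rotate ((i + 1) % C.length)).length = C.length := List.length_rotate _ _
  have hxL : x ∉ C.rotate ((i + 1) % C.length) := fun hmem => hx (List.mem_rotate.1 hmem)
  have hlast : (C.rotate ((i + 1) % C.length)).getLast? = some (C[i]'hi) := by
    rw [List.getLast?_eq_getElem?, List.getElem?_eq_getElem (by omega)]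
    rw [List.getElem_rotate]
    have harith : ((C.rotate ((i + 1) % C.length)).length - 1 + (i + 1) % C.length) % C.length
        = i := by
      rw [hLlen]
      rcases Nat.lt_or_ge (i + 1) C.length with h | h
      · rw [Nat.mod_eq_of_lt h]
        have e : C.length - 1 + (i + 1) = C.length + i := by omega
        rw [e, Nat.add_mod_left, Nat.mod_eq_of_lt (by omega)]
      · have e : i + 1 = C.length := by omega
        rw [e, Nat.mod_self, Nat.add_zero, Nat.mod_eq_of_lt (by omega)]
        omega
    simp only [harith]
  have hhead : (C.rotate ((i + 1) % C.length)).head? = some (C[(i + 1) % C.length]'hj) := by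
    rw [List.head?_rotate hj, List.getElem?_eq_getElem hj]
  have hLne : C.rotate ((i + 1) % C.length) ≠ [] := by
    intro h; rw [h] at hLlen; simp at hLlen; omega
  refine ⟨by simp [hLlen]; omega, ?_, ?_, ?_⟩
  · refine (List.nodup_append).2 ⟨hL.2.1, List.nodup_singleton x, ?_⟩
    intro a haL b hb hab
    simp only [List.mem_singleton] at hb
    subst hb; subst hab
    exact hxL haL
  · rw [List.Chain', List.isChain_append]
    refine ⟨hL.2.2.1, List.isChain_singleton x, ?_⟩
    intro a ha b hb
    rw [hlast] at ha
    simp only [Option.mem_def, Option.some_inj] at ha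
    simp only [List.head?_cons, Option.mem_def, Option.some_inj] at hb
    subst ha; subst hb
    exact h1
  · intro a ha b hb
    have : (C.rotate ((i + 1) % C.length) ++ [x]).getLast? = some x := by
      rw [show C.rotate ((i + 1) % C.length) ++ [x]
          = C.rotate ((i + 1) % C.length) ++ x :: [] from rfl, List.getLast?_append_cons]
      rfl
    rw [this] at ha
    rw [List.head?_append_of_ne_nil _ hLne, hhead] at hb
    simp only [Option.mem_def, Option.some_inj] at ha hb
    subst ha; subst hb
    exact h2

lemma enc_insert {k : ℕ} {s : Fin k → V} {C : List V} (h : EncountersInOrder C s)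
    {j : ℕ} (hj : j < C.length) (x : V) :
    EncountersInOrder (C.rotate j ++ [x]) s := by
  obtain ⟨r, hr⟩ := h
  have hm : 0 < C.length := by omega
  refine ⟨(C.length - j + r) % C.length, ?_⟩
  have hLlen : (C.rotate j).length = C.length := List.length_rotate _ _
  have htm : (C.length - j + r) % C.length < C.length := Nat.mod_lt _ hm
  have key : (C.rotate j).rotate ((C.length - j + r) % C.length) = C.rotate r := by
    rw [List.rotate_rotate]
    have e : (j + (C.length - j + r) % C.length) % C.length = r % C.length := by
      rw [Nat.add_mod_mod]
      have e2 : j + (C.length - j + r) = C.length + r := by omega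
      rw [e2, Nat.add_mod_left]
    calc C.rotate (j + (C.length - j + r) % C.length)
        = C.rotate ((j + (C.length - j + r) % C.length) % C.length) :=
          (List.rotate_mod _ _).symm
      _ = C.rotate (r % C.length) := by rw [e]
      _ = C.rotate r := List.rotate_mod _ _
  have hsub : List.Sublist (List.ofFn s) ((C.rotate j).rotate ((C.length - j + r) % C.length)) :=
    key ▸ hr
  rw [List.rotate_eq_drop_append_take (by omega)] at hsub
  have heq : ((C.rotate j) ++ [x]).rotate ((C.length - j + r) % C.length)
      = (C.rotate j).drop ((C.length - j + r) % C.length)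
        ++ ([x] ++ (C.rotate j).take ((C.length - j + r) % C.length)) := by
    rw [List.rotate_eq_drop_append_take (by simp [hLlen]; omega),
      List.drop_append_of_le_length (by omega), List.take_append_of_le_length (by omega)]
    simp
  rw [heq]
  exact hsub.trans (List.Sublist.append_left
    (List.sublist_cons_self x _) _)

end Aux

/-- Every vertex of $H$ satisfies $d^-_H(x)+d^+_H(x) \ge |H|+1$, and $|H| \ge k$. -/
theorem H_degree_bound_and_order
    {V : Type*} [Fintype V] [DecidableEq V]
    (A : V → V → Prop) [DecidableRel A] (hirr : Irreflexive A)
    (n k : ℕ) (hn : n = Fintype.card V) (hk : 3 ≤ k)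
    (hdeg : ∀ v : V, (n + k + 1) / 2 - 1 ≤ (Finset.univ.filter fun w => A v w).card ∧
                     (n + k + 1) / 2 - 1 ≤ (Finset.univ.filter fun w => A w v).card)
    (s : Fin k → V) (hs : Function.Injective s)
    (C : List V) (hC : IsCycleList A C) (hCs : EncountersInOrder C s)
    (hmax : ∀ C' : List V, IsCycleList A C' → EncountersInOrder C' s → C'.length ≤ C.length)
    (hnotHam : ∃ v : V, v ∉ C) :
    (∀ x : V, x ∉ C →
      (Finset.univ.filter fun v => (v ∉ C : Prop)).card + 1 ≤
        (Finset.univ.filter fun v => v ∉ C ∧ A v x).card +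
        (Finset.univ.filter fun v => v ∉ C ∧ A x v).card) ∧
    k ≤ (Finset.univ.filter fun v => (v ∉ C : Prop)).card := by
  classical
  have hm2 : 2 ≤ C.length := hC.1
  set m := C.length with hmdef
  -- no insertion is possible
  have claim : ∀ x, x ∉ C → ∀ i (hi : i < m),
      A (C[i]'hi) x → A x (C[(i + 1) % m]'(Nat.mod_lt _ (by omega))) → False := by
    intro x hx i hi h1 h2
    have hins := cyc_insert hC hx hi h1 h2
    have henc := enc_insert hCs (Nat.mod_lt (i + 1) (show 0 < m by omega)) x
    have hle := hmax _ hins henc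
    simp only [List.length_append, List.length_rotate, List.length_singleton] at hle
    omega
  -- cardinality of C inside univ
  have hCin : (Finset.univ.filter fun v => v ∈ C).card = m := by
    have he : (Finset.univ.filter fun v => v ∈ C) = C.toFinset := by
      ext v; simp
    rw [he, List.toFinset_card_of_nodup hC.2.1]
  have hsplit : (Finset.univ.filter fun v => v ∈ C).card +
      (Finset.univ.filter fun v => (v ∉ C : Prop)).card = n := by
    rw [hn, ← Finset.card_univ]
    exact Finset.card_filter_add_card_filter_not _
  -- main counting estimate, for each x outside C
  have key : ∀ x, x ∉ C →
      (Finset.univ.filter fun v => (v ∉ C : Prop)).card + k ≤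
        (Finset.univ.filter fun v => v ∉ C ∧ A v x).card +
        (Finset.univ.filter fun v => v ∉ C ∧ A x v).card + 2 := by
    intro x hx
    -- split of in/out degrees
    have hin_split : (Finset.univ.filter fun v => v ∉ C ∧ A v x).card +
        (Finset.univ.filter fun v => v ∈ C ∧ A v x).card =
        (Finset.univ.filter fun v => A v x).card := by
      rw [← Finset.card_union_of_disjoint (by
        rw [Finset.disjoint_left]; intro a ha hb
        simp only [Finset.mem_filter] at ha hb
        exact ha.2.1 hb.2.1)]
      congr 1
      ext v; simp; tauto
    have hout_split : (Finset.univ.filter fun v => v ∉ C ∧ A x v).card +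
        (Finset.univ.filter fun v => v ∈ C ∧ A x v).card =
        (Finset.univ.filter fun v => A x v).card := by
      rw [← Finset.card_union_of_disjoint (by
        rw [Finset.disjoint_left]; intro a ha hb
        simp only [Finset.mem_filter] at ha hb
        exact ha.2.1 hb.2.1)]
      congr 1
      ext v; simp; tauto
    -- the neighbours inside C occupy disjoint index sets
    have hNC : (Finset.univ.filter fun v => v ∈ C ∧ A v x).card +
        (Finset.univ.filter fun v => v ∈ C ∧ A x v).card ≤ m := by
      set Nin := Finset.univ.filter fun v => v ∈ C ∧ A v x with hNin
      set Nout := Finset.univ.filter fun v => v ∈ C ∧ A x v with hNout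
      set Sin := Nin.image (fun v => (C.idxOf v + 1) % m) with hSin
      set Sout := Nout.image (fun v => C.idxOf v) with hSout
      have hmodlem : ∀ a : ℕ, a < m → (a + 1) % m = if a + 1 = m then 0 else a + 1 := by
        intro a ha
        split
        · rename_i h; rw [h, Nat.mod_self]
        · exact Nat.mod_eq_of_lt (by omega)
      have hinj_in : Set.InjOn (fun v => (C.idxOf v + 1) % m) Nin := by
        intro v hv w hw h
        simp only [hNin, Finset.coe_filter, Set.mem_setOf_eq] at hv hw
        have hvlt : C.idxOf v < m := List.idxOf_lt_length_iff.2 hv.2.1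
        have hwlt : C.idxOf w < m := List.idxOf_lt_length_iff.2 hw.2.1
        have : C.idxOf v = C.idxOf w := by
          simp only at h
          rw [hmodlem _ hvlt, hmodlem _ hwlt] at h
          split_ifs at h <;> omega
        exact (List.idxOf_inj hv.2.1).1 this
      have hinj_out : Set.InjOn (fun v => C.idxOf v) Nout := by
        intro v hv w hw h
        simp only [hNout, Finset.coe_filter, Set.mem_setOf_eq] at hv hw
        exact (List.idxOf_inj hv.2.1).1 h
      have hcard_in : Sin.card = Nin.card := Finset.card_image_of_injOn hinj_in
      have hcard_out : Sout.card = Nout.card := Finset.card_image_of_injOn hinj_out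
      have hdisj : Disjoint Sin Sout := by
        rw [Finset.disjoint_left]
        intro c hcin hcout
        simp only [hSin, hSout, Finset.mem_image, hNin, hNout, Finset.mem_filter,
          Finset.mem_univ, true_and] at hcin hcout
        obtain ⟨v, ⟨hvC, hvA⟩, hv⟩ := hcin
        obtain ⟨w, ⟨hwC, hwA⟩, hw⟩ := hcout
        have hvlt : C.idxOf v < m := List.idxOf_lt_length_iff.2 hvC
        have hveq : C[C.idxOf v]'hvlt = v := List.getElem_idxOf hvlt
        have hwlt : C.idxOf w < m := List.idxOf_lt_length_iff.2 hwC
        have hweq : C[C.idxOf w]'hwlt = w := List.getElem_idxOf hwlt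
        refine claim x hx (C.idxOf v) hvlt ?_ ?_
        · rw [hveq]; exact hvA
        · have : (C.idxOf v + 1) % m = C.idxOf w := by rw [hv, hw]
          have hgoal : C[(C.idxOf v + 1) % m]'(Nat.mod_lt _ (by omega)) = w := by
            simp only [this]; exact hweq
          rw [hgoal]; exact hwA
      have hsub_in : Sin ⊆ Finset.range m := by
        intro c hc
        simp only [hSin, Finset.mem_image] at hc
        obtain ⟨v, _, hv⟩ := hc
        rw [Finset.mem_range, ← hv]
        exact Nat.mod_lt _ (by omega)
      have hsub_out : Sout ⊆ Finset.range m := by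
        intro c hc
        simp only [hSout, Finset.mem_image, hNout, Finset.mem_filter, Finset.mem_univ,
          true_and] at hc
        obtain ⟨v, hv, hveq⟩ := hc
        rw [Finset.mem_range, ← hveq]
        exact List.idxOf_lt_length_iff.2 hv.1
      calc Nin.card + Nout.card = Sin.card + Sout.card := by rw [hcard_in, hcard_out]
        _ = (Sin ∪ Sout).card := (Finset.card_union_of_disjoint hdisj).symm
        _ ≤ (Finset.range m).card := Finset.card_le_card (Finset.union_subset hsub_in hsub_out)
        _ = m := Finset.card_range m
    have hdin := (hdeg x).2
    have hdout := (hdeg x).1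
    omega
  constructor
  · intro x hx
    have := key x hx
    omega
  · obtain ⟨x, hx⟩ := hnotHam
    have hkey := key x hx
    have hxH : x ∈ Finset.univ.filter fun v => (v ∉ C : Prop) := by
      simp [hx]
    have hbound_in : (Finset.univ.filter fun v => v ∉ C ∧ A v x).card ≤
        (Finset.univ.filter fun v => (v ∉ C : Prop)).card - 1 := by
      have hsub : (Finset.univ.filter fun v => v ∉ C ∧ A v x) ⊆
          (Finset.univ.filter fun v => (v ∉ C : Prop)).erase x := by
        intro v hv
        simp only [Finset.mem_filter, Finset.mem_univ, true_and] at hv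
        rw [Finset.mem_erase]
        refine ⟨fun h => ?_, by simp [hv.1]⟩
        subst h
        exact hirr v hv.2
      calc _ ≤ ((Finset.univ.filter fun v => (v ∉ C : Prop)).erase x).card :=
            Finset.card_le_card hsub
        _ = _ := Finset.card_erase_of_mem hxH
    have hbound_out : (Finset.univ.filter fun v => v ∉ C ∧ A x v).card ≤
        (Finset.univ.filter fun v => (v ∉ C : Prop)).card - 1 := by
      have hsub : (Finset.univ.filter fun v => v ∉ C ∧ A x v) ⊆
          (Finset.univ.filter fun v => (v ∉ C : Prop)).erase x := by
        intro v hv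
        simp only [Finset.mem_filter, Finset.mem_univ, true_and] at hv
        rw [Finset.mem_erase]
        refine ⟨fun h => ?_, by simp [hv.1]⟩
        subst h
        exact hirr v hv.2
      calc _ ≤ ((Finset.univ.filter fun v => (v ∉ C : Prop)).erase x).card :=
            Finset.card_le_card hsub
        _ = _ := Finset.card_erase_of_mem hxH
    have hpos : 1 ≤ (Finset.univ.filter fun v => (v ∉ C : Prop)).card :=
      Finset.card_pos.2 ⟨x, hxH⟩
    omega
end

section
/- Under the setup of a longest S-cycle C in D (with δ⁰(D) ≥ ⌈(n+k)/2⌉ - 1, k ≥ 3, C not Hamiltonian, H the induced digraph outside C), no vertex of C that sends an edge to H has its successor on C receiving an edge from H. Formally: if v ∈ V(C) has an out-neighbour in V(H), then the successor v⁺ of v on C has no in-neighbour in V(H). -/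
namespace NoTFAux

open List

variable {V : Type*}

lemma gel {l : List V} {i j : ℕ} (h : i = j) {hi : i < l.length} :
    l[i]'hi = l[j]'(h ▸ hi) := by subst h; rfl

/-- cyclic adjacency: every entry is joined to the cyclically next entry -/
def CycAdj (A : V → V → Prop) (l : List V) : Prop :=
  ∀ (i : ℕ) (h : i < l.length),
    A (l[i]'h) (l[(i+1) % l.length]'(Nat.mod_lt _ (Nat.lt_of_le_of_lt (Nat.zero_le i) h)))

lemma pair_prefix_iff {l : List V} {a b : V} :
    [a, b] <+: l ↔ (l[0]? = some a ∧ l[1]? = some b) := by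
  constructor
  · rintro ⟨t, rfl⟩
    simp
  · rintro ⟨h0, h1⟩
    match l with
    | [] => simp at h0
    | [x] => simp at h1
    | x :: y :: t =>
      simp only [getElem?_cons_zero, Option.some.injEq] at h0
      simp only [getElem?_cons_succ, getElem?_cons_zero, Option.some.injEq] at h1
      exact ⟨t, by rw [h0, h1]; rfl⟩

lemma isCycleList_iff {A : V → V → Prop} {l : List V} :
    IsCycleList A l ↔ 2 ≤ l.length ∧ l.Nodup ∧ CycAdj A l := by
  constructor
  · rintro ⟨h2, hnd, hch, hwrap⟩
    refine ⟨h2, hnd, ?_⟩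
    intro i hi
    rcases Nat.lt_or_ge (i+1) l.length with h | h
    · have hmod : (i+1) % l.length = i + 1 := Nat.mod_eq_of_lt h
      have h' := isChain_iff_getElem.mp hch i (by omega)
      rw [gel hmod]
      exact h'
    · have hlen : i + 1 = l.length := by omega
      have hne : l ≠ [] := by intro h'; subst h'; simp at hi
      have hmod : (i+1) % l.length = 0 := by rw [hlen, Nat.mod_self]
      have h1 := hwrap (l.getLast hne) (by rw [getLast?_eq_getLast hne]; rfl)
        (l.head hne) (by rw [head?_eq_head hne]; rfl)
      rw [getLast_eq_getElem, head_eq_getElem] at h1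
      rw [gel hmod, gel (show i = l.length - 1 by omega)]
      exact h1
  · rintro ⟨h2, hnd, hadj⟩
    have hne : l ≠ [] := by intro h'; subst h'; simp at h2
    refine ⟨h2, hnd, ?_, ?_⟩
    · rw [show Chain' A l = IsChain A l from rfl, isChain_iff_getElem]
      intro i hi
      have hmod : (i+1) % l.length = i + 1 := Nat.mod_eq_of_lt (by omega)
      have h' := hadj i (by omega)
      rw [gel hmod] at h'
      exact h'
    · intro a ha b hb
      rw [getLast?_eq_getLast hne] at ha
      rw [head?_eq_head hne] at hb
      simp only [Option.mem_def, Option.some.injEq] at ha hb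
      subst ha; subst hb
      have hl0 : 0 < l.length := by omega
      have hmod : (l.length - 1 + 1) % l.length = 0 := by
        rw [show l.length - 1 + 1 = l.length by omega, Nat.mod_self]
      have h' := hadj (l.length - 1) (by omega)
      rw [gel hmod] at h'
      rw [getLast_eq_getElem, head_eq_getElem]
      exact h'

lemma isCycleList_rotate {A : V → V → Prop} {l : List V} (h : IsCycleList A l) (r : ℕ) :
    IsCycleList A (l.rotate r) := by
  rw [isCycleList_iff] at h ⊢
  obtain ⟨h2, hnd, hadj⟩ := h
  have hm0 : 0 < l.length := by omega
  refine ⟨by simpa using h2, nodup_rotate.mpr hnd, ?_⟩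
  intro i hi
  have hi' : i < l.length := by simpa using hi
  have hkey : ((i+1) % (l.rotate r).length + r) % l.length = ((i + r) % l.length + 1) % l.length := by
    rw [length_rotate]
    obtain ⟨x, hx⟩ : ∃ x, l.length * x + (i+1) % l.length = i + 1 := ⟨_, Nat.div_add_mod _ _⟩
    obtain ⟨y, hy⟩ : ∃ y, l.length * y + (i + r) % l.length = i + r := ⟨_, Nat.div_add_mod _ _⟩
    have l1 : (i+1) % l.length + r + l.length * x = (i + r) % l.length + 1 + l.length * y := by
      omega
    have h'' := congrArg (· % l.length) l1
    simpa only [Nat.add_mul_mod_self_left] using h''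
  have goal1 : (l.rotate r)[i]'hi = l[(i + r) % l.length]'(Nat.mod_lt _ hm0) := by
    rw [getElem_rotate]
  have goal2 : (l.rotate r)[(i+1) % (l.rotate r).length]'(Nat.mod_lt _ (by omega)) =
      l[((i + r) % l.length + 1) % l.length]'(Nat.mod_lt _ hm0) := by
    rw [getElem_rotate, gel hkey]
  rw [goal1, goal2]
  exact hadj ((i + r) % l.length) (Nat.mod_lt _ hm0)

/-- Inserting a nonempty path of new vertices into a gap of the cycle contradicts maximality. -/
lemma no_insert {k : ℕ} {A : V → V → Prop} {s : Fin k → V} {C : List V}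
    (hC : IsCycleList A C) (hCs : EncountersInOrder C s)
    (hmax : ∀ C' : List V, IsCycleList A C' → EncountersInOrder C' s → C'.length ≤ C.length)
    {u u' : V} (hgap : ∃ r, [u, u'] <+: C.rotate r)
    {p : List V} (hne : p ≠ []) (hnd : p.Nodup) (hdisj : ∀ x ∈ p, x ∉ C)
    (hch : p.Chain' A) (hfirst : ∀ a ∈ p.head?, A u a) (hlast : ∀ b ∈ p.getLast?, A b u') :
    False := by
  obtain ⟨r, hpre⟩ := hgap
  obtain ⟨t, hL0⟩ := hpre
  have hL : C.rotate r = u :: u' :: t := hL0.symm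
  have hm2 : 2 ≤ C.length := hC.1
  have hm0 : 0 < C.length := by omega
  have hLcyc : IsCycleList A (C.rotate r) := isCycleList_rotate hC r
  have hLlen : C.length = 2 + t.length := by
    have h'' := congrArg List.length hL
    simp at h''
    omega
  set C' : List V := u :: (p ++ (u' :: t)) with hC'def
  have hppos : 0 < p.length := length_pos_iff.mpr hne
  have hC'len : C'.length = C.length + p.length := by
    simp only [hC'def, length_cons, length_append]
    omega
  have hpC : C' = (u :: p) ++ (u' :: t) := by simp [hC'def]
  -- C' is a cycle
  have hC'cyc : IsCycleList A C' := by
    refine ⟨by omega, ?_, ?_, ?_⟩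
    · -- Nodup
      have hperm : C'.Perm ((u :: u' :: t) ++ p) := by
        have h1 : (p ++ (u' :: t)).Perm ((u' :: t) ++ p) := perm_append_comm
        exact h1.cons u
      rw [hperm.nodup_iff, nodup_append]
      refine ⟨by rw [← hL]; exact (nodup_rotate).mpr hC.2.1, hnd, ?_⟩
      intro a haL b hap hab; subst hab
      refine hdisj a hap ?_
      have : a ∈ C.rotate r := by rw [hL]; exact haL
      exact (mem_rotate).mp this
    · -- Chain'
      rw [hpC, show Chain' A (u :: p ++ u' :: t) = IsChain A (u :: p ++ u' :: t) from rfl, isChain_append]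
      refine ⟨isChain_cons.mpr ⟨hfirst, hch⟩, ?_, ?_⟩
      · have h'' := hLcyc.2.2.1
        rw [hL] at h''
        exact (isChain_cons.mp h'').2
      · intro x hx y hy
        simp only [head?_cons, Option.mem_def, Option.some.injEq] at hy
        subst hy
        rw [show u :: p = [u] ++ p from rfl, getLast?_append_of_ne_nil _ hne] at hx
        exact hlast x hx
    · -- wrap
      intro a ha b hb
      simp only [hC'def, head?_cons, Option.mem_def, Option.some.injEq] at hb
      subst hb
      rw [hpC, getLast?_append_of_ne_nil _ (cons_ne_nil u' t)] at ha
      have hwrap := hLcyc.2.2.2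
      apply hwrap
      · rw [hL, show u :: u' :: t = [u] ++ (u' :: t) from rfl,
          getLast?_append_of_ne_nil _ (cons_ne_nil u' t)]
        exact ha
      · rw [hL]; rfl
  -- C' encounters s in order
  have hC'enc : EncountersInOrder C' s := by
    obtain ⟨q, hq⟩ := hCs
    set q' : ℕ := (q + (C.length - r % C.length)) % C.length with hq'def
    have hq'm : q' < C.length := Nat.mod_lt _ hm0
    have hrm : r % C.length < C.length := Nat.mod_lt _ hm0
    have key : (r + q') % C.length = q % C.length := by
      obtain ⟨x, hx⟩ : ∃ x, C.length * x + r % C.length = r := ⟨_, Nat.div_add_mod _ _⟩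
      obtain ⟨y, hy⟩ : ∃ y, C.length * y + q' = q + (C.length - r % C.length) := by
        refine ⟨(q + (C.length - r % C.length)) / C.length, ?_⟩
        rw [hq'def]
        exact Nat.div_add_mod _ _
      have l1 : r + q' + C.length * y = q + C.length * x + C.length := by omega
      have h'' := congrArg (· % C.length) l1
      simp only [Nat.add_mul_mod_self_left, Nat.add_mod_right] at h''
      exact h''
    have hrotq : (C.rotate r).rotate q' = C.rotate q := by
      rw [rotate_rotate]
      conv_lhs => rw [← rotate_mod]
      rw [key, rotate_mod]
    rw [← hrotq, hL] at hq
    rcases Nat.eq_zero_or_pos q' with h0 | hpos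
    · rw [h0, rotate_zero] at hq
      refine ⟨0, ?_⟩
      rw [rotate_zero]
      refine hq.trans ?_
      exact (sublist_append_right p (u' :: t)).cons₂ u
    · set d := q' - 1 with hddef
      set B := u' :: t with hBdef
      have hBlen : B.length = C.length - 1 := by
        simp only [hBdef, length_cons]
        omega
      have e1 : (u :: u' :: t).rotate 1 = B ++ [u] := by
        rw [rotate_eq_drop_append_take (by simp only [length_cons]; omega)]
        simp [hBdef]
      have e2 : (u :: u' :: t).rotate q' = (B.drop d ++ [u]) ++ B.take d := by
        have hq1 : q' = 1 + d := by omega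
        rw [hq1, ← rotate_rotate, e1,
          rotate_eq_drop_append_take (by simp only [length_append, length_cons]; omega),
          drop_append_of_le_length (by omega), take_append_of_le_length (by omega)]
      have e3 : C'.rotate (1 + p.length) = B ++ (u :: p) := by
        have hlen' : 1 + p.length ≤ C'.length := by omega
        rw [rotate_eq_drop_append_take hlen']
        have hd1 : C'.drop (1 + p.length) = B := by
          simp only [hC'def, hBdef]
          rw [show 1 + p.length = p.length + 1 from by omega]
          rw [drop_succ_cons, drop_left]
        have hd2 : C'.take (1 + p.length) = u :: p := by
          simp only [hC'def, hBdef]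
          rw [show 1 + p.length = p.length + 1 from by omega]
          rw [take_succ_cons, take_left]
        rw [hd1, hd2]
      have e4 : C'.rotate (1 + p.length + d) = (B.drop d ++ (u :: p)) ++ B.take d := by
        rw [← rotate_rotate, e3,
          rotate_eq_drop_append_take (by simp only [length_append, length_cons]; omega),
          drop_append_of_le_length (by omega), take_append_of_le_length (by omega)]
      refine ⟨1 + p.length + d, ?_⟩
      rw [e4]
      rw [e2] at hq
      refine hq.trans ?_
      exact Sublist.append (Sublist.append (Sublist.refl _) ((nil_sublist p).cons₂ u))
        (Sublist.refl _)
  have := hmax C' hC'cyc hC'enc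
  omega

/-- From reachability avoiding C we can extract a nodup path avoiding C. -/
lemma reach_path {A : V → V → Prop} {C : List V} {a b : V}
    (h : Relation.ReflTransGen (fun x y => A x y ∧ y ∉ C) a b) (ha : a ∉ C) :
    ∃ p : List V, p.head? = some a ∧ p.getLast? = some b ∧ p.Nodup ∧
      p.Chain' A ∧ ∀ x ∈ p, x ∉ C := by
  classical
  refine Relation.ReflTransGen.head_induction_on (motive := fun a _ => a ∉ C → ∃ p : List V,
    p.head? = some a ∧ p.getLast? = some b ∧ p.Nodup ∧ p.Chain' A ∧ ∀ x ∈ p, x ∉ C)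
    h ?_ ?_ ha
  · intro hb
    exact ⟨[b], rfl, rfl, nodup_singleton b, isChain_singleton b, by
      intro x hx; rw [mem_singleton] at hx; subst hx; exact hb⟩
  · intro x c hstep htail IH hx
    obtain ⟨hAxc, hcC⟩ := hstep
    obtain ⟨p, hph, hpl, hpnd, hpch, hpav⟩ := IH hcC
    have hpne : p ≠ [] := by intro h'; subst h'; simp at hph
    by_cases hxp : x ∈ p
    · obtain ⟨s1, t1, rfl⟩ := append_of_mem hxp
      have hsub : (x :: t1).Sublist (s1 ++ x :: t1) := sublist_append_right s1 (x :: t1)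
      refine ⟨x :: t1, rfl, ?_, hsub.nodup hpnd, ?_, ?_⟩
      · rwa [getLast?_append_of_ne_nil _ (cons_ne_nil x t1)] at hpl
      · exact IsChain.right_of_append hpch
      · intro y hy
        exact hpav y (hsub.mem hy)
    · refine ⟨x :: p, rfl, ?_, nodup_cons.mpr ⟨hxp, hpnd⟩, ?_, ?_⟩
      · rw [show x :: p = [x] ++ p from rfl, getLast?_append_of_ne_nil _ hpne]
        exact hpl
      · refine isChain_cons.mpr ⟨?_, hpch⟩
        intro y hy
        rw [hph] at hy
        simp only [Option.mem_def, Option.some.injEq] at hy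
        subst hy
        exact hAxc
      · intro y hy
        rcases mem_cons.mp hy with rfl | hy'
        · exact hx
        · exact hpav y hy'

end NoTFAux

/-- No vertex of $C$ sending an edge to $H$ has its successor on $C$ receiving
an edge from $H$. -/
theorem no_T_vertex_followed_by_F_vertex
    {V : Type*} [Fintype V] [DecidableEq V]
    (A : V → V → Prop) [DecidableRel A] (hirr : Irreflexive A)
    (n k : ℕ) (hn : n = Fintype.card V) (hk : 3 ≤ k)
    (hdeg : ∀ v : V, (n + k + 1) / 2 - 1 ≤ (Finset.univ.filter fun w => A v w).card ∧
                     (n + k + 1) / 2 - 1 ≤ (Finset.univ.filter fun w => A w v).card)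
    (s : Fin k → V) (hs : Function.Injective s)
    (C : List V) (hC : IsCycleList A C) (hCs : EncountersInOrder C s)
    (hmax : ∀ C' : List V, IsCycleList A C' → EncountersInOrder C' s → C'.length ≤ C.length)
    (hnotHam : ∃ v : V, v ∉ C) :
    ∀ v w : V, (∃ r, List.IsPrefix [v, w] (C.rotate r)) →
      (∃ h : V, h ∉ C ∧ A v h) → ¬ ∃ h : V, h ∉ C ∧ A h w := by
  classical
  open NoTFAux List in
  intro v w hgapvw hout hin
  obtain ⟨h1, hh1C, hvh1⟩ := hout
  obtain ⟨h2, hh2C, hh2w⟩ := hin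
  have hCnd : C.Nodup := hC.2.1
  have hm2 : 2 ≤ C.length := hC.1
  have hm0 : 0 < C.length := by omega
  ---- the successor function on C ----
  set sc : V → V := fun u => (C.rotate (C.idxOf u + 1)).headD u with hscdef
  have hsckey : ∀ u, u ∈ C → C[(C.idxOf u + 1) % C.length]? = some (sc u) := by
    intro u hu
    have h1' : (C.idxOf u + 1) % C.length < C.length := Nat.mod_lt _ hm0
    simp only [hscdef]
    rw [headD_eq_head?_getD, ← rotate_mod (l := C) (n := C.idxOf u + 1),
      head?_rotate h1', getElem?_eq_getElem h1']
    simp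
  have hscmem : ∀ u, u ∈ C → sc u ∈ C := by
    intro u hu
    have hk' := hsckey u hu
    have h1' : (C.idxOf u + 1) % C.length < C.length := Nat.mod_lt _ hm0
    rw [getElem?_eq_getElem h1'] at hk'
    have : C[(C.idxOf u + 1) % C.length]'h1' = sc u := Option.some_injective _ hk'
    rw [← this]
    exact getElem_mem h1'
  have hscinj : ∀ u1, u1 ∈ C → ∀ u2, u2 ∈ C → sc u1 = sc u2 → u1 = u2 := by
    intro u1 hu1 u2 hu2 he
    have k1 := hsckey u1 hu1
    have k2 := hsckey u2 hu2
    rw [he] at k1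
    have hk := k2.trans k1.symm
    have hi1 : C.idxOf u1 < C.length := idxOf_lt_length_iff.mpr hu1
    have hi2 : C.idxOf u2 < C.length := idxOf_lt_length_iff.mpr hu2
    have hj1 : (C.idxOf u1 + 1) % C.length < C.length := Nat.mod_lt _ hm0
    have hj2 : (C.idxOf u2 + 1) % C.length < C.length := Nat.mod_lt _ hm0
    rw [getElem?_eq_getElem hj2, getElem?_eq_getElem hj1] at hk
    have hje : (C.idxOf u2 + 1) % C.length = (C.idxOf u1 + 1) % C.length :=
      (hCnd.getElem_inj_iff).mp (Option.some_injective _ hk)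
    have hieq : C.idxOf u1 = C.idxOf u2 := by
      have e1 : (C.idxOf u1 + 1) % C.length =
          if C.idxOf u1 + 1 = C.length then 0 else C.idxOf u1 + 1 := by
        split
        · rename_i h'; rw [h', Nat.mod_self]
        · exact Nat.mod_eq_of_lt (by omega)
      have e2 : (C.idxOf u2 + 1) % C.length =
          if C.idxOf u2 + 1 = C.length then 0 else C.idxOf u2 + 1 := by
        split
        · rename_i h'; rw [h', Nat.mod_self]
        · exact Nat.mod_eq_of_lt (by omega)
      rw [e1, e2] at hje
      split at hje <;> split at hje <;> omega
    have := gel (l := C) hieq (hi := hi1)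
    rwa [getElem_idxOf hi1, getElem_idxOf hi2] at this
  have hgap_sc : ∀ u, u ∈ C → ∃ r', [u, sc u] <+: C.rotate r' := by
    intro u hu
    refine ⟨C.idxOf u, ?_⟩
    rw [pair_prefix_iff]
    have hi : C.idxOf u < C.length := idxOf_lt_length_iff.mpr hu
    constructor
    · rw [getElem?_rotate hm0, Nat.zero_add, Nat.mod_eq_of_lt hi,
        getElem?_eq_getElem hi, getElem_idxOf hi]
    · rw [getElem?_rotate (by omega),
        show (1 + C.idxOf u) % C.length = (C.idxOf u + 1) % C.length from by
          rw [Nat.add_comm]]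
      exact hsckey u hu
  ---- reachability through H ----
  set Rch : V → V → Prop := Relation.ReflTransGen (fun x y => A x y ∧ y ∉ C) with hRchdef
  have hRch_refl : ∀ a, Rch a a := by
    intro a; rw [hRchdef]
  have hRch_single : ∀ a x, A a x → x ∉ C → Rch a x := by
    intro a x h1' h2'; rw [hRchdef]; exact Relation.ReflTransGen.single ⟨h1', h2'⟩
  have hRch_trans : ∀ a b c, Rch a b → Rch b c → Rch a c := by
    intro a b c h1' h2'; rw [hRchdef] at h1' h2' ⊢; exact h1'.trans h2'
  ---- insertion impossibility ----
  have hnoins : ∀ u, u ∈ C → ∀ a b : V, a ∉ C → Rch a b → A u a → A b (sc u) → False := by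
    intro u hu a b haC hab hua hbsc
    rw [hRchdef] at hab
    obtain ⟨p, hph, hpl, hpnd, hpch, hpav⟩ := reach_path hab haC
    have hpne : p ≠ [] := by intro h'; subst h'; simp at hph
    refine no_insert hC hCs hmax (hgap_sc u hu) hpne hpnd hpav hpch ?_ ?_
    · intro a' ha'
      rw [hph] at ha'
      simp only [Option.mem_def, Option.some.injEq] at ha'
      subst ha'; exact hua
    · intro b' hb'
      rw [hpl] at hb'
      simp only [Option.mem_def, Option.some.injEq] at hb'
      subst hb'; exact hbsc
  have hnreach : ¬ Rch h1 h2 := by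
    intro hr
    rw [hRchdef] at hr
    obtain ⟨p, hph, hpl, hpnd, hpch, hpav⟩ := reach_path hr hh1C
    have hpne : p ≠ [] := by intro h'; subst h'; simp at hph
    refine no_insert hC hCs hmax hgapvw hpne hpnd hpav hpch ?_ ?_
    · intro a' ha'
      rw [hph] at ha'
      simp only [Option.mem_def, Option.some.injEq] at ha'
      subst ha'; exact hvh1
    · intro b' hb'
      rw [hpl] at hb'
      simp only [Option.mem_def, Option.some.injEq] at hb'
      subst hb'; exact hh2w
  ---- counting setup ----
  set Cs : Finset V := C.toFinset with hCsdef
  have hmemCs : ∀ x : V, x ∈ Cs ↔ x ∈ C := by intro x; rw [hCsdef]; exact mem_toFinset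
  have hmemHs : ∀ x : V, x ∈ Csᶜ ↔ x ∉ C := by
    intro x; rw [Finset.mem_compl, hmemCs x]
  have hcard : Cs.card = C.length := by rw [hCsdef]; exact toFinset_card_of_nodup hCnd
  have hncard : Cs.card + Csᶜ.card = n := by rw [hn]; exact Finset.card_add_card_compl Cs
  have hmemR : ∀ (a x : V), x ∈ Csᶜ.filter (fun y => Rch a y) ↔ (x ∉ C ∧ Rch a x) := by
    intro a x
    rw [Finset.mem_filter, Finset.mem_compl, hmemCs x]
  have hmemQ : ∀ (a x : V), x ∈ Csᶜ.filter (fun y => Rch y a) ↔ (x ∉ C ∧ Rch x a) := by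
    intro a x
    rw [Finset.mem_filter, Finset.mem_compl, hmemCs x]
  ---- degree splittings ----
  have hdeg_out : ∀ a : V, (n + k + 1) / 2 - 1 ≤
      (Cs.filter (fun x => A a x)).card + (Csᶜ.filter (fun x => A a x)).card := by
    intro a
    refine le_trans (hdeg a).1 (le_trans (Finset.card_le_card ?_) (Finset.card_union_le _ _))
    intro x hx
    rw [Finset.mem_filter] at hx
    rw [Finset.mem_union, Finset.mem_filter, Finset.mem_filter, Finset.mem_compl]
    by_cases hxc : x ∈ Cs
    · exact Or.inl ⟨hxc, hx.2⟩
    · exact Or.inr ⟨hxc, hx.2⟩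
  have hdeg_in : ∀ a : V, (n + k + 1) / 2 - 1 ≤
      (Cs.filter (fun x => A x a)).card + (Csᶜ.filter (fun x => A x a)).card := by
    intro a
    refine le_trans (hdeg a).2 (le_trans (Finset.card_le_card ?_) (Finset.card_union_le _ _))
    intro x hx
    rw [Finset.mem_filter] at hx
    rw [Finset.mem_union, Finset.mem_filter, Finset.mem_filter, Finset.mem_compl]
    by_cases hxc : x ∈ Cs
    · exact Or.inl ⟨hxc, hx.2⟩
    · exact Or.inr ⟨hxc, hx.2⟩
  ---- out-neighbours in H are reached, in-neighbours reach ----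
  have hRcount : ∀ a : V, a ∉ C →
      (Csᶜ.filter (fun x => A a x)).card + 1 ≤ (Csᶜ.filter (fun y => Rch a y)).card := by
    intro a haC
    have hsubs : Csᶜ.filter (fun x => A a x) ⊆ (Csᶜ.filter (fun y => Rch a y)).erase a := by
      intro x hx
      rw [Finset.mem_filter] at hx
      have hxC : x ∉ C := (hmemHs x).mp hx.1
      refine Finset.mem_erase.mpr ⟨?_, (hmemR a x).mpr ⟨hxC, hRch_single a x hx.2 hxC⟩⟩
      intro h'; subst h'; exact hirr x hx.2
    have hmema : a ∈ Csᶜ.filter (fun y => Rch a y) := (hmemR a a).mpr ⟨haC, hRch_refl a⟩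
    have hcle := Finset.card_le_card hsubs
    have hce := Finset.card_erase_add_one hmema
    omega
  have hQcount : ∀ a : V, a ∉ C →
      (Csᶜ.filter (fun x => A x a)).card + 1 ≤ (Csᶜ.filter (fun y => Rch y a)).card := by
    intro a haC
    have hsubs : Csᶜ.filter (fun x => A x a) ⊆ (Csᶜ.filter (fun y => Rch y a)).erase a := by
      intro x hx
      rw [Finset.mem_filter] at hx
      have hxC : x ∉ C := (hmemHs x).mp hx.1
      refine Finset.mem_erase.mpr ⟨?_, (hmemQ a x).mpr ⟨hxC, hRch_single x a hx.2 haC⟩⟩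
      intro h'; subst h'; exact hirr x hx.2
    have hmema : a ∈ Csᶜ.filter (fun y => Rch y a) := (hmemQ a a).mpr ⟨haC, hRch_refl a⟩
    have hcle := Finset.card_le_card hsubs
    have hce := Finset.card_erase_add_one hmema
    omega
  ---- C-degree bound via single-vertex insertion ----
  have hCdeg : ∀ a : V, a ∉ C →
      (Cs.filter (fun x => A a x)).card + (Cs.filter (fun x => A x a)).card ≤ Cs.card := by
    intro a haC
    have himg : (Cs.filter (fun x => A x a)).image sc ⊆ Cs.filter (fun x => ¬ A a x) := by
      intro y hy
      rw [Finset.mem_image] at hy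
      obtain ⟨u, hu, rfl⟩ := hy
      rw [Finset.mem_filter] at hu
      have huC : u ∈ C := (hmemCs u).mp hu.1
      refine Finset.mem_filter.mpr ⟨(hmemCs _).mpr (hscmem u huC), ?_⟩
      intro hAasc
      exact hnoins u huC a a haC (hRch_refl a) hu.2 hAasc
    have hinj : Set.InjOn sc ↑(Cs.filter (fun x => A x a)) := by
      intro x hx y hy hxy
      simp only [Finset.coe_filter, Set.mem_setOf_eq] at hx hy
      exact hscinj x ((hmemCs x).mp hx.1) y ((hmemCs y).mp hy.1) hxy
    have hcimg : ((Cs.filter (fun x => A x a)).image sc).card =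
        (Cs.filter (fun x => A x a)).card := Finset.card_image_of_injOn hinj
    have hcle := Finset.card_le_card himg
    have hfc := Finset.card_filter_add_card_filter_not (s := Cs) (p := fun x => A a x)
    omega
  ---- the star inequality ----
  have hstar : ∀ a : V, a ∉ C →
      2 * ((n + k + 1) / 2 - 1) + 2 ≤ Cs.card + (Csᶜ.filter (fun y => Rch a y)).card
        + (Csᶜ.filter (fun y => Rch y a)).card := by
    intro a haC
    have h1' := hdeg_out a
    have h2' := hdeg_in a
    have h3' := hRcount a haC
    have h4' := hQcount a haC
    have h5' := hCdeg a haC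
    omega
  ---- comparability ----
  have hcomp : ∀ a b : V, a ∉ C → b ∉ C → ¬ Rch a b → Rch b a := by
    intro a b haC hbC hnab
    have hsa := hstar a haC
    have hsb := hstar b hbC
    have hU1 : (Csᶜ.filter (fun y => Rch a y)).card + (Csᶜ.filter (fun y => Rch y b)).card
        ≤ Csᶜ.card := by
      have hI := Finset.card_union_add_card_inter (Csᶜ.filter (fun y => Rch a y))
        (Csᶜ.filter (fun y => Rch y b))
      have hEmp : (Csᶜ.filter (fun y => Rch a y)) ∩ (Csᶜ.filter (fun y => Rch y b)) = ∅ := by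
        rw [Finset.eq_empty_iff_forall_notMem]
        intro z hz
        rw [Finset.mem_inter] at hz
        exact hnab (hRch_trans a z b ((hmemR a z).mp hz.1).2 ((hmemQ b z).mp hz.2).2)
      have hsub : (Csᶜ.filter (fun y => Rch a y)) ∪ (Csᶜ.filter (fun y => Rch y b)) ⊆ Csᶜ :=
        Finset.union_subset (Finset.filter_subset _ _) (Finset.filter_subset _ _)
      have := Finset.card_le_card hsub
      rw [hEmp] at hI
      simp only [Finset.card_empty] at hI
      omega
    have hU2 : (Csᶜ.filter (fun y => Rch y a)) ∪ (Csᶜ.filter (fun y => Rch b y)) ⊆ Csᶜ :=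
      Finset.union_subset (Finset.filter_subset _ _) (Finset.filter_subset _ _)
    have hI2 := Finset.card_union_add_card_inter (Csᶜ.filter (fun y => Rch y a))
      (Csᶜ.filter (fun y => Rch b y))
    have hU2card := Finset.card_le_card hU2
    have hpos : 0 < ((Csᶜ.filter (fun y => Rch y a)) ∩ (Csᶜ.filter (fun y => Rch b y))).card := by
      omega
    obtain ⟨z, hz⟩ := Finset.card_pos.mp hpos
    rw [Finset.mem_inter] at hz
    exact hRch_trans b z a ((hmemR b z).mp hz.2).2 ((hmemQ a z).mp hz.1).2
  ---- maximal-reach and maximal-coreach vertices ----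
  have hHsne : (Csᶜ : Finset V).Nonempty := ⟨h1, (hmemHs h1).mpr hh1C⟩
  obtain ⟨r0, hr0H, hr0max⟩ := Finset.exists_max_image Csᶜ
    (fun a => (Csᶜ.filter (fun y => Rch a y)).card) hHsne
  have hr0C : r0 ∉ C := (hmemHs r0).mp hr0H
  have hRr0 : Csᶜ.filter (fun y => Rch r0 y) = Csᶜ := by
    apply Finset.Subset.antisymm (Finset.filter_subset _ _)
    intro x hx
    by_contra hxR
    have hxC : x ∉ C := (hmemHs x).mp hx
    have hnr : ¬ Rch r0 x := fun hr => hxR ((hmemR r0 x).mpr ⟨hxC, hr⟩)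
    have hxr : Rch x r0 := hcomp r0 x hr0C hxC hnr
    have hsubs : insert x (Csᶜ.filter (fun y => Rch r0 y)) ⊆ Csᶜ.filter (fun y => Rch x y) := by
      intro y hy
      rcases Finset.mem_insert.mp hy with rfl | hy'
      · exact (hmemR y y).mpr ⟨hxC, hRch_refl y⟩
      · obtain ⟨hyC, hry⟩ := (hmemR r0 y).mp hy'
        exact (hmemR x y).mpr ⟨hyC, hRch_trans x r0 y hxr hry⟩
    have hcle := Finset.card_le_card hsubs
    rw [Finset.card_insert_of_notMem hxR] at hcle
    have := hr0max x hx
    omega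
  obtain ⟨t0, ht0H, ht0max⟩ := Finset.exists_max_image Csᶜ
    (fun a => (Csᶜ.filter (fun y => Rch y a)).card) hHsne
  have ht0C : t0 ∉ C := (hmemHs t0).mp ht0H
  have hQt0 : Csᶜ.filter (fun y => Rch y t0) = Csᶜ := by
    apply Finset.Subset.antisymm (Finset.filter_subset _ _)
    intro x hx
    by_contra hxQ
    have hxC : x ∉ C := (hmemHs x).mp hx
    have hnr : ¬ Rch x t0 := fun hr => hxQ ((hmemQ t0 x).mpr ⟨hxC, hr⟩)
    have hxr : Rch t0 x := hcomp x t0 hxC ht0C hnr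
    have hsubs : insert x (Csᶜ.filter (fun y => Rch y t0)) ⊆ Csᶜ.filter (fun y => Rch y x) := by
      intro y hy
      rcases Finset.mem_insert.mp hy with rfl | hy'
      · exact (hmemQ y y).mpr ⟨hxC, hRch_refl y⟩
      · obtain ⟨hyC, hry⟩ := (hmemQ t0 y).mp hy'
        exact (hmemQ x y).mpr ⟨hyC, hRch_trans y t0 x hry hxr⟩
    have hcle := Finset.card_le_card hsubs
    rw [Finset.card_insert_of_notMem hxQ] at hcle
    have := ht0max x hx
    omega
  ---- final counting ----
  have hh2r : Rch r0 h2 := by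
    have : h2 ∈ Csᶜ.filter (fun y => Rch r0 y) := by
      rw [hRr0]; exact (hmemHs h2).mpr hh2C
    exact ((hmemR r0 h2).mp this).2
  have hh1t : Rch h1 t0 := by
    have : h1 ∈ Csᶜ.filter (fun y => Rch y t0) := by
      rw [hQt0]; exact (hmemHs h1).mpr hh1C
    exact ((hmemQ t0 h1).mp this).2
  have hQR : (Csᶜ.filter (fun y => Rch y r0)).card + (Csᶜ.filter (fun y => Rch t0 y)).card
      ≤ Csᶜ.card := by
    have hI := Finset.card_union_add_card_inter (Csᶜ.filter (fun y => Rch y r0))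
      (Csᶜ.filter (fun y => Rch t0 y))
    have hEmp : (Csᶜ.filter (fun y => Rch y r0)) ∩ (Csᶜ.filter (fun y => Rch t0 y)) = ∅ := by
      rw [Finset.eq_empty_iff_forall_notMem]
      intro z hz
      rw [Finset.mem_inter] at hz
      have hz1 : Rch z r0 := ((hmemQ r0 z).mp hz.1).2
      have hz2 : Rch t0 z := ((hmemR t0 z).mp hz.2).2
      exact hnreach (hRch_trans h1 r0 h2
        (hRch_trans h1 z r0 (hRch_trans h1 t0 z hh1t hz2) hz1) hh2r)
    have hsub : (Csᶜ.filter (fun y => Rch y r0)) ∪ (Csᶜ.filter (fun y => Rch t0 y)) ⊆ Csᶜ :=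
      Finset.union_subset (Finset.filter_subset _ _) (Finset.filter_subset _ _)
    have := Finset.card_le_card hsub
    rw [hEmp] at hI
    simp only [Finset.card_empty] at hI
    omega
  -- successors of in-neighbours of r0 receive nothing from H
  have hTW : (Cs.filter (fun x => A x r0)).card +
      (Cs.filter (fun x => ∃ b, b ∉ C ∧ A b x)).card ≤ Cs.card := by
    have himg : (Cs.filter (fun x => A x r0)).image sc ⊆
        Cs.filter (fun x => ¬ ∃ b, b ∉ C ∧ A b x) := by
      intro y hy
      rw [Finset.mem_image] at hy
      obtain ⟨u, hu, rfl⟩ := hy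
      rw [Finset.mem_filter] at hu
      have huC : u ∈ C := (hmemCs u).mp hu.1
      refine Finset.mem_filter.mpr ⟨(hmemCs _).mpr (hscmem u huC), ?_⟩
      rintro ⟨b, hbC, hbA⟩
      have hrb : Rch r0 b := by
        have : b ∈ Csᶜ.filter (fun y => Rch r0 y) := by
          rw [hRr0]; exact (hmemHs b).mpr hbC
        exact ((hmemR r0 b).mp this).2
      exact hnoins u huC r0 b hr0C hrb hu.2 hbA
    have hinj : Set.InjOn sc ↑(Cs.filter (fun x => A x r0)) := by
      intro x hx y hy hxy
      simp only [Finset.coe_filter, Set.mem_setOf_eq] at hx hy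
      exact hscinj x ((hmemCs x).mp hx.1) y ((hmemCs y).mp hy.1) hxy
    have hcimg : ((Cs.filter (fun x => A x r0)).image sc).card =
        (Cs.filter (fun x => A x r0)).card := Finset.card_image_of_injOn hinj
    have hcle := Finset.card_le_card himg
    have hfc := Finset.card_filter_add_card_filter_not (s := Cs)
      (p := fun x => ∃ b, b ∉ C ∧ A b x)
    omega
  have hWt0 : (Cs.filter (fun x => A t0 x)).card ≤
      (Cs.filter (fun x => ∃ b, b ∉ C ∧ A b x)).card := by
    apply Finset.card_le_card
    intro x hx
    rw [Finset.mem_filter] at hx ⊢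
    exact ⟨hx.1, t0, ht0C, hx.2⟩
  have hir0 := hdeg_in r0
  have hot0 := hdeg_out t0
  have hq6 := hQcount r0 hr0C
  have hq7 := hRcount t0 ht0C
  omega
end

section
/- Under the setup of a longest S-cycle C (with δ⁰(D) ≥ ⌈(n+k)/2⌉ - 1, k ≥ 3, C not Hamiltonian, H the induced digraph outside C), one has |C| ≥ ⌈(n+k)/2⌉ and hence |H| ≤ ⌊(n-k)/2⌋. -/
namespace LSCaux

set_option linter.unusedSectionVars false
open List
variable {V : Type*} [DecidableEq V] {A : V → V → Prop} {kk : ℕ}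

/-- reachability staying outside `C` -/
def Rch (A : V → V → Prop) (C : List V) : V → V → Prop :=
  Relation.ReflTransGen (fun a b => a ∉ C ∧ b ∉ C ∧ A a b)

/-- cyclic successor on the cycle list `C` -/
def csucc (C : List V) (t : V) : V :=
  if h : 0 < C.length then C[(C.idxOf t + 1) % C.length]'(Nat.mod_lt _ h) else t

theorem csucc_eq {C : List V} (h : 0 < C.length) (t : V) :
    csucc C t = C[(C.idxOf t + 1) % C.length]'(Nat.mod_lt _ h) := dif_pos h

theorem csucc_mem {C : List V} (h : 0 < C.length) (t : V) : csucc C t ∈ C := by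
  rw [csucc_eq h]; exact List.getElem_mem _

theorem csucc_injOn {C : List V} (hnd : C.Nodup) {t t' : V} (ht : t ∈ C) (ht' : t' ∈ C)
    (h : csucc C t = csucc C t') : t = t' := by
  have h0 : 0 < C.length := List.length_pos_iff.2 (List.ne_nil_of_mem ht)
  have hi : C.idxOf t < C.length := List.idxOf_lt_length_iff.2 ht
  have hi' : C.idxOf t' < C.length := List.idxOf_lt_length_iff.2 ht'
  rw [csucc_eq h0, csucc_eq h0] at h
  have hidx : (C.idxOf t + 1) % C.length = (C.idxOf t' + 1) % C.length :=
    (List.Nodup.getElem_inj_iff hnd).1 h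
  have e : ∀ x : ℕ, x < C.length →
      (x + 1) % C.length = if x + 1 = C.length then 0 else x + 1 := by
    intro x hx
    split
    · next hh => rw [hh, Nat.mod_self]
    · next hh => exact Nat.mod_eq_of_lt (by omega)
  rw [e _ hi, e _ hi'] at hidx
  have hee : C.idxOf t = C.idxOf t' := by split_ifs at hidx <;> omega
  have h1 : C[C.idxOf t]'hi = t := List.getElem_idxOf hi
  have h2 : C[C.idxOf t']'hi' = t' := List.getElem_idxOf hi'
  rw [← h1, ← h2]
  congr 1

theorem rch_notC {C : List V} {x y : V} (hx : x ∉ C) (h : Rch A C x y) : y ∉ C := by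
  induction h with
  | refl => exact hx
  | tail _ hbc _ => exact hbc.2.1

theorem rch_path {C : List V} {x y : V} (hx : x ∉ C) (h : Rch A C x y) :
    ∃ P : List V, P.Nodup ∧ P.Chain' A ∧ (∀ v ∈ P, v ∉ C) ∧
      P.head? = some x ∧ P.getLast? = some y := by
  induction h with
  | refl =>
    exact ⟨[x], List.nodup_singleton x, List.isChain_singleton x,
      by simpa using hx, rfl, rfl⟩
  | @tail b c hab hbc ih =>
    obtain ⟨P, hnd, hch, hmem, hh, hl⟩ := ih
    obtain ⟨hbC, hcC, hA⟩ := hbc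
    by_cases hcP : c ∈ P
    · obtain ⟨P₁, P₂, rfl⟩ := List.append_of_mem hcP
      have hsub : List.Sublist (P₁ ++ [c]) (P₁ ++ (c :: P₂)) :=
        List.Sublist.append_left (List.sublist_append_left [c] P₂) P₁
      refine ⟨P₁ ++ [c], hnd.sublist hsub, ?_, ?_, ?_, List.getLast?_concat⟩
      · exact hch.prefix ⟨P₂, by simp⟩
      · intro v hv
        rcases List.mem_append.1 hv with h | h
        · exact hmem v (List.mem_append_left _ h)
        · simp only [List.mem_singleton] at h; subst h; exact hcC
      · cases P₁ with
        | nil => simp only [List.nil_append, List.head?_cons] at hh ⊢; exact hh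
        | cons a tl => simpa using hh
    · refine ⟨P ++ [c], ?_, ?_, ?_, ?_, List.getLast?_concat⟩
      · refine List.Nodup.append hnd (List.nodup_singleton c) ?_
        intro v hv hv2
        simp only [List.mem_singleton] at hv2; subst hv2; exact hcP hv
      · refine List.IsChain.append hch (List.isChain_singleton c) ?_
        intro p hp q hq
        rw [hl] at hp
        simp only [Option.mem_some_iff] at hp
        simp only [List.head?_cons, Option.mem_some_iff] at hq
        subst hp; subst hq; exact hA
      · intro v hv
        rcases List.mem_append.1 hv with h | h
        · exact hmem v h
        · simp only [List.mem_singleton] at h; subst h; exact hcC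
      · have hPne : P ≠ [] := by intro h; rw [h] at hh; simp at hh
        rw [List.head?_append_of_ne_nil _ hPne]; exact hh

theorem cyc_rotate_one {C : List V} (hC : IsCycleList A C) : IsCycleList A (C.rotate 1) := by
  obtain ⟨h2, hnd, hch, hw⟩ := hC
  have hne : C ≠ [] := by intro h; rw [h] at h2; simp at h2
  obtain ⟨a, l, rfl⟩ := List.exists_cons_of_ne_nil hne
  have hlne : l ≠ [] := by intro h; rw [h] at h2; simp at h2
  have hrot : (a :: l).rotate 1 = l ++ [a] := by
    rw [show (1 : ℕ) = 0 + 1 from rfl, List.rotate_cons_succ, List.rotate_zero]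
  rw [hrot]
  have hnd' := List.nodup_cons.1 hnd
  refine ⟨by simp at h2 ⊢; omega, ?_, ?_, ?_⟩
  · refine List.Nodup.append hnd'.2 (List.nodup_singleton a) ?_
    intro v hv hv2
    simp only [List.mem_singleton] at hv2; subst hv2; exact hnd'.1 hv
  · refine List.IsChain.append hch.tail (List.isChain_singleton a) ?_
    intro p hp q hq
    simp only [List.head?_cons, Option.mem_some_iff] at hq
    subst hq
    exact hw p (List.mem_getLast?_append_of_mem_getLast? (l₁ := [a]) hp) a (by simp)
  · intro p hp q hq
    rw [List.getLast?_concat] at hp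
    simp only [Option.mem_some_iff] at hp
    subst hp
    rw [List.head?_append_of_ne_nil _ hlne] at hq
    exact (List.isChain_cons.1 hch).1 q hq

theorem cyc_rotate {C : List V} (hC : IsCycleList A C) (r : ℕ) : IsCycleList A (C.rotate r) := by
  induction r with
  | zero => simpa using hC
  | succ n ih => rw [← List.rotate_rotate]; exact cyc_rotate_one ih

theorem enc_rotate {C : List V} {s : Fin kk → V} (h : EncountersInOrder C s) (i : ℕ) :
    EncountersInOrder (C.rotate i) s := by
  obtain ⟨r, hr⟩ := h
  by_cases h0 : C.length = 0
  · have : C = [] := List.length_eq_zero_iff.1 h0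
    subst this
    exact ⟨0, by simpa using hr⟩
  · refine ⟨r + (C.length - i % C.length), ?_⟩
    rw [List.rotate_rotate]
    have hq := Nat.div_add_mod i C.length
    set a := C.length * (i / C.length) with ha
    set b := i % C.length with hb
    have hmul : C.length * (i / C.length + 1) = a + C.length := by rw [ha]; ring
    have hlt : b < C.length := Nat.mod_lt _ (by omega)
    have key : i + (r + (C.length - b)) = C.length * (i / C.length + 1) + r := by
      rw [hmul]; omega
    rw [key, ← List.rotate_mod, Nat.mul_add_mod, List.rotate_mod]
    exact hr

theorem enc_insert {s : Fin kk → V} (a P b : List V)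
    (h : EncountersInOrder (a ++ b) s) : EncountersInOrder (a ++ (P ++ b)) s := by
  obtain ⟨r, hr⟩ := h
  by_cases h0 : (a ++ b).length = 0
  · rw [List.length_append] at h0
    have ha : a = [] := List.length_eq_zero_iff.1 (by omega)
    have hb : b = [] := List.length_eq_zero_iff.1 (by omega)
    subst ha; subst hb
    have hk0 : kk = 0 := by simpa using hr
    subst hk0
    exact ⟨0, by simp⟩
  · rw [← List.rotate_mod] at hr
    set r₀ := r % (a ++ b).length with hr₀def
    have hr₀lt : r₀ < (a ++ b).length := Nat.mod_lt _ (by omega)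
    rw [List.rotate_eq_drop_append_take (le_of_lt hr₀lt)] at hr
    rw [List.length_append] at hr₀lt
    by_cases hra : r₀ ≤ a.length
    · refine ⟨r₀, ?_⟩
      have hle : r₀ ≤ (a ++ (P ++ b)).length := by
        simp only [List.length_append]; omega
      rw [List.rotate_eq_drop_append_take hle]
      have hd1 : (a ++ b).drop r₀ = a.drop r₀ ++ b := by
        rw [List.drop_append, Nat.sub_eq_zero_of_le hra, List.drop_zero]
      have ht1 : (a ++ b).take r₀ = a.take r₀ := by
        rw [List.take_append, Nat.sub_eq_zero_of_le hra, List.take_zero,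
          List.append_nil]
      have hd2 : (a ++ (P ++ b)).drop r₀ = a.drop r₀ ++ (P ++ b) := by
        rw [List.drop_append, Nat.sub_eq_zero_of_le hra, List.drop_zero]
      have ht2 : (a ++ (P ++ b)).take r₀ = a.take r₀ := by
        rw [List.take_append, Nat.sub_eq_zero_of_le hra, List.take_zero,
          List.append_nil]
      rw [hd1, ht1] at hr
      rw [hd2, ht2]
      refine hr.trans ?_
      refine List.Sublist.append (List.Sublist.append (List.Sublist.refl _) ?_)
        (List.Sublist.refl _)
      exact List.sublist_append_right P b
    · push_neg at hra
      set j := r₀ - a.length with hj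
      have hjb : j ≤ b.length := by omega
      refine ⟨a.length + P.length + j, ?_⟩
      have hle : a.length + P.length + j ≤ (a ++ (P ++ b)).length := by
        simp only [List.length_append]; omega
      rw [List.rotate_eq_drop_append_take hle]
      have hd1 : (a ++ b).drop r₀ = b.drop j := by
        rw [List.drop_append, List.drop_eq_nil_of_le (by omega), List.nil_append, hj]
      have ht1 : (a ++ b).take r₀ = a ++ b.take j := by
        rw [List.take_append, List.take_of_length_le (by omega), hj]
      have hd2 : (a ++ (P ++ b)).drop (a.length + P.length + j) = b.drop j := by
        have e1 : (a ++ (P ++ b)).drop (a.length + P.length + j)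
            = (P ++ b).drop (a.length + P.length + j - a.length) := by
          rw [List.drop_append, List.drop_eq_nil_of_le (by omega), List.nil_append]
        have e2 : a.length + P.length + j - a.length = P.length + j := by omega
        have e3 : (P ++ b).drop (P.length + j) = b.drop (P.length + j - P.length) := by
          rw [List.drop_append, List.drop_eq_nil_of_le (by omega), List.nil_append]
        have e4 : P.length + j - P.length = j := by omega
        rw [e1, e2, e3, e4]
      have ht2 : (a ++ (P ++ b)).take (a.length + P.length + j) = a ++ (P ++ b.take j) := by
        have e1 : (a ++ (P ++ b)).take (a.length + P.length + j)
            = a ++ (P ++ b).take (a.length + P.length + j - a.length) := by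
          rw [List.take_append, List.take_of_length_le (by omega)]
        have e2 : a.length + P.length + j - a.length = P.length + j := by omega
        have e3 : (P ++ b).take (P.length + j) = P ++ b.take (P.length + j - P.length) := by
          rw [List.take_append, List.take_of_length_le (by omega)]
        have e4 : P.length + j - P.length = j := by omega
        rw [e1, e2, e3, e4]
      rw [hd1, ht1] at hr
      rw [hd2, ht2]
      refine hr.trans ?_
      refine List.Sublist.append (List.Sublist.refl _) ?_
      refine List.Sublist.append (List.Sublist.refl _) ?_
      exact List.sublist_append_right P _

theorem no_insertion {C : List V} {s : Fin kk → V} (hC : IsCycleList A C)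
    (hCs : EncountersInOrder C s)
    (hmax : ∀ C', IsCycleList A C' → EncountersInOrder C' s → C'.length ≤ C.length)
    {t x y : V} (ht : t ∈ C) (hx : x ∉ C) (htx : A t x) (hxy : Rch A C x y)
    (hyt : A y (csucc C t)) : False := by
  obtain ⟨h2, hnd, hch, hw⟩ := hC
  have h0 : 0 < C.length := by omega
  obtain ⟨P, hPnd, hPch, hPC, hPh, hPl⟩ := rch_path hx hxy
  have hPne : P ≠ [] := by intro h; rw [h] at hPh; simp at hPh
  have hi : C.idxOf t < C.length := List.idxOf_lt_length_iff.2 ht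
  have hDlen : (C.rotate (C.idxOf t)).length = C.length := List.length_rotate _ _
  have hDcyc : IsCycleList A (C.rotate (C.idxOf t)) := cyc_rotate ⟨h2, hnd, hch, hw⟩ _
  have hDenc : EncountersInOrder (C.rotate (C.idxOf t)) s := enc_rotate hCs _
  have hDmem : ∀ a : V, a ∈ C.rotate (C.idxOf t) ↔ a ∈ C := fun a => List.mem_rotate
  have hDne : C.rotate (C.idxOf t) ≠ [] := by
    intro h; rw [h] at hDlen; simp at hDlen; omega
  obtain ⟨t', L1, hD1⟩ := List.exists_cons_of_ne_nil hDne
  have hL1ne : L1 ≠ [] := by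
    intro h; rw [hD1, h] at hDlen; simp at hDlen; omega
  obtain ⟨u', L, hL1⟩ := List.exists_cons_of_ne_nil hL1ne
  rw [hL1] at hD1
  have ht' : t' = t := by
    have h := List.getElem_rotate C (C.idxOf t) 0 (by rw [List.length_rotate]; omega)
    simp only [hD1, List.getElem_cons_zero] at h
    rw [h]
    have e1 : (0 + C.idxOf t) % C.length = C.idxOf t := by
      rw [Nat.zero_add]; exact Nat.mod_eq_of_lt hi
    simp only [e1]
    exact List.getElem_idxOf hi
  have hu' : u' = csucc C t := by
    have h := List.getElem_rotate C (C.idxOf t) 1 (by rw [List.length_rotate]; omega)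
    simp only [hD1, List.getElem_cons_succ, List.getElem_cons_zero] at h
    rw [h, csucc_eq h0]
    have e1 : 1 + C.idxOf t = C.idxOf t + 1 := by omega
    simp only [e1]
  subst ht'
  subst hu'
  obtain ⟨hD2, hDnd, hDch, hDw⟩ := hDcyc
  rw [hD1] at hDnd hDch hDw hDenc
  have hndc := List.nodup_cons.1 hDnd
  have hULC : ∀ a, a ∈ csucc C t' :: L → a ∈ C := by
    intro a ha
    exact (hDmem a).1 (hD1 ▸ List.mem_cons_of_mem _ ha)
  have hCnewnd : (t' :: (P ++ (csucc C t' :: L))).Nodup := by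
    rw [List.nodup_cons]
    constructor
    · intro hmem
      rcases List.mem_append.1 hmem with h | h
      · exact hPC t' h ht
      · exact hndc.1 h
    · refine List.Nodup.append hPnd hndc.2 ?_
      intro v hv hv2
      exact hPC v hv (hULC v hv2)
  have hheadPU : (P ++ (csucc C t' :: L)).head? = some x := by
    rw [List.head?_append_of_ne_nil _ hPne]; exact hPh
  have hCnewch : (t' :: (P ++ (csucc C t' :: L))).Chain' A := by
    refine List.isChain_cons.2 ⟨?_, ?_⟩
    · intro y' hy'
      rw [hheadPU] at hy'
      simp only [Option.mem_some_iff] at hy'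
      subst hy'
      exact htx
    · refine List.IsChain.append hPch (List.isChain_cons.1 hDch).2 ?_
      intro p hp q hq
      rw [hPl] at hp
      simp only [Option.mem_some_iff] at hp
      simp only [List.head?_cons, Option.mem_some_iff] at hq
      subst hp; subst hq
      exact hyt
  have hDlast : (t' :: csucc C t' :: L).getLast? = (csucc C t' :: L).getLast? :=
    List.getLast?_append_of_ne_nil [t'] (by simp)
  have hCnewlast : (t' :: (P ++ (csucc C t' :: L))).getLast? = (csucc C t' :: L).getLast? := by
    have e1 : t' :: (P ++ (csucc C t' :: L)) = [t'] ++ (P ++ (csucc C t' :: L)) := rfl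
    rw [e1, List.getLast?_append_of_ne_nil _ (by simp),
      List.getLast?_append_of_ne_nil _ (by simp)]
  have hCnewcyc : IsCycleList A (t' :: (P ++ (csucc C t' :: L))) := by
    refine ⟨?_, hCnewnd, hCnewch, ?_⟩
    · have := List.length_pos_iff.2 hPne
      simp
      omega
    · intro p hp q hq
      rw [hCnewlast] at hp
      simp only [List.head?_cons, Option.mem_some_iff] at hq
      subst hq
      refine hDw p ?_ t' (by simp)
      rw [hDlast]
      exact hp
  have hCnewenc : EncountersInOrder (t' :: (P ++ (csucc C t' :: L))) s := by
    have := enc_insert (s := s) [t'] P (csucc C t' :: L) hDenc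
    exact this
  have hle := hmax _ hCnewcyc hCnewenc
  have hClen : C.length = 2 + L.length := by
    rw [← hDlen, hD1]; simp; omega
  have hPlen : 1 ≤ P.length := List.length_pos_iff.2 hPne
  rw [hClen] at hle
  simp at hle
  omega

theorem count_lemma [DecidableRel A] {C : List V} (hnd : C.Nodup) (h0 : 0 < C.length)
    (hins : ∀ t x y, t ∈ C → x ∉ C → A t x → Rch A C x y → A y (csucc C t) → False)
    (W Z : Finset V) (hW : ∀ w ∈ W, w ∉ C) (hWZ : ∀ w ∈ W, ∀ z ∈ Z, Rch A C w z) :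
    (C.toFinset.filter fun t => ∃ w ∈ W, A t w).card
      + (C.toFinset.filter fun u => ∃ z ∈ Z, A z u).card ≤ C.length := by
  classical
  set T := C.toFinset.filter (fun t => ∃ w ∈ W, A t w) with hT
  set F := C.toFinset.filter (fun u => ∃ z ∈ Z, A z u) with hF
  have himg : T.image (csucc C) ⊆ C.toFinset \ F := by
    intro u hu
    obtain ⟨t, htT, rfl⟩ := Finset.mem_image.1 hu
    have htC : t ∈ C := List.mem_toFinset.1 (Finset.mem_filter.1 htT).1
    obtain ⟨w, hwW, htw⟩ := (Finset.mem_filter.1 htT).2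
    refine Finset.mem_sdiff.2 ⟨List.mem_toFinset.2 (csucc_mem h0 t), ?_⟩
    intro hmemF
    obtain ⟨z, hzZ, hzu⟩ := (Finset.mem_filter.1 hmemF).2
    exact hins t w z htC (hW w hwW) htw (hWZ w hwW z hzZ) hzu
  have hinj : (T.image (csucc C)).card = T.card := Finset.card_image_of_injOn
    (fun t ht t2 ht2 h => csucc_injOn hnd (List.mem_toFinset.1 (Finset.mem_filter.1 ht).1)
      (List.mem_toFinset.1 (Finset.mem_filter.1 ht2).1) h)
  have hdisj : Disjoint (T.image (csucc C)) F :=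
    Finset.disjoint_left.2 fun u hu huF => (Finset.mem_sdiff.1 (himg hu)).2 huF
  have hle : (T.image (csucc C)).card + F.card ≤ C.toFinset.card := by
    rw [← Finset.card_union_of_disjoint hdisj]
    refine Finset.card_le_card (Finset.union_subset ?_ (Finset.filter_subset _ _))
    exact himg.trans (Finset.sdiff_subset)
  rw [hinj] at hle
  rwa [List.toFinset_card_of_nodup hnd] at hle

end LSCaux

open LSCaux in
/-- $|C| \ge \lceil (n+k)/2 \rceil$ and hence $|H| \le \lfloor (n-k)/2 \rfloor$. -/
theorem longest_S_cycle_length_bound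
    {V : Type*} [Fintype V] [DecidableEq V]
    (A : V → V → Prop) [DecidableRel A] (hirr : Irreflexive A)
    (n k : ℕ) (hn : n = Fintype.card V) (hk : 3 ≤ k)
    (hdeg : ∀ v : V, (n + k + 1) / 2 - 1 ≤ (Finset.univ.filter fun w => A v w).card ∧
                     (n + k + 1) / 2 - 1 ≤ (Finset.univ.filter fun w => A w v).card)
    (s : Fin k → V) (hs : Function.Injective s)
    (C : List V) (hC : IsCycleList A C) (hCs : EncountersInOrder C s)
    (hmax : ∀ C' : List V, IsCycleList A C' → EncountersInOrder C' s → C'.length ≤ C.length)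
    (hnotHam : ∃ v : V, v ∉ C) :
    (n + k + 1) / 2 ≤ C.length ∧
    (Finset.univ.filter fun v => (v ∉ C : Prop)).card ≤ (n - k) / 2 := by
  classical
  obtain ⟨h2, hnd, hch, hw⟩ := hC
  have h0 : 0 < C.length := by omega
  set d : ℕ := (n + k + 1) / 2 - 1 with hd
  have hkn : k ≤ n := by
    rw [hn]
    simpa using Fintype.card_le_of_injective s hs
  have hdarith : n + k ≤ 2 * d + 2 := by omega
  have hcardC : C.toFinset.card = C.length := List.toFinset_card_of_nodup hnd
  have hcn : C.length ≤ n := by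
    rw [hn, ← hcardC]; exact Finset.card_le_univ _
  set Hs : Finset V := Finset.univ.filter (fun v => (v ∉ C : Prop)) with hHs
  have hHsmem : ∀ v : V, v ∈ Hs ↔ v ∉ C := by intro v; simp [hHs]
  have hHscard : Hs.card + C.length = n := by
    have he : Hs = C.toFinsetᶜ := by ext v; simp [hHs]
    have h1 := Finset.card_le_univ C.toFinset
    rw [hn, ← hcardC, he, Finset.card_compl]
    omega
  have hins : ∀ t x y : V, t ∈ C → x ∉ C → A t x → Rch A C x y → A y (csucc C t) → False := by
    intro t x y ht hx htx hxy hyt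
    exact no_insertion ⟨h2, hnd, hch, hw⟩ hCs hmax ht hx htx hxy hyt
  have hdegOut : ∀ (v : V) (U : Finset V), (∀ u, A v u → u ∈ U) → d ≤ U.card := by
    intro v U hU
    calc d ≤ (Finset.univ.filter fun w => A v w).card := (hdeg v).1
    _ ≤ U.card := Finset.card_le_card (fun u hu => hU u (Finset.mem_filter.1 hu).2)
  have hdegIn : ∀ (v : V) (U : Finset V), (∀ u, A u v → u ∈ U) → d ≤ U.card := by
    intro v U hU
    calc d ≤ (Finset.univ.filter fun w => A w v).card := (hdeg v).2
    _ ≤ U.card := Finset.card_le_card (fun u hu => hU u (Finset.mem_filter.1 hu).2)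
  have hmain : d + 1 ≤ C.length := by
    by_cases hsc : ∀ x : V, x ∉ C → ∀ y : V, y ∉ C → Rch A C x y
    · by_cases hT : ∃ t ∈ C, ∃ x : V, x ∉ C ∧ A t x
      · obtain ⟨t, ht, x, hx, htx⟩ := hT
        have hu : csucc C t ∈ C := csucc_mem h0 t
        have hsub : ∀ a, A a (csucc C t) → a ∈ C.toFinset.erase (csucc C t) := by
          intro a ha
          have haC : a ∈ C := by
            by_contra haC
            exact hins t x a ht hx htx (hsc x hx a haC) ha
          exact Finset.mem_erase.2 ⟨fun he => hirr _ (he ▸ ha), List.mem_toFinset.2 haC⟩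
        have hD := hdegIn (csucc C t) _ hsub
        have hcard : (C.toFinset.erase (csucc C t)).card = C.length - 1 := by
          rw [Finset.card_erase_of_mem (List.mem_toFinset.2 hu), hcardC]
        omega
      · push_neg at hT
        have hne : C ≠ [] := by intro h; rw [h] at h2; simp at h2
        have ht : C.head hne ∈ C := List.head_mem hne
        have hsub : ∀ a, A (C.head hne) a → a ∈ C.toFinset.erase (C.head hne) := by
          intro a ha
          have haC : a ∈ C := by
            by_contra haC
            exact hT _ ht a haC ha
          exact Finset.mem_erase.2 ⟨fun he => hirr _ (he ▸ ha), List.mem_toFinset.2 haC⟩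
        have hD := hdegOut (C.head hne) _ hsub
        have hcard : (C.toFinset.erase (C.head hne)).card = C.length - 1 := by
          rw [Finset.card_erase_of_mem (List.mem_toFinset.2 ht), hcardC]
        omega
    · push_neg at hsc
      obtain ⟨x0, hx0, y0, hy0, hnr⟩ := hsc
      exfalso
      have lemB : ∀ U : Finset V, (∀ v ∈ U, v ∉ C) → U.Nonempty →
          (∀ a ∈ U, ∀ b : V, A a b → b ∉ C → b ∈ U) →
          (∀ b ∈ U, ∀ a : V, A a b → a ∉ C → a ∈ U) →
          ∃ S : Finset V, S ⊆ U ∧ S.Nonempty ∧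
            (∀ a ∈ S, ∀ b : V, A a b → b ∉ C → b ∈ S) ∧
            (∀ b ∈ S, ∀ a : V, A a b → a ∉ C → a ∈ S) ∧
            (∀ a ∈ S, ∀ b ∈ S, Rch A C a b) := by
        intro U hUC hUne hUout hUin
        have hRc_iff : ∀ u v : V, v ∈ U.filter (fun v => Rch A C u v) ↔ v ∈ U ∧ Rch A C u v := by
          intro u v; simp
        have hCc_iff : ∀ u v : V, v ∈ U.filter (fun v => Rch A C v u) ↔ v ∈ U ∧ Rch A C v u := by
          intro u v; simp
        obtain ⟨z₀, hz₀U, hz₀min⟩ :=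
          Finset.exists_min_image U (fun u => (U.filter (fun v => Rch A C u v)).card) hUne
        set Z := U.filter (fun v => Rch A C z₀ v) with hZ
        have hz₀Z : z₀ ∈ Z := (hRc_iff _ _).2 ⟨hz₀U, Relation.ReflTransGen.refl⟩
        have hZU : Z ⊆ U := Finset.filter_subset _ _
        have hZsub : ∀ x ∈ Z, U.filter (fun v => Rch A C x v) = Z := by
          intro x hx
          obtain ⟨hxU, hzx⟩ := (hRc_iff _ _).1 hx
          refine Finset.eq_of_subset_of_card_le ?_ (hz₀min x hxU)
          intro v hv
          obtain ⟨hvU, hxv⟩ := (hRc_iff _ _).1 hv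
          exact (hRc_iff _ _).2 ⟨hvU, hzx.trans hxv⟩
        have hZmut : ∀ a ∈ Z, ∀ b ∈ Z, Rch A C a b := by
          intro a ha b hb
          rw [← hZsub a ha] at hb
          exact ((hRc_iff _ _).1 hb).2
        have hZout : ∀ a ∈ Z, ∀ b : V, A a b → b ∉ C → b ∈ Z := by
          intro a ha b hab hbC
          obtain ⟨haU, hza⟩ := (hRc_iff _ _).1 ha
          exact (hRc_iff _ _).2 ⟨hUout a haU b hab hbC,
            hza.tail ⟨hUC a haU, hbC, hab⟩⟩
        have hCz₀ne : (U.filter (fun v => Rch A C v z₀)).Nonempty :=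
          ⟨z₀, (hCc_iff _ _).2 ⟨hz₀U, Relation.ReflTransGen.refl⟩⟩
        obtain ⟨w₀, hw₀m, hw₀min⟩ :=
          Finset.exists_min_image (U.filter (fun v => Rch A C v z₀))
            (fun u => (U.filter (fun v => Rch A C v u)).card) hCz₀ne
        obtain ⟨hw₀U, hw₀z⟩ := (hCc_iff _ _).1 hw₀m
        set W := U.filter (fun v => Rch A C v w₀) with hW
        have hw₀W : w₀ ∈ W := (hCc_iff _ _).2 ⟨hw₀U, Relation.ReflTransGen.refl⟩
        have hWU : W ⊆ U := Finset.filter_subset _ _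
        have hWsub : ∀ x ∈ W, U.filter (fun v => Rch A C v x) = W := by
          intro x hx
          obtain ⟨hxU, hxw⟩ := (hCc_iff _ _).1 hx
          refine Finset.eq_of_subset_of_card_le ?_
            (hw₀min x ((hCc_iff _ _).2 ⟨hxU, hxw.trans hw₀z⟩))
          intro v hv
          obtain ⟨hvU, hvx⟩ := (hCc_iff _ _).1 hv
          exact (hCc_iff _ _).2 ⟨hvU, hvx.trans hxw⟩
        have hWmut : ∀ a ∈ W, ∀ b ∈ W, Rch A C a b := by
          intro a ha b hb
          rw [← hWsub b hb] at ha
          exact ((hCc_iff _ _).1 ha).2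
        have hWin : ∀ b ∈ W, ∀ a : V, A a b → a ∉ C → a ∈ W := by
          intro b hb a hab haC
          obtain ⟨hbU, hbw⟩ := (hCc_iff _ _).1 hb
          exact (hCc_iff _ _).2 ⟨hUin b hbU a hab haC,
            Relation.ReflTransGen.head ⟨haC, hUC b hbU, hab⟩ hbw⟩
        have hWZ : ∀ a ∈ W, ∀ b ∈ Z, Rch A C a b := by
          intro a ha b hb
          exact ((((hCc_iff _ _).1 ha).2.trans hw₀z).trans (((hRc_iff _ _).1 hb).2))
        by_cases hint : (W ∩ Z).Nonempty
        · obtain ⟨xx, hxx⟩ := hint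
          have hxW := (Finset.mem_inter.1 hxx).1
          have hxZ := (Finset.mem_inter.1 hxx).2
          have hWeqZ : W = Z := by
            apply Finset.Subset.antisymm
            · intro v hv
              have hxv : Rch A C xx v := hWmut xx hxW v hv
              rw [← hZsub xx hxZ]
              exact (hRc_iff _ _).2 ⟨hWU hv, hxv⟩
            · intro v hv
              have hvx : Rch A C v xx := hZmut v hv xx hxZ
              rw [← hWsub xx hxW]
              exact (hCc_iff _ _).2 ⟨hZU hv, hvx⟩
          refine ⟨Z, hZU, ⟨z₀, hz₀Z⟩, hZout, ?_, hZmut⟩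
          rw [← hWeqZ]
          exact hWin
        · exfalso
          have hdisj : Disjoint W Z :=
            Finset.disjoint_iff_inter_eq_empty.2 (Finset.not_nonempty_iff_eq_empty.1 hint)
          have hcount := count_lemma (A := A) hnd h0 hins W Z
            (fun w hw => hUC w (hWU hw)) hWZ
          set TW := C.toFinset.filter (fun t => ∃ w ∈ W, A t w) with hTW
          set FZ := C.toFinset.filter (fun u => ∃ z ∈ Z, A z u) with hFZ
          have hdW : d ≤ TW.card + (W.card - 1) := by
            have hsub : ∀ a, A a w₀ → a ∈ TW ∪ W.erase w₀ := by
              intro a ha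
              by_cases haC : a ∈ C
              · exact Finset.mem_union_left _
                  (Finset.mem_filter.2 ⟨List.mem_toFinset.2 haC, w₀, hw₀W, ha⟩)
              · refine Finset.mem_union_right _ (Finset.mem_erase.2
                  ⟨fun he => hirr _ (he ▸ ha), hWin w₀ hw₀W a ha haC⟩)
            have hD := hdegIn w₀ _ hsub
            have hc1 := Finset.card_union_le TW (W.erase w₀)
            have hc2 : (W.erase w₀).card = W.card - 1 := Finset.card_erase_of_mem hw₀W
            omega
          have hdZ : d ≤ FZ.card + (Z.card - 1) := by
            have hsub : ∀ a, A z₀ a → a ∈ FZ ∪ Z.erase z₀ := by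
              intro a ha
              by_cases haC : a ∈ C
              · exact Finset.mem_union_left _
                  (Finset.mem_filter.2 ⟨List.mem_toFinset.2 haC, z₀, hz₀Z, ha⟩)
              · refine Finset.mem_union_right _ (Finset.mem_erase.2
                  ⟨fun he => hirr _ (he ▸ ha), hZout z₀ hz₀Z a ha haC⟩)
            have hD := hdegOut z₀ _ hsub
            have hc1 := Finset.card_union_le FZ (Z.erase z₀)
            have hc2 : (Z.erase z₀).card = Z.card - 1 := Finset.card_erase_of_mem hz₀Z
            omega
          have hcardU : W.card + Z.card ≤ Hs.card := by
            rw [← Finset.card_union_of_disjoint hdisj]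
            refine Finset.card_le_card ?_
            intro v hv
            rcases Finset.mem_union.1 hv with h | h
            · exact (hHsmem v).2 (hUC v (hWU h))
            · exact (hHsmem v).2 (hUC v (hZU h))
          have hWpos : 1 ≤ W.card := Finset.card_pos.2 ⟨w₀, hw₀W⟩
          have hZpos : 1 ≤ Z.card := Finset.card_pos.2 ⟨z₀, hz₀Z⟩
          omega
      obtain ⟨S₁, hS₁sub, hS₁ne, hS₁out, hS₁in, hS₁mut⟩ :=
        lemB Hs (fun v hv => (hHsmem v).1 hv) ⟨x0, (hHsmem x0).2 hx0⟩
          (fun a _ b _ hbC => (hHsmem b).2 hbC) (fun b _ a _ haC => (hHsmem a).2 haC)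
      have hS₁neHs : S₁ ≠ Hs := by
        intro he
        exact hnr (hS₁mut x0 (by rw [he]; exact (hHsmem x0).2 hx0) y0
          (by rw [he]; exact (hHsmem y0).2 hy0))
      obtain ⟨v1, hv1Hs, hv1S⟩ := Finset.exists_of_ssubset (lt_of_le_of_ne hS₁sub hS₁neHs)
      obtain ⟨S₂, hS₂sub, hS₂ne, hS₂out, hS₂in, hS₂mut⟩ :=
        lemB (Hs \ S₁) (fun v hv => (hHsmem v).1 (Finset.mem_sdiff.1 hv).1)
          ⟨v1, Finset.mem_sdiff.2 ⟨hv1Hs, hv1S⟩⟩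
          (fun a ha b hab hbC => Finset.mem_sdiff.2 ⟨(hHsmem b).2 hbC,
            fun hbS => (Finset.mem_sdiff.1 ha).2 (hS₁in b hbS a hab
              ((hHsmem a).1 (Finset.mem_sdiff.1 ha).1))⟩)
          (fun b hb a hab haC => Finset.mem_sdiff.2 ⟨(hHsmem a).2 haC,
            fun haS => (Finset.mem_sdiff.1 hb).2 (hS₁out a haS b hab
              ((hHsmem b).1 (Finset.mem_sdiff.1 hb).1))⟩)
      have hiso : ∀ S : Finset V, (∀ v ∈ S, v ∉ C) →
          (∀ a ∈ S, ∀ b : V, A a b → b ∉ C → b ∈ S) →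
          (∀ b ∈ S, ∀ a : V, A a b → a ∉ C → a ∈ S) →
          (∀ a ∈ S, ∀ b ∈ S, Rch A C a b) →
          ∀ s₁ ∈ S, 2 * d + 2 ≤ C.length + 2 * S.card := by
        intro S hSC hSout hSin hSmut s₁ hs₁
        have hcount := count_lemma (A := A) hnd h0 hins S S hSC hSmut
        set TS := C.toFinset.filter (fun t => ∃ w ∈ S, A t w) with hTS
        set FS := C.toFinset.filter (fun u => ∃ z ∈ S, A z u) with hFS
        have hdT : d ≤ TS.card + (S.card - 1) := by
          have hsub : ∀ a, A a s₁ → a ∈ TS ∪ S.erase s₁ := by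
            intro a ha
            by_cases haC : a ∈ C
            · exact Finset.mem_union_left _
                (Finset.mem_filter.2 ⟨List.mem_toFinset.2 haC, s₁, hs₁, ha⟩)
            · exact Finset.mem_union_right _ (Finset.mem_erase.2
                ⟨fun he => hirr _ (he ▸ ha), hSin s₁ hs₁ a ha haC⟩)
          have hD := hdegIn s₁ _ hsub
          have hc1 := Finset.card_union_le TS (S.erase s₁)
          have hc2 : (S.erase s₁).card = S.card - 1 := Finset.card_erase_of_mem hs₁
          omega
        have hdF : d ≤ FS.card + (S.card - 1) := by
          have hsub : ∀ a, A s₁ a → a ∈ FS ∪ S.erase s₁ := by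
            intro a ha
            by_cases haC : a ∈ C
            · exact Finset.mem_union_left _
                (Finset.mem_filter.2 ⟨List.mem_toFinset.2 haC, s₁, hs₁, ha⟩)
            · exact Finset.mem_union_right _ (Finset.mem_erase.2
                ⟨fun he => hirr _ (he ▸ ha), hSout s₁ hs₁ a ha haC⟩)
          have hD := hdegOut s₁ _ hsub
          have hc1 := Finset.card_union_le FS (S.erase s₁)
          have hc2 : (S.erase s₁).card = S.card - 1 := Finset.card_erase_of_mem hs₁
          omega
        have hpos : 1 ≤ S.card := Finset.card_pos.2 ⟨s₁, hs₁⟩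
        omega
      obtain ⟨s₁, hs₁⟩ := hS₁ne
      obtain ⟨s₂, hs₂⟩ := hS₂ne
      have h1 := hiso S₁ (fun v hv => (hHsmem v).1 (hS₁sub hv)) hS₁out hS₁in hS₁mut s₁ hs₁
      have h2' := hiso S₂ (fun v hv => (hHsmem v).1 ((hS₂sub.trans Finset.sdiff_subset) hv))
        hS₂out hS₂in hS₂mut s₂ hs₂
      have hdisj12 : S₁.card + S₂.card ≤ Hs.card := by
        have hdd : Disjoint S₁ S₂ := Finset.disjoint_left.2
          (fun v hv1 hv2 => (Finset.mem_sdiff.1 (hS₂sub hv2)).2 hv1)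
        rw [← Finset.card_union_of_disjoint hdd]
        exact Finset.card_le_card
          (Finset.union_subset hS₁sub (hS₂sub.trans Finset.sdiff_subset))
      omega
  refine ⟨by omega, ?_⟩
  have : (Finset.univ.filter fun v => (v ∉ C : Prop)).card = Hs.card := rfl
  rw [this]
  omega
end

section
/- Under the setup of a longest S-cycle C (δ⁰(D) ≥ ⌈(n+k)/2⌉ - 1, k ≥ 3, C not Hamiltonian, H outside C): suppose H contains a vertex v with d^-_H(v) + d^+_H(v) ≤ |H| + k - 1. Then for any distinct vertices x_1, x_2 on C sending edges to H and any distinct vertices y_1, y_2 on C receiving edges from H (with {x_1,x_2,y_1,y_2} four distinct vertices), at least one of the following holds: both x_1v and vy_1 are edges of D, or both x_2v and vy_2 are edges of D. -/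
lemma aux_dedup {V : Type*} {r : V → V → Prop} :
    ∀ (L : List V), L ≠ [] → L.Chain' r →
    ∃ L' : List V, L' ≠ [] ∧ L'.Chain' r ∧ L'.Nodup ∧ L'.head? = L.head? ∧
      L'.getLast? = L.getLast? ∧ ∀ x ∈ L', x ∈ L := by
  intro L
  induction L with
  | nil => intro h; exact absurd rfl h
  | cons a t ih =>
    intro _ hch
    rcases eq_or_ne t [] with rfl | ht
    · exact ⟨[a], by simp, List.isChain_singleton a, by simp, rfl, rfl, by simp⟩
    · obtain ⟨T, hTne, hTch, hTnd, hThead, hTlast, hTsub⟩ := ih ht hch.tail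
      have hlast_cons : (a :: t).getLast? = t.getLast? := by
        cases t with
        | nil => exact absurd rfl ht
        | cons b u => rfl
      by_cases haT : a ∈ T
      · obtain ⟨s1, s2, rfl⟩ := List.append_of_mem haT
        refine ⟨a :: s2, by simp, hTch.suffix ⟨s1, rfl⟩,
          hTnd.sublist (List.sublist_append_right s1 (a :: s2)), rfl, ?_, ?_⟩
        · rw [hlast_cons, ← hTlast, List.getLast?_append_of_ne_nil s1 (by simp)]
        · intro x hx
          rcases List.mem_cons.mp hx with rfl | hx2
          · exact List.mem_cons_self
          · exact List.mem_cons_of_mem _ (hTsub x (by simp [hx2]))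
      · refine ⟨a :: T, by simp, ?_, by simp [hTnd, haT], rfl, ?_, ?_⟩
        · refine List.isChain_cons.mpr ⟨?_, hTch⟩
          intro y hy
          rw [hThead] at hy
          exact (List.isChain_cons.mp hch).1 y hy
        · rw [hlast_cons, ← hTlast]
          cases T with
          | nil => exact absurd rfl hTne
          | cons b u => rfl
        · intro x hx
          rcases List.mem_cons.mp hx with rfl | hx2
          · exact List.mem_cons_self
          · exact List.mem_cons_of_mem _ (hTsub x hx2)


lemma get_congr {V : Type*} (L : List V) {a b : ℕ} (ha : a < L.length) (hb : b < L.length)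
    (h : a = b) : L.get ⟨a, ha⟩ = L.get ⟨b, hb⟩ := by subst h; rfl

lemma rot_get {V : Type*} (C : List V) (r a : ℕ) (ha : a < C.length)
    (hm : 0 < C.length) :
    (C.rotate r).get ⟨a, by rw [List.length_rotate]; exact ha⟩
      = C.get ⟨(a + r) % C.length, Nat.mod_lt _ hm⟩ :=
  List.get_rotate C r ⟨a, by rw [List.length_rotate]; exact ha⟩

lemma rot_ne_nil {V : Type*} (C : List V) (r : ℕ) (hm : 0 < C.length) :
    C.rotate r ≠ [] :=
  List.ne_nil_of_length_pos (by rw [List.length_rotate]; exact hm)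

lemma rot_head {V : Type*} (C : List V) (r : ℕ) (hm : 0 < C.length) (hr : r < C.length) :
    (C.rotate r).head (rot_ne_nil C r hm) = C.get ⟨r, hr⟩ := by
  have e0 : (C.rotate r).head (rot_ne_nil C r hm) = (C.rotate r).get ⟨0, by rw [List.length_rotate]; exact hm⟩ := by
    rw [List.head_eq_getElem_zero, List.get_eq_getElem]
  rw [e0, rot_get C r 0 hm hm]
  exact get_congr C _ hr (by rw [Nat.zero_add, Nat.mod_eq_of_lt hr])

lemma rot_last {V : Type*} (C : List V) (r : ℕ) (hm : 0 < C.length) :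
    (C.rotate r).getLast (rot_ne_nil C r hm)
      = C.get ⟨(C.length - 1 + r) % C.length, Nat.mod_lt _ hm⟩ := by
  have hl : (C.rotate r).length = C.length := List.length_rotate C r
  have e0 : (C.rotate r).getLast (rot_ne_nil C r hm)
      = (C.rotate r).get ⟨(C.rotate r).length - 1, by rw [hl]; omega⟩ := by
    rw [List.getLast_eq_getElem]; rfl
  rw [e0, get_congr (C.rotate r) _ (by rw [hl]; omega : C.length - 1 < (C.rotate r).length)
    (by rw [hl] : (C.rotate r).length - 1 = C.length - 1)]
  rw [rot_get C r (C.length - 1) (by omega) hm]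

lemma rot_chain' {V : Type*} {A : V → V → Prop} (C : List V) (hm : 0 < C.length)
    (hK : ∀ (a : ℕ) (ha : a < C.length),
      A (C.get ⟨a, ha⟩) (C.get ⟨(a + 1) % C.length, Nat.mod_lt _ hm⟩))
    (r : ℕ) : (C.rotate r).Chain' A := by
  refine List.isChain_iff_getElem.mpr ?_
  intro a ha
  show A ((C.rotate r).get ⟨a, by omega⟩) ((C.rotate r).get ⟨a + 1, by omega⟩)
  rw [List.length_rotate] at ha
  have e1 := rot_get C r a (by omega) hm
  have e2 := rot_get C r (a + 1) (by omega) hm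
  rw [e1, e2]
  have h3 := hK ((a + r) % C.length) (Nat.mod_lt _ hm)
  have e3 : ((a + r) % C.length + 1) % C.length = (a + 1 + r) % C.length := by
    rw [Nat.mod_add_mod]
    congr 1
    omega
  rw [get_congr C (Nat.mod_lt _ hm) (Nat.mod_lt _ hm) e3] at h3
  exact h3

lemma cyc_edge {V : Type*} {A : V → V → Prop} {C : List V} (hC : IsCycleList A C)
    (hm : 0 < C.length) :
    ∀ (a : ℕ) (ha : a < C.length),
      A (C.get ⟨a, ha⟩) (C.get ⟨(a + 1) % C.length, Nat.mod_lt _ hm⟩) := by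
  obtain ⟨hlen2, hnd, hch, hwrap⟩ := hC
  have hne : C ≠ [] := List.ne_nil_of_length_pos hm
  intro a ha
  rcases Nat.lt_or_ge (a + 1) C.length with h | h
  · have h' := List.isChain_iff_getElem.mp hch a (by omega)
    rw [get_congr C (Nat.mod_lt _ hm) h (Nat.mod_eq_of_lt h)]
    exact h'
  · have h0 : (a + 1) % C.length = 0 := by
      have : a + 1 = C.length := by omega
      rw [this, Nat.mod_self]
    have hlast : C.getLast hne = C.get ⟨C.length - 1, by omega⟩ := by
      rw [List.getLast_eq_getElem]; rfl
    have hhead : C.head hne = C.get ⟨0, hm⟩ := by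
      rw [List.head_eq_getElem_zero hne]; rfl
    have hAwrap := hwrap (C.getLast hne) (by simp [List.getLast?_eq_getLast hne])
      (C.head hne) (by simp [List.head?_eq_head hne])
    rw [hlast, hhead] at hAwrap
    rw [get_congr C (Nat.mod_lt _ hm) hm h0]
    rw [get_congr C ha (by omega) (by omega : a = C.length - 1)]
    exact hAwrap

lemma aux_insert {V : Type*} {A : V → V → Prop} {kk : ℕ} {s : Fin kk → V}
    {C : List V} (hC : IsCycleList A C) (hCs : EncountersInOrder C s)
    (hmax : ∀ C' : List V, IsCycleList A C' → EncountersInOrder C' s → C'.length ≤ C.length)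
    (q : List V) (hq : q ≠ []) (hqn : q.Nodup) (hqC : ∀ z ∈ q, z ∉ C) (hqc : q.Chain' A)
    (i j : Fin C.length) (hij : (j : ℕ) = ((i : ℕ) + 1) % C.length)
    (h1 : A (C.get i) (q.head hq)) (h2 : A (q.getLast hq) (C.get j)) : False := by
  have hlen2 : 2 ≤ C.length := hC.1
  have hm : 0 < C.length := by omega
  have hK := cyc_edge hC hm
  obtain ⟨ri, hriv⟩ : ∃ ri, ri = ((i : ℕ) + 1) % C.length := ⟨_, rfl⟩
  have hri : ri < C.length := by rw [hriv]; exact Nat.mod_lt _ hm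
  have hDne : C.rotate ri ≠ [] := rot_ne_nil C ri hm
  have hDlen : (C.rotate ri).length = C.length := List.length_rotate C ri
  have hDlast : (C.rotate ri).getLast hDne = C.get i := by
    rw [rot_last C ri hm]
    refine get_congr C _ i.isLt ?_
    rw [hriv]
    conv_lhs => rw [Nat.add_mod, Nat.mod_mod_of_dvd _ dvd_rfl, ← Nat.add_mod]
    have e2 : C.length - 1 + ((i : ℕ) + 1) = C.length + (i : ℕ) := by omega
    rw [e2, Nat.add_mod, Nat.mod_self, Nat.zero_add, Nat.mod_mod_of_dvd _ dvd_rfl,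
      Nat.mod_eq_of_lt i.isLt]
  have hDhead : (C.rotate ri).head hDne = C.get j := by
    rw [rot_head C ri hm hri]
    exact get_congr C _ j.isLt (by rw [hriv, hij])
  have hchD : (C.rotate ri).Chain' A := rot_chain' C hm hK ri
  have hq0 : 0 < q.length := List.length_pos_iff.mpr hq
  -- the new longer cycle
  have hC'cyc : IsCycleList A (C.rotate ri ++ q) := by
    refine ⟨?_, ?_, ?_, ?_⟩
    · rw [List.length_append, hDlen]; omega
    · refine List.Nodup.append ((List.nodup_rotate).mpr hC.2.1) hqn ?_
      intro z hzD hzq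
      exact hqC z hzq ((List.mem_rotate).mp hzD)
    · refine List.IsChain.append hchD hqc ?_
      intro x hx y hy
      rw [List.getLast?_eq_getLast hDne] at hx
      rw [List.head?_eq_head hq] at hy
      simp only [Option.mem_some_iff] at hx hy
      subst hx; subst hy
      rw [hDlast]
      exact h1
    · intro a ha b hb
      rw [List.getLast?_append_of_ne_nil _ hq, List.getLast?_eq_getLast hq] at ha
      rw [List.head?_append_of_ne_nil _ hDne, List.head?_eq_head hDne] at hb
      simp only [Option.mem_some_iff] at ha hb
      subst ha; subst hb
      rw [hDhead]
      exact h2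
  have hC'enc : EncountersInOrder (C.rotate ri ++ q) s := by
    obtain ⟨r₀, hsub⟩ := hCs
    obtain ⟨t', ht'v⟩ : ∃ t', t' = (C.length - ri + r₀) % C.length := ⟨_, rfl⟩
    have ht'm : t' < C.length := by rw [ht'v]; exact Nat.mod_lt _ hm
    have hrot2 : (C.rotate ri).rotate t' = C.rotate r₀ := by
      rw [ht'v]
      have h5 : (C.length - ri + r₀) % C.length = (C.length - ri + r₀) % (C.rotate ri).length := by
        rw [hDlen]
      rw [h5, List.rotate_mod, List.rotate_rotate]
      have e : ri + (C.length - ri + r₀) = C.length + r₀ := by omega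
      have hfix : (C.rotate r₀).rotate C.length = C.rotate r₀ := by
        rw [show C.length = (C.rotate r₀).length from (List.length_rotate _ _).symm,
          List.rotate_length]
      rw [e, Nat.add_comm, ← List.rotate_rotate, hfix]
    have hsub2 : List.Sublist (List.ofFn s) ((C.rotate ri).rotate t') := by
      rw [hrot2]; exact hsub
    refine ⟨t', ?_⟩
    have hsplit : (C.rotate ri ++ q).rotate t'
        = ((C.rotate ri).drop t' ++ q) ++ (C.rotate ri).take t' := by
      rw [List.rotate_eq_drop_append_take (by rw [List.length_append, hDlen]; omega)]
      rw [List.drop_append_of_le_length (by rw [hDlen]; omega),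
        List.take_append_of_le_length (by rw [hDlen]; omega)]
    rw [hsplit]
    have hsplitD : (C.rotate ri).rotate t'
        = (C.rotate ri).drop t' ++ (C.rotate ri).take t' :=
      List.rotate_eq_drop_append_take (by rw [hDlen]; omega)
    rw [hsplitD] at hsub2
    refine hsub2.trans ?_
    rw [List.append_assoc]
    exact ((List.sublist_append_right q ((C.rotate ri).take t')).append_left
      ((C.rotate ri).drop t'))
  have hle := hmax (C.rotate ri ++ q) hC'cyc hC'enc
  rw [List.length_append, hDlen] at hle
  omega

open Finset

lemma pos_card {V : Type*} [Fintype V] [DecidableEq V] (C : List V) (hnd : C.Nodup)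
    (P : V → Prop) [DecidablePred P] :
    (Finset.univ.filter fun u => u ∈ C ∧ P u).card
      = (Finset.univ.filter fun i : Fin C.length => P (C.get i)).card := by
  symm
  apply Finset.card_bij (fun (i : Fin C.length) (_ : i ∈ Finset.univ.filter fun i => P (C.get i)) => C.get i)
  · intro i hi
    simp only [mem_filter, mem_univ, true_and] at hi ⊢
    exact ⟨C.get_mem i, hi⟩
  · intro i₁ h₁ i₂ h₂ h
    exact List.nodup_iff_injective_get.mp hnd h
  · intro u hu
    simp only [mem_filter, mem_univ, true_and] at hu
    obtain ⟨i, hi⟩ := List.mem_iff_get.mp hu.1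
    refine ⟨i, ?_, hi⟩
    simp only [mem_filter, mem_univ, true_and]
    rw [hi]
    exact hu.2

lemma split_card {V : Type*} [Fintype V] [DecidableEq V] (C : List V)
    (P : V → Prop) [DecidablePred P] :
    (Finset.univ.filter P).card
      = (Finset.univ.filter fun u => u ∈ C ∧ P u).card
        + (Finset.univ.filter fun u => u ∉ C ∧ P u).card := by
  rw [← Finset.card_union_of_disjoint]
  · congr 1
    ext u
    simp only [mem_filter, mem_union, mem_univ, true_and]
    tauto
  · rw [Finset.disjoint_left]
    intro u hu hu'
    simp only [mem_filter, mem_univ, true_and] at hu hu'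
    exact hu'.1 hu.1

lemma mem_card {V : Type*} [Fintype V] [DecidableEq V] (C : List V) (hnd : C.Nodup) :
    (Finset.univ.filter fun u => u ∈ C).card = C.length := by
  have h : Finset.univ.filter (fun u => u ∈ C) = C.toFinset := by
    ext u; simp
  rw [h, List.toFinset_card_of_nodup hnd]




/-- Lemma (lowdegH): if $v \in H$ has $d^-_H(v)+d^+_H(v) \le |H|+k-1$ then for
distinct $x_1,x_2 \in T$ and $y_1,y_2 \in F$ we have $x_1v,vy_1 \in E$ or
$x_2v,vy_2 \in E$. -/
theorem low_degree_vertex_in_H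
    {V : Type*} [Fintype V] [DecidableEq V]
    (A : V → V → Prop) [DecidableRel A] (hirr : Irreflexive A)
    (n k : ℕ) (hn : n = Fintype.card V) (hk : 3 ≤ k)
    (hdeg : ∀ v : V, (n + k + 1) / 2 - 1 ≤ (Finset.univ.filter fun w => A v w).card ∧
                     (n + k + 1) / 2 - 1 ≤ (Finset.univ.filter fun w => A w v).card)
    (s : Fin k → V) (hs : Function.Injective s)
    (C : List V) (hC : IsCycleList A C) (hCs : EncountersInOrder C s)
    (hmax : ∀ C' : List V, IsCycleList A C' → EncountersInOrder C' s → C'.length ≤ C.length)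
    (hnotHam : ∃ v : V, v ∉ C)
    (v : V) (hv : v ∉ C)
    (hvdeg : (Finset.univ.filter fun u => u ∉ C ∧ A u v).card +
             (Finset.univ.filter fun u => u ∉ C ∧ A v u).card ≤
             (Finset.univ.filter fun u => (u ∉ C : Prop)).card + k - 1)
    (x₁ x₂ y₁ y₂ : V) (hdist : ([x₁, x₂, y₁, y₂] : List V).Nodup)
    (hx₁ : x₁ ∈ C ∧ ∃ h, h ∉ C ∧ A x₁ h) (hx₂ : x₂ ∈ C ∧ ∃ h, h ∉ C ∧ A x₂ h)
    (hy₁ : y₁ ∈ C ∧ ∃ h, h ∉ C ∧ A h y₁) (hy₂ : y₂ ∈ C ∧ ∃ h, h ∉ C ∧ A h y₂) :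
    (A x₁ v ∧ A v y₁) ∨ (A x₂ v ∧ A v y₂) := by
  classical
  have hm2 : 2 ≤ C.length := hC.1
  have hm : 0 < C.length := by omega
  haveI : NeZero C.length := ⟨by omega⟩
  have hnd : C.Nodup := hC.2.1
  have hsucc : ∀ i : Fin C.length, ((i + 1 : Fin C.length) : ℕ) = ((i : ℕ) + 1) % C.length := by
    intro i
    rw [Fin.add_def, Fin.val_one', Nat.one_mod_eq_one.mpr (by omega)]
  -- T1 : path through H inserted into an arc of C gives a contradiction
  have T1 : ∀ u z : V, u ∉ C → z ∉ C →
      Relation.ReflTransGen (fun a b => a ∉ C ∧ b ∉ C ∧ A a b) u z →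
      ∀ i : Fin C.length, A (C.get i) u → A z (C.get (i + 1)) → False := by
    intro u z hu hz hr i hAu hAz
    obtain ⟨l, hl, hlast⟩ := List.exists_isChain_cons_of_relationReflTransGen hr
    have hch' : (u :: l).Chain' (fun a b => a ∉ C ∧ b ∉ C ∧ A a b) := hl
    have hmemaux : ∀ (l' : List V) (w : V),
        List.Chain (fun a b => a ∉ C ∧ b ∉ C ∧ A a b) w l' → ∀ x ∈ l', x ∉ C := by
      intro l'
      induction l' with
      | nil => intro w hch x hx; simp at hx
      | cons c t ih =>
        intro w hch x hx
        rcases List.mem_cons.mp hx with rfl | hx2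
        · exact (List.chain_cons.mp hch).1.2.1
        · exact ih c (List.chain_cons.mp hch).2 x hx2
    have hmem : ∀ x ∈ u :: l, x ∉ C := by
      intro x hx
      rcases List.mem_cons.mp hx with rfl | hx2
      · exact hu
      · exact hmemaux l u hl x hx2
    obtain ⟨L', hL'ne, hL'ch, hL'nd, hhead, hlast', hsubL⟩ :=
      aux_dedup (u :: l) (List.cons_ne_nil u l) hch'
    have hLhead : L'.head hL'ne = u := by
      have h1 : some (L'.head hL'ne) = some u := by
        rw [← List.head?_eq_head hL'ne, hhead]; rfl
      exact Option.some.inj h1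
    have hLlast : L'.getLast hL'ne = z := by
      have h1 : some (L'.getLast hL'ne) = some z := by
        rw [← List.getLast?_eq_getLast hL'ne, hlast',
          List.getLast?_eq_getLast (List.cons_ne_nil u l), hlast]
      exact Option.some.inj h1
    have hAchain : L'.Chain' A := hL'ch.imp (fun a b h => h.2.2)
    have hnotC : ∀ x ∈ L', x ∉ C := fun x hx => hmem x (hsubL x hx)
    exact aux_insert hC hCs hmax L' hL'ne hL'nd hnotC hAchain i (i + 1) (hsucc i)
      (by rw [hLhead]; exact hAu) (by rw [hLlast]; exact hAz)
  -- degree splitting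
  have din_split : ∀ w : V, (Finset.univ.filter fun u => A u w).card
      = (Finset.univ.filter fun i : Fin C.length => A (C.get i) w).card
        + (Finset.univ.filter fun u => u ∉ C ∧ A u w).card := by
    intro w
    rw [split_card C (fun u => A u w), pos_card C hnd (fun u => A u w)]
  have dout_split : ∀ w : V, (Finset.univ.filter fun u => A w u).card
      = (Finset.univ.filter fun i : Fin C.length => A w (C.get i)).card
        + (Finset.univ.filter fun u => u ∉ C ∧ A w u).card := by
    intro w
    rw [split_card C (fun u => A w u), pos_card C hnd (fun u => A w u)]
  have hH : (Finset.univ.filter fun u => (u ∉ C : Prop)).card + C.length = n := by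
    have h0 := Finset.card_filter_add_card_filter_not
      (s := (Finset.univ : Finset V)) (p := fun u => u ∈ C)
    rw [mem_card C hnd, Finset.card_univ, ← hn] at h0
    omega
  have hδ : n + k ≤ 2 * ((n + k + 1) / 2 - 1) + 2 := by
    have hnk : 2 ≤ n + k := by omega
    omega
  -- pair counting
  have pairCard : ∀ u z : V, u ∉ C → z ∉ C →
      Relation.ReflTransGen (fun a b => a ∉ C ∧ b ∉ C ∧ A a b) u z →
      (Finset.univ.filter fun i : Fin C.length => A (C.get i) u).card
        + (Finset.univ.filter fun i : Fin C.length => A z (C.get i)).card ≤ C.length := by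
    intro u z hu hz hr
    have hdisj : Disjoint
        (((Finset.univ.filter fun i : Fin C.length => A (C.get i) u)).image (· + 1))
        (Finset.univ.filter fun i : Fin C.length => A z (C.get i)) := by
      rw [Finset.disjoint_left]
      rintro a ha hb
      simp only [Finset.mem_image, Finset.mem_filter, Finset.mem_univ, true_and] at ha hb
      obtain ⟨i0, hi0, rfl⟩ := ha
      exact T1 u z hu hz hr i0 hi0 hb
    have e1 : (Finset.univ.filter fun i : Fin C.length => A (C.get i) u).card
        = (((Finset.univ.filter fun i : Fin C.length => A (C.get i) u)).image (· + 1)).card :=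
      (Finset.card_image_of_injective _ (add_left_injective 1)).symm
    rw [e1, ← Finset.card_union_of_disjoint hdisj]
    calc _ ≤ (Finset.univ : Finset (Fin C.length)).card :=
          Finset.card_le_card (Finset.subset_univ _)
      _ = C.length := by rw [Finset.card_univ, Fintype.card_fin]
  -- Strong connectivity of H
  have SC : ∀ h h' : V, h ∉ C → h' ∉ C →
      Relation.ReflTransGen (fun a b => a ∉ C ∧ b ∉ C ∧ A a b) h h' := by
    intro h h' hh hh'
    by_contra hnr
    set Rh := Finset.univ.filter
      (fun z => z ∉ C ∧ Relation.ReflTransGen (fun a b => a ∉ C ∧ b ∉ C ∧ A a b) h z) with hRh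
    set Rv := Finset.univ.filter
      (fun z => z ∉ C ∧ Relation.ReflTransGen (fun a b => a ∉ C ∧ b ∉ C ∧ A a b) h' z) with hRv
    have hhRh : h ∈ Rh := by
      rw [hRh, Finset.mem_filter]
      exact ⟨Finset.mem_univ _, hh, Relation.ReflTransGen.refl⟩
    have hh'Rv : h' ∈ Rv := by
      rw [hRv, Finset.mem_filter]
      exact ⟨Finset.mem_univ _, hh', Relation.ReflTransGen.refl⟩
    have hclRh : ∀ z u', z ∈ Rh → u' ∉ C → A z u' → u' ∈ Rh := by
      intro z u' hz hu' hA
      rw [hRh, Finset.mem_filter] at hz ⊢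
      exact ⟨Finset.mem_univ _, hu', hz.2.2.tail ⟨hz.2.1, hu', hA⟩⟩
    have hclRv : ∀ z u', z ∈ Rv → u' ∉ C → A z u' → u' ∈ Rv := by
      intro z u' hz hu' hA
      rw [hRv, Finset.mem_filter] at hz ⊢
      exact ⟨Finset.mem_univ _, hu', hz.2.2.tail ⟨hz.2.1, hu', hA⟩⟩
    have hh'nRh : h' ∉ Rh := by
      intro hmem
      rw [hRh, Finset.mem_filter] at hmem
      exact hnr hmem.2.2
    -- generic out-neighbour bound
    have outb : ∀ (Rs : Finset V), (∀ z u', z ∈ Rs → u' ∉ C → A z u' → u' ∈ Rs) →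
        ∀ z ∈ Rs, (Finset.univ.filter fun u => u ∉ C ∧ A z u).card + 1 ≤ Rs.card := by
      intro Rs hcl z hz
      have hsubE : (Finset.univ.filter fun u => u ∉ C ∧ A z u) ⊆ Rs.erase z := by
        intro u hu
        simp only [Finset.mem_filter, Finset.mem_univ, true_and] at hu
        rw [Finset.mem_erase]
        refine ⟨?_, hcl z u hz hu.1 hu.2⟩
        intro he
        exact hirr z (he ▸ hu.2)
      have h1 := Finset.card_le_card hsubE
      rw [Finset.card_erase_of_mem hz] at h1
      have hpos : 0 < Rs.card := Finset.card_pos.mpr ⟨z, hz⟩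
      omega
    -- generic in-neighbour bound
    have inb : ∀ (Rs : Finset V) (w : V), w ∉ C → w ∉ Rs →
        (∀ u ∈ Rs, u ∉ C) → (∀ u, u ∉ C → A u w → u ∉ Rs) →
        (Finset.univ.filter fun u => u ∉ C ∧ A u w).card + Rs.card + 1
          ≤ (Finset.univ.filter fun u => (u ∉ C : Prop)).card := by
      intro Rs w hwC hwR hRsC hcl
      have hdisj : Disjoint (Finset.univ.filter fun u => u ∉ C ∧ A u w) Rs := by
        rw [Finset.disjoint_left]
        intro u hu hu'
        simp only [Finset.mem_filter, Finset.mem_univ, true_and] at hu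
        exact hcl u hu.1 hu.2 hu'
      have hwnotin : w ∉ (Finset.univ.filter fun u => u ∉ C ∧ A u w) ∪ Rs := by
        rw [Finset.mem_union]
        rintro (hw1 | hw2)
        · simp only [Finset.mem_filter, Finset.mem_univ, true_and] at hw1
          exact hirr w hw1.2
        · exact hwR hw2
      have hsub2 : insert w ((Finset.univ.filter fun u => u ∉ C ∧ A u w) ∪ Rs)
          ⊆ Finset.univ.filter fun u => (u ∉ C : Prop) := by
        intro u hu
        rw [Finset.mem_insert] at hu
        simp only [Finset.mem_filter, Finset.mem_univ, true_and]
        rcases hu with rfl | hu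
        · exact hwC
        · rw [Finset.mem_union] at hu
          rcases hu with hu | hu
          · simp only [Finset.mem_filter, Finset.mem_univ, true_and] at hu
            exact hu.1
          · exact hRsC u hu
      have h1 := Finset.card_le_card hsub2
      rw [Finset.card_insert_of_notMem hwnotin, Finset.card_union_of_disjoint hdisj] at h1
      omega
    have hRhC : ∀ u ∈ Rh, u ∉ C := by
      intro u hu; rw [hRh, Finset.mem_filter] at hu; exact hu.2.1
    have hRvC : ∀ u ∈ Rv, u ∉ C := by
      intro u hu; rw [hRv, Finset.mem_filter] at hu; exact hu.2.1
    have hinb_h' : (Finset.univ.filter fun u => u ∉ C ∧ A u h').card + Rh.card + 1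
        ≤ (Finset.univ.filter fun u => (u ∉ C : Prop)).card := by
      refine inb Rh h' hh' hh'nRh hRhC ?_
      intro u huC hA hu
      exact hh'nRh (hclRh u h' hu hh' hA)
    have hnRvh : h ∉ Rv := by
      intro hmem
      rw [hRv, Finset.mem_filter] at hmem
      have hp := pairCard h' h hh' hh hmem.2.2
      have d1 := (hdeg h').2
      rw [din_split h'] at d1
      have d2 := (hdeg h).1
      rw [dout_split h] at d2
      have b2 := outb Rh hclRh h hhRh
      omega
    have hinb_h : (Finset.univ.filter fun u => u ∉ C ∧ A u h).card + Rv.card + 1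
        ≤ (Finset.univ.filter fun u => (u ∉ C : Prop)).card := by
      refine inb Rv h hh hnRvh hRvC ?_
      intro u huC hA hu
      exact hnRvh (hclRv u h hu hh hA)
    have hp1 := pairCard h h hh hh Relation.ReflTransGen.refl
    have hp2 := pairCard h' h' hh' hh' Relation.ReflTransGen.refl
    have din_h := (hdeg h).2
    rw [din_split h] at din_h
    have dout_h := (hdeg h).1
    rw [dout_split h] at dout_h
    have din_h' := (hdeg h').2
    rw [din_split h'] at din_h'
    have dout_h' := (hdeg h').1
    rw [dout_split h'] at dout_h'
    have b_out_h := outb Rh hclRh h hhRh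
    have b_out_h' := outb Rv hclRv h' hh'Rv
    omega
  -- the FT property
  have FT : ∀ (iT jF : Fin C.length), (∃ hh, hh ∉ C ∧ A (C.get iT) hh) →
      (∃ hh, hh ∉ C ∧ A hh (C.get jF)) → jF = iT + 1 → False := by
    rintro iT jF ⟨a, haC, haA⟩ ⟨b, hbC, hbA⟩ hEq
    subst hEq
    exact T1 a b haC hbC (SC a b haC hbC) iT haA hbA
  -- the exceptional set B
  have hdisjPQ : Disjoint
      (((Finset.univ.filter fun i : Fin C.length => A (C.get i) v)).image (· + 1))
      (Finset.univ.filter fun i : Fin C.length => A v (C.get i)) := by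
    rw [Finset.disjoint_left]
    rintro a ha hb
    simp only [Finset.mem_image, Finset.mem_filter, Finset.mem_univ, true_and] at ha hb
    obtain ⟨i0, hi0, rfl⟩ := ha
    exact T1 v v hv hv Relation.ReflTransGen.refl i0 hi0 hb
  have hPQbig : C.length ≤ (Finset.univ.filter fun i : Fin C.length => A (C.get i) v).card
      + (Finset.univ.filter fun i : Fin C.length => A v (C.get i)).card + 1 := by
    have d1 := (hdeg v).2
    rw [din_split v] at d1
    have d2 := (hdeg v).1
    rw [dout_split v] at d2
    omega
  have hBcard : ((Finset.univ : Finset (Fin C.length)) \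
      (((Finset.univ.filter fun i : Fin C.length => A (C.get i) v)).image (· + 1)
        ∪ (Finset.univ.filter fun i : Fin C.length => A v (C.get i)))).card ≤ 1 := by
    have hcu : ((((Finset.univ.filter fun i : Fin C.length => A (C.get i) v)).image (· + 1))
        ∪ (Finset.univ.filter fun i : Fin C.length => A v (C.get i))).card
        = (Finset.univ.filter fun i : Fin C.length => A (C.get i) v).card
          + (Finset.univ.filter fun i : Fin C.length => A v (C.get i)).card := by
      rw [Finset.card_union_of_disjoint hdisjPQ,
        Finset.card_image_of_injective _ (add_left_injective 1)]
    rw [Finset.card_sdiff_of_subset (Finset.subset_univ _), Finset.card_univ, Fintype.card_fin, hcu]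
    omega
  have claimX : ∀ i : Fin C.length, (∃ hh, hh ∉ C ∧ A (C.get i) hh) → ¬ A (C.get i) v →
      (i + 1) ∈ (Finset.univ : Finset (Fin C.length)) \
      (((Finset.univ.filter fun i : Fin C.length => A (C.get i) v)).image (· + 1)
        ∪ (Finset.univ.filter fun i : Fin C.length => A v (C.get i))) := by
    intro i hw hnA
    rw [Finset.mem_sdiff]
    refine ⟨Finset.mem_univ _, ?_⟩
    rw [Finset.mem_union]
    rintro (hmem | hmem)
    · obtain ⟨i0, hi0, he⟩ := Finset.mem_image.mp hmem
      have hii : i0 = i := by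
        have : i0 + 1 = i + 1 := he
        exact add_right_cancel this
      subst hii
      simp only [Finset.mem_filter, Finset.mem_univ, true_and] at hi0
      exact hnA hi0
    · simp only [Finset.mem_filter, Finset.mem_univ, true_and] at hmem
      exact FT i (i + 1) hw ⟨v, hv, hmem⟩ rfl
  have claimY : ∀ j : Fin C.length, (∃ hh, hh ∉ C ∧ A hh (C.get j)) → ¬ A v (C.get j) →
      j ∈ (Finset.univ : Finset (Fin C.length)) \
      (((Finset.univ.filter fun i : Fin C.length => A (C.get i) v)).image (· + 1)
        ∪ (Finset.univ.filter fun i : Fin C.length => A v (C.get i))) := by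
    intro j hw hnA
    rw [Finset.mem_sdiff]
    refine ⟨Finset.mem_univ _, ?_⟩
    rw [Finset.mem_union]
    rintro (hmem | hmem)
    · obtain ⟨i0, hi0, he⟩ := Finset.mem_image.mp hmem
      simp only [Finset.mem_filter, Finset.mem_univ, true_and] at hi0
      exact FT i0 j ⟨v, hv, hi0⟩ hw (by rw [← he])
    · simp only [Finset.mem_filter, Finset.mem_univ, true_and] at hmem
      exact hnA hmem
  -- positions of the four vertices
  obtain ⟨i1, hgi1⟩ := List.mem_iff_get.mp hx₁.1
  obtain ⟨i2, hgi2⟩ := List.mem_iff_get.mp hx₂.1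
  obtain ⟨j1, hgj1⟩ := List.mem_iff_get.mp hy₁.1
  obtain ⟨j2, hgj2⟩ := List.mem_iff_get.mp hy₂.1
  have hx12 : x₁ ≠ x₂ := by
    intro he
    simp [he] at hdist
  have hy12 : y₁ ≠ y₂ := by
    intro he
    simp [he] at hdist
  -- endgame
  by_contra hgoal
  push_neg at hgoal
  obtain ⟨hg1, hg2⟩ := hgoal
  have huniq := Finset.card_le_one.mp hBcard
  rcases Decidable.em (A x₁ v) with hax1 | hax1
  · have hny1 : ¬ A v y₁ := hg1 hax1
    have hb1 := claimY j1 (by rw [hgj1]; exact hy₁.2) (by rw [hgj1]; exact hny1)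
    rcases Decidable.em (A x₂ v) with hax2 | hax2
    · have hny2 : ¬ A v y₂ := hg2 hax2
      have hb2 := claimY j2 (by rw [hgj2]; exact hy₂.2) (by rw [hgj2]; exact hny2)
      have he : j1 = j2 := huniq _ hb1 _ hb2
      exact hy12 (by rw [← hgj1, ← hgj2, he])
    · have hb2 := claimX i2 (by rw [hgi2]; exact hx₂.2) (by rw [hgi2]; exact hax2)
      have he : j1 = i2 + 1 := huniq _ hb1 _ hb2
      exact FT i2 j1 (by rw [hgi2]; exact hx₂.2) (by rw [hgj1]; exact hy₁.2) he
  · have hb1 := claimX i1 (by rw [hgi1]; exact hx₁.2) (by rw [hgi1]; exact hax1)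
    rcases Decidable.em (A x₂ v) with hax2 | hax2
    · have hny2 : ¬ A v y₂ := hg2 hax2
      have hb2 := claimY j2 (by rw [hgj2]; exact hy₂.2) (by rw [hgj2]; exact hny2)
      have he : j2 = i1 + 1 := huniq _ hb2 _ hb1
      exact FT i1 j2 (by rw [hgi1]; exact hx₁.2) (by rw [hgj2]; exact hy₂.2) he
    · have hb2 := claimX i2 (by rw [hgi2]; exact hx₂.2) (by rw [hgi2]; exact hax2)
      have he : i1 + 1 = i2 + 1 := huniq _ hb1 _ hb2
      have he2 : i1 = i2 := add_right_cancel he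
      exact hx12 (by rw [← hgi1, ← hgi2, he2])
end

section
/- Under the setup of a longest S-cycle C (δ⁰(D) ≥ ⌈(n+k)/2⌉ - 1, k ≥ 3, C not Hamiltonian, H outside C), let T_3 be the set of vertices on C sending edges to at least 3 vertices of H. Then |T_3| ≥ (n-k)/2 - |H|. Similarly for F_3, the set of vertices on C receiving edges from at least 3 vertices of H: |F_3| ≥ (n-k)/2 - |H|. -/
namespace T3F3

theorem isCycleList_rotate {V : Type*} {A : V → V → Prop} {l : List V}
    (h : IsCycleList A l) (n : ℕ) : IsCycleList A (l.rotate n) := by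
  have one : ∀ l' : List V, IsCycleList A l' → IsCycleList A (l'.rotate 1) := by
    rintro l' ⟨hlen, hnd, hch, hlh⟩
    match l', hlen with
    | a :: b :: xs, _ =>
      have hrot : (a :: b :: xs).rotate 1 = (b :: xs) ++ [a] := by
        rw [List.rotate_cons_succ, List.rotate_zero]
      rw [hrot]
      have hab : A a b := (List.isChain_cons_cons.mp hch).1
      refine ⟨by simp, ?_, ?_, ?_⟩
      · exact ((List.perm_append_singleton a (b :: xs)).symm).nodup hnd
      · show List.IsChain _ _; rw [List.isChain_append]
        refine ⟨(List.isChain_cons_cons.mp hch).2, by simp, ?_⟩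
        intro x hx y hy
        simp only [List.head?_cons, Option.mem_def, Option.some.injEq] at hy
        subst hy
        exact hlh x (by simpa using hx) a rfl
      · intro x hx y hy
        rw [List.getLast?_concat] at hx
        simp only [Option.mem_def, Option.some.injEq] at hx
        subst hx
        simp only [List.cons_append, List.head?_cons, Option.mem_def, Option.some.injEq] at hy
        subst hy
        exact hab
  induction n with
  | zero => simpa using h
  | succ n ih =>
    have e : l.rotate (n + 1) = (l.rotate n).rotate 1 := by
      rw [List.rotate_rotate]
    rw [e]; exact one _ ih

theorem cycle_pos_len {V : Type*} {A : V → V → Prop} {l : List V}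
    (h : IsCycleList A l) : 0 < l.length := lt_of_lt_of_le (by norm_num) h.1

theorem cycle_get_edge {V : Type*} {A : V → V → Prop} {l : List V}
    (h : IsCycleList A l) (i : Fin l.length) :
    A (l.get i) (l.get ⟨(↑i + 1) % l.length, Nat.mod_lt _ (cycle_pos_len h)⟩) := by
  have hne : l ≠ [] := by
    intro e; rw [e] at i; exact absurd i.2 (by simp)
  rcases lt_or_ge ((i : ℕ) + 1) l.length with hlt | hge
  · have e : (⟨(↑i + 1) % l.length, Nat.mod_lt _ (cycle_pos_len h)⟩ : Fin l.length)
        = ⟨↑i + 1, hlt⟩ := Fin.ext (Nat.mod_eq_of_lt hlt)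
    rw [e]
    exact List.isChain_iff_getElem.mp h.2.2.1 i (by omega)
  · have hieq : (i : ℕ) = l.length - 1 := by have := i.2; omega
    have hmod : (↑i + 1) % l.length = 0 := by
      have : (i : ℕ) + 1 = l.length := by have := i.2; omega
      rw [this, Nat.mod_self]
    have e2 : (⟨(↑i + 1) % l.length, Nat.mod_lt _ (cycle_pos_len h)⟩ : Fin l.length)
        = ⟨0, cycle_pos_len h⟩ := Fin.ext hmod
    rw [e2]
    have hlast : l.get i = l.getLast hne := by
      rw [List.getLast_eq_getElem]; exact congrArg l.get (Fin.ext hieq)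
    have hhead : l.get ⟨0, cycle_pos_len h⟩ = l.head hne := List.get_mk_zero _
    rw [hlast, hhead]
    exact h.2.2.2 _ (List.getLast?_eq_getLast hne ▸ rfl) _ (List.head?_eq_head hne ▸ rfl)

/-- walk-to-path extraction within the complement of `C` -/
theorem exists_path {V : Type*} (A : V → V → Prop) (C : List V) {x y : V}
    (h : Relation.ReflTransGen (fun a b => a ∉ C ∧ b ∉ C ∧ A a b) x y) (hx : x ∉ C) :
    ∃ L : List V, L ≠ [] ∧ L.Nodup ∧ L.Chain' A ∧ L.head? = some x ∧
      L.getLast? = some y ∧ ∀ z ∈ L, z ∉ C := by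
  induction h using Relation.ReflTransGen.head_induction_on with
  | refl => exact ⟨[y], by simp, by simp, .singleton _, rfl, rfl, by simpa using hx⟩
  | @head a c hac hcy ih =>
    obtain ⟨ha, hc, hA⟩ := hac
    obtain ⟨L, hL0, hLnd, hLch, hLh, hLl, hLmem⟩ := ih hc
    by_cases haL : a ∈ L
    · obtain ⟨l₁, l₂, rfl⟩ := List.append_of_mem haL
      refine ⟨a :: l₂, by simp, ?_, ?_, rfl, ?_, ?_⟩
      · exact hLnd.sublist (List.sublist_append_right l₁ (a :: l₂))
      · exact (List.isChain_append.mp hLch).2.1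
      · rw [List.getLast?_append_of_ne_nil _ (by simp)] at hLl; exact hLl
      · intro z hz; exact hLmem z (by simp only [List.mem_append]; right; exact hz)
    · refine ⟨a :: L, by simp, by simp [hLnd, haL], ?_, rfl, ?_, ?_⟩
      · show List.IsChain _ _; rw [List.isChain_cons]
        refine ⟨?_, hLch⟩
        intro ych hy
        rw [hLh] at hy
        simp only [Option.mem_def, Option.some.injEq] at hy
        subst hy; exact hA
      · cases L with
        | nil => exact absurd rfl hL0
        | cons b t => simpa using hLl
      · intro z hz
        rcases List.mem_cons.mp hz with rfl | hz
        · exact ha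
        · exact hLmem z hz


theorem no_detour {V : Type*} {k : ℕ} {A : V → V → Prop} {C : List V} {s : Fin k → V}
    (hC : IsCycleList A C) (hCs : EncountersInOrder C s)
    (hmax : ∀ C' : List V, IsCycleList A C' → EncountersInOrder C' s → C'.length ≤ C.length)
    (i : Fin C.length) (L : List V) (hL0 : L ≠ []) (hnd : L.Nodup) (hch : L.Chain' A)
    (hmem : ∀ z ∈ L, z ∉ C)
    (hin : ∀ w ∈ L.head?, A (C.get i) w)
    (hout : ∀ w ∈ L.getLast?,
      A w (C.get ⟨((i : ℕ) + 1) % C.length, Nat.mod_lt _ (cycle_pos_len hC)⟩)) :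
    False := by
  have hc0 : 0 < C.length := cycle_pos_len hC
  have hc2 : 2 ≤ C.length := hC.1
  set j : ℕ := ((i : ℕ) + 1) % C.length with hj
  have hjc : j < C.length := Nat.mod_lt _ hc0
  set Cf := C.rotate j with hCfdef
  have hCfcyc : IsCycleList A Cf := isCycleList_rotate hC j
  have hCflen : Cf.length = C.length := by rw [hCfdef, List.length_rotate]
  have hCfne : Cf ≠ [] := by
    intro e; rw [e] at hCflen; simp at hCflen; omega
  have hgetCf : ∀ (a : ℕ) (ha : a < Cf.length),
      Cf.get ⟨a, ha⟩ = C.get ⟨(a + j) % C.length, Nat.mod_lt _ hc0⟩ := by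
    intro a ha
    exact List.get_rotate C j ⟨a, ha⟩
  have h0 : (0 : ℕ) < Cf.length := by omega
  have hhead : Cf.head? = some (C.get ⟨j, hjc⟩) := by
    rw [List.head?_eq_head hCfne, ← List.get_mk_zero h0, hgetCf 0 h0]
    have : ((0 + j) % C.length) = j := by simpa using Nat.mod_eq_of_lt hjc
    congr 1
    exact congrArg C.get (Fin.ext this)
  have hwrap : (C.length - 1 + j) % C.length = (i : ℕ) := by
    have hi := i.2
    rcases lt_or_ge ((i : ℕ) + 1) C.length with h1 | h1
    · have hjeq : j = (i : ℕ) + 1 := by rw [hj]; exact Nat.mod_eq_of_lt h1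
      rw [hjeq, show C.length - 1 + ((i : ℕ) + 1) = (i : ℕ) + C.length by omega,
        Nat.add_mod_right, Nat.mod_eq_of_lt hi]
    · have hieq : (i : ℕ) + 1 = C.length := by omega
      have hj0 : j = 0 := by rw [hj, hieq, Nat.mod_self]
      rw [hj0, Nat.add_zero, Nat.mod_eq_of_lt (by omega)]
      omega
  have hml : Cf.length - 1 < Cf.length := by omega
  have hlastCf : Cf.getLast? = some (C.get i) := by
    rw [List.getLast?_eq_getLast hCfne, List.getLast_eq_getElem hCfne,
      show Cf[Cf.length - 1] = Cf.get ⟨Cf.length - 1, hml⟩ from rfl, hgetCf (Cf.length - 1) hml]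
    congr 1
    apply congrArg C.get
    apply Fin.ext
    show (Cf.length - 1 + j) % C.length = (i : ℕ)
    rw [hCflen, hwrap]
  have hdisj : Cf.Disjoint L := by
    rw [List.disjoint_left]
    intro a haCf haL
    exact hmem a haL (by rw [hCfdef] at haCf; exact List.mem_rotate.mp haCf)
  have cyc' : IsCycleList A (Cf ++ L) := by
    refine ⟨?_, ?_, ?_, ?_⟩
    · rw [List.length_append]; omega
    · exact hCfcyc.2.1.append hnd hdisj
    · show List.IsChain _ _; rw [List.isChain_append]
      refine ⟨hCfcyc.2.2.1, hch, ?_⟩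
      intro x hx y hy
      rw [hlastCf] at hx
      simp only [Option.mem_def, Option.some.injEq] at hx
      subst hx
      exact hin y hy
    · intro a ha b hb
      rw [List.getLast?_append_of_ne_nil _ hL0] at ha
      rw [List.head?_append_of_ne_nil _ hCfne, hhead] at hb
      simp only [Option.mem_def, Option.some.injEq] at hb
      subst hb
      exact hout a ha
  obtain ⟨r₀, hsub⟩ := hCs
  set r₁ : ℕ := (r₀ % C.length + (C.length - j)) % C.length with hr₁def
  have hr₁ : r₁ < C.length := Nat.mod_lt _ hc0
  have hrot : C.rotate r₀ = Cf.rotate r₁ := by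
    rw [hCfdef, List.rotate_rotate]
    rw [← List.rotate_mod C r₀, ← List.rotate_mod C (j + r₁)]
    congr 1
    have m1 := (Nat.mod_modEq (r₀ % C.length + (C.length - j)) C.length).add_left j
    rw [← hr₁def] at m1
    rw [show j + (r₀ % C.length + (C.length - j)) = r₀ % C.length + C.length by omega] at m1
    have m2 : (r₀ % C.length + C.length) % C.length = r₀ % C.length := by
      rw [Nat.add_mod_right, Nat.mod_mod_of_dvd r₀ dvd_rfl]
    exact ((m1 : (j + r₁) % C.length = (r₀ % C.length + C.length) % C.length).trans m2).symm
  have hr₁le : r₁ ≤ Cf.length := by omega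
  have hdt : (Cf ++ L).rotate r₁ = (Cf.drop r₁ ++ L) ++ Cf.take r₁ := by
    rw [List.rotate_eq_drop_append_take (by rw [List.length_append]; omega),
      List.drop_append_of_le_length hr₁le, List.take_append_of_le_length hr₁le]
  have hrot_sub : List.Sublist (Cf.rotate r₁) ((Cf ++ L).rotate r₁) := by
    rw [hdt, List.rotate_eq_drop_append_take hr₁le, List.append_assoc]
    exact List.Sublist.append_left (List.sublist_append_right L (Cf.take r₁)) _
  have enc' : EncountersInOrder (Cf ++ L) s := ⟨r₁, (hrot ▸ hsub).trans hrot_sub⟩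
  have hle := hmax (Cf ++ L) cyc' enc'
  rw [List.length_append] at hle
  have : 0 < L.length := List.length_pos_iff.mpr hL0
  omega


set_option maxHeartbeats 2000000 in
theorem main_half {V : Type*} [Fintype V] [DecidableEq V]
    (A : V → V → Prop) [DecidableRel A] (hirr : Irreflexive A)
    (n k : ℕ) (hn : n = Fintype.card V) (hk : 3 ≤ k)
    (hdeg : ∀ v : V, (n + k + 1) / 2 - 1 ≤ (Finset.univ.filter fun w => A v w).card ∧
                     (n + k + 1) / 2 - 1 ≤ (Finset.univ.filter fun w => A w v).card)
    (s : Fin k → V) (hs : Function.Injective s)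
    (C : List V) (hC : IsCycleList A C) (hCs : EncountersInOrder C s)
    (hmax : ∀ C' : List V, IsCycleList A C' → EncountersInOrder C' s → C'.length ≤ C.length)
    (hnotHam : ∃ v : V, v ∉ C) :
    ((n - k : ℝ) / 2 - (Finset.univ.filter fun v => (v ∉ C : Prop)).card ≤
      ((Finset.univ.filter fun v => v ∈ C ∧
        3 ≤ (Finset.univ.filter fun h => h ∉ C ∧ A v h).card).card : ℝ)) := by
  set Hs := Finset.univ.filter fun v => (v ∉ C : Prop) with hHsdef
  set T3s := Finset.univ.filter fun v => v ∈ C ∧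
      3 ≤ (Finset.univ.filter fun h => h ∉ C ∧ A v h).card with hT3def
  classical
  set D := (n + k + 1) / 2 with hDdef
  have hc0 : 0 < C.length := cycle_pos_len hC
  have hc2 : 2 ≤ C.length := hC.1
  have hnd : C.Nodup := hC.2.1
  set Ct := C.toFinset with hCtdef
  have hCt : Ct.card = C.length := by rw [hCtdef]; exact List.toFinset_card_of_nodup hnd
  have hmemHs : ∀ v, v ∈ Hs ↔ v ∉ C := by
    intro v; rw [hHsdef]; simp
  have hmemCt : ∀ v, v ∈ Ct ↔ v ∈ C := by
    intro v; rw [hCtdef]; exact List.mem_toFinset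
  have hcleu : Ct.card ≤ n := by rw [hn]; exact Finset.card_le_univ Ct
  have hcm : C.length + Hs.card = n := by
    have h1 : Hs = Ctᶜ := by
      ext v; rw [hmemHs, Finset.mem_compl, hmemCt]
    have h2 : Hsᶜ.card = Fintype.card V - Hs.card := Finset.card_compl Hs
    have h3 : Hsᶜ = Ct := by rw [h1, compl_compl]
    rw [h3, ← hn] at h2
    omega
  have hkn : k ≤ n := by
    rw [hn, ← Fintype.card_fin k]
    exact Fintype.card_le_of_injective s hs
  set Reach := Relation.ReflTransGen (fun a b : V => a ∉ C ∧ b ∉ C ∧ A a b) with hReachdef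
  obtain ⟨v0, hv0⟩ := hnotHam
  have hv0Hs : v0 ∈ Hs := (hmemHs v0).mpr hv0
  obtain ⟨h₀, hh₀Hs, hmin⟩ :=
    Finset.exists_min_image Hs (fun h => (Hs.filter fun x => Reach x h).card) ⟨v0, hv0Hs⟩
  set Q := Hs.filter (fun x => Reach x h₀) with hQdef
  have hmemQ : ∀ x, x ∈ Q ↔ x ∈ Hs ∧ Reach x h₀ := by
    intro x; rw [hQdef]; exact Finset.mem_filter
  have hh₀Q : h₀ ∈ Q := (hmemQ h₀).mpr ⟨hh₀Hs, Relation.ReflTransGen.refl⟩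
  have hQHs : Q ⊆ Hs := by rw [hQdef]; exact Finset.filter_subset _ _
  have clQ : ∀ x ∈ Q, (Hs.filter fun y => Reach y x) = Q := by
    intro x hx
    obtain ⟨hxHs, hxR⟩ := (hmemQ x).mp hx
    apply Finset.eq_of_subset_of_card_le
    · intro y hy
      obtain ⟨hyHs, hyR⟩ := Finset.mem_filter.mp hy
      exact (hmemQ y).mpr ⟨hyHs, hyR.trans hxR⟩
    · rw [hQdef]
      exact hmin x hxHs
  set P := Hs.filter (fun y => Reach h₀ y) with hPdef
  have hmemP : ∀ x, x ∈ P ↔ x ∈ Hs ∧ Reach h₀ x := by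
    intro x; rw [hPdef]; exact Finset.mem_filter
  have hh₀P : h₀ ∈ P := (hmemP h₀).mpr ⟨hh₀Hs, Relation.ReflTransGen.refl⟩
  set g := Q.card with hgdef
  set p := P.card with hpdef
  have hg1 : 1 ≤ g := by rw [hgdef]; exact Finset.card_pos.mpr ⟨h₀, hh₀Q⟩
  have hp1 : 1 ≤ p := by rw [hpdef]; exact Finset.card_pos.mpr ⟨h₀, hh₀P⟩
  have hgm : g ≤ Hs.card := by rw [hgdef]; exact Finset.card_le_card hQHs
  have hpm : p ≤ Hs.card := by
    rw [hpdef, hPdef]; exact Finset.card_le_card (Finset.filter_subset _ _)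
  have hQC : ∀ h ∈ Q, h ∉ C := fun h hh => (hmemHs h).mp (hQHs hh)
  set S := Ct.filter (fun t => ∃ h ∈ Q, A t h) with hSdef
  have hmemS : ∀ x, x ∈ S ↔ x ∈ Ct ∧ ∃ h ∈ Q, A x h := by
    intro x; rw [hSdef]; exact Finset.mem_filter
  set R := Ct.filter (fun f => ∃ h' ∈ P, A h' f) with hRdef
  have hmemR : ∀ x, x ∈ R ↔ x ∈ Ct ∧ ∃ h' ∈ P, A h' x := by
    intro x; rw [hRdef]; exact Finset.mem_filter
  set σ : V → V := fun t =>
    if ht : t ∈ C then C.get ⟨(C.idxOf t + 1) % C.length, Nat.mod_lt _ hc0⟩ else t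
    with hσdef
  have hσval : ∀ t, t ∈ C →
      σ t = C.get ⟨(C.idxOf t + 1) % C.length, Nat.mod_lt _ hc0⟩ := by
    intro t ht; rw [hσdef]; exact dif_pos ht
  have hσC : ∀ t, t ∈ C → σ t ∈ C := by
    intro t ht; rw [hσval t ht]; exact C.get_mem _
  have hexcl : ∀ t ∈ S, σ t ∉ R := by
    intro t htS hσR
    obtain ⟨htCt, h, hhQ, hAth⟩ := (hmemS t).mp htS
    have htC : t ∈ C := (hmemCt t).mp htCt
    obtain ⟨hσCt, h', hh'P, hAh'⟩ := (hmemR (σ t)).mp hσR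
    have hhC : h ∉ C := hQC h hhQ
    have hRxh : Reach h h' := by
      have r1 : Reach h h₀ := ((hmemQ h).mp hhQ).2
      have r2 : Reach h₀ h' := ((hmemP h').mp hh'P).2
      exact r1.trans r2
    have hRxh' : Relation.ReflTransGen (fun a b : V => a ∉ C ∧ b ∉ C ∧ A a b) h h' := by
      rw [hReachdef] at hRxh; exact hRxh
    obtain ⟨L, hL0, hLnd, hLch, hLh, hLl, hLmem⟩ := exists_path A C hRxh' hhC
    have hidx : C.idxOf t < C.length := List.idxOf_lt_length_iff.mpr htC
    apply no_detour hC hCs hmax ⟨C.idxOf t, hidx⟩ L hL0 hLnd hLch hLmem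
    · intro x hx
      rw [hLh] at hx
      simp only [Option.mem_def, Option.some.injEq] at hx
      subst hx
      have hgt : C.get ⟨C.idxOf t, hidx⟩ = t := List.idxOf_get hidx
      rw [hgt]
      exact hAth
    · intro x hx
      rw [hLl] at hx
      simp only [Option.mem_def, Option.some.injEq] at hx
      subst hx
      have he := hσval t htC
      rw [he] at hAh'
      exact hAh'
  have hmodinj : ∀ a b : ℕ, a < C.length → b < C.length →
      (a + 1) % C.length = (b + 1) % C.length → a = b := by
    intro a b ha hb hab
    rcases lt_or_ge (a + 1) C.length with h1 | h1 <;>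
      rcases lt_or_ge (b + 1) C.length with h2 | h2
    · rw [Nat.mod_eq_of_lt h1, Nat.mod_eq_of_lt h2] at hab; omega
    · have e2 : b + 1 = C.length := by omega
      rw [Nat.mod_eq_of_lt h1, e2, Nat.mod_self] at hab; omega
    · have e1 : a + 1 = C.length := by omega
      rw [e1, Nat.mod_self, Nat.mod_eq_of_lt h2] at hab; omega
    · omega
  have hσinj : Set.InjOn σ ↑S := by
    intro t₁ ht₁ t₂ ht₂ he
    have ht₁S : t₁ ∈ S := Finset.mem_coe.mp ht₁
    have ht₂S : t₂ ∈ S := Finset.mem_coe.mp ht₂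
    have ht₁C : t₁ ∈ C := (hmemCt t₁).mp ((hmemS t₁).mp ht₁S).1
    have ht₂C : t₂ ∈ C := (hmemCt t₂).mp ((hmemS t₂).mp ht₂S).1
    rw [hσval t₁ ht₁C, hσval t₂ ht₂C] at he
    have hidx := (hnd.get_inj_iff).mp he
    have hval : (C.idxOf t₁ + 1) % C.length = (C.idxOf t₂ + 1) % C.length :=
      congrArg Fin.val hidx
    have hieq := hmodinj _ _ (List.idxOf_lt_length_iff.mpr ht₁C)
      (List.idxOf_lt_length_iff.mpr ht₂C) hval
    have e1 : C.get ⟨C.idxOf t₁, List.idxOf_lt_length_iff.mpr ht₁C⟩ = t₁ :=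
      List.idxOf_get _
    have e2 : C.get ⟨C.idxOf t₂, List.idxOf_lt_length_iff.mpr ht₂C⟩ = t₂ :=
      List.idxOf_get _
    rw [← e1, ← e2]
    exact congrArg C.get (Fin.ext hieq)
  have hRsub : R ⊆ Ct := by rw [hRdef]; exact Finset.filter_subset _ _
  have hSR : S.card + R.card ≤ C.length := by
    have himg : S.image σ ⊆ Ct \ R := by
      intro x hx
      obtain ⟨t, htS, rfl⟩ := Finset.mem_image.mp hx
      have htC : t ∈ C := (hmemCt t).mp ((hmemS t).mp htS).1
      exact Finset.mem_sdiff.mpr ⟨(hmemCt _).mpr (hσC t htC), hexcl t htS⟩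
    have h1 : S.card = (S.image σ).card := (Finset.card_image_of_injOn hσinj).symm
    have h2 : (S.image σ).card ≤ (Ct \ R).card := Finset.card_le_card himg
    have h3 : (Ct \ R).card = Ct.card - R.card := Finset.card_sdiff_of_subset hRsub
    have h4 : R.card ≤ Ct.card := Finset.card_le_card hRsub
    omega
  have hindeg : ∀ h ∈ Q, D ≤ (Ct.filter fun t => A t h).card + g := by
    intro h hh
    have hsub : (Finset.univ.filter fun w => A w h) ⊆ (Ct.filter fun t => A t h) ∪ Q.erase h := by
      intro x hx
      have hAxh : A x h := (Finset.mem_filter.mp hx).2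
      by_cases hxC : x ∈ C
      · exact Finset.mem_union_left _ (Finset.mem_filter.mpr ⟨(hmemCt x).mpr hxC, hAxh⟩)
      · refine Finset.mem_union_right _ (Finset.mem_erase.mpr ⟨?_, ?_⟩)
        · rintro rfl; exact hirr _ hAxh
        · have hxHs : x ∈ Hs := (hmemHs x).mpr hxC
          have hreach : Reach x h := Relation.ReflTransGen.single ⟨hxC, hQC h hh, hAxh⟩
          rw [← clQ h hh]
          exact Finset.mem_filter.mpr ⟨hxHs, hreach⟩
    have hd := (hdeg h).2
    have hcard := Finset.card_le_card hsub
    have hun := Finset.card_union_le (Ct.filter fun t => A t h) (Q.erase h)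
    have her : (Q.erase h).card = g - 1 := by
      rw [hgdef]; exact Finset.card_erase_of_mem hh
    omega
  have houtdeg : D ≤ R.card + p := by
    have hh₀C : h₀ ∉ C := (hmemHs h₀).mp hh₀Hs
    have hsub : (Finset.univ.filter fun w => A h₀ w) ⊆ R ∪ P.erase h₀ := by
      intro x hx
      have hAx : A h₀ x := (Finset.mem_filter.mp hx).2
      by_cases hxC : x ∈ C
      · exact Finset.mem_union_left _ ((hmemR x).mpr ⟨(hmemCt x).mpr hxC, h₀, hh₀P, hAx⟩)
      · refine Finset.mem_union_right _ (Finset.mem_erase.mpr ⟨?_, ?_⟩)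
        · rintro rfl; exact hirr _ hAx
        · exact (hmemP x).mpr ⟨(hmemHs x).mpr hxC,
            Relation.ReflTransGen.single ⟨hh₀C, hxC, hAx⟩⟩
    have hd := (hdeg h₀).1
    have hcard := Finset.card_le_card hsub
    have hun := Finset.card_union_le R (P.erase h₀)
    have her : (P.erase h₀).card = p - 1 := by
      rw [hpdef]; exact Finset.card_erase_of_mem hh₀P
    omega
  have hSlow : D ≤ S.card + g := by
    have hsub2 : (Ct.filter fun t => A t h₀) ⊆ S := by
      intro t ht
      have h1 := Finset.mem_filter.mp ht
      exact (hmemS t).mpr ⟨h1.1, h₀, hh₀Q, h1.2⟩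
    have h5 := hindeg h₀ hh₀Q
    have h6 := Finset.card_le_card hsub2
    omega
  have hcomm : (∑ t ∈ Ct, (Q.filter fun h => A t h).card)
      = ∑ h ∈ Q, (Ct.filter fun t => A t h).card := by
    simp_rw [Finset.card_filter]
    exact Finset.sum_comm
  have hlow : g * D ≤ (∑ t ∈ Ct, (Q.filter fun h => A t h).card) + g * g := by
    have h1 : (∑ _h ∈ Q, D) ≤ ∑ h ∈ Q, ((Ct.filter fun t => A t h).card + g) :=
      Finset.sum_le_sum fun h hh => hindeg h hh
    rw [Finset.sum_add_distrib, Finset.sum_const, Finset.sum_const, smul_eq_mul,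
      smul_eq_mul, ← hgdef] at h1
    rw [hcomm]
    calc g * D = Q.card * D := by rw [hgdef]
      _ ≤ _ := by
          rw [← hgdef]
          exact h1.trans (by omega)
  have hSsum : (∑ t ∈ Ct, (Q.filter fun h => A t h).card)
      = ∑ t ∈ S, (Q.filter fun h => A t h).card := by
    symm
    apply Finset.sum_subset
    · rw [hSdef]; exact Finset.filter_subset _ _
    · intro t htCt htS
      rw [Finset.card_eq_zero, Finset.filter_eq_empty_iff]
      intro h hh
      intro hAth
      exact htS ((hmemS t).mpr ⟨htCt, h, hh, hAth⟩)
  set W := S.filter (fun t => 3 ≤ (Finset.univ.filter fun h => h ∉ C ∧ A t h).card) with hWdef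
  set w2 := (S.filter (fun t =>
      ¬ 3 ≤ (Finset.univ.filter fun h => h ∉ C ∧ A t h).card)).card with hw2def
  have hww2 : W.card + w2 = S.card := by
    rw [hWdef, hw2def]
    exact Finset.card_filter_add_card_filter_not _
  have hupW : (∑ t ∈ W, (Q.filter fun h => A t h).card) ≤ W.card * g := by
    calc (∑ t ∈ W, (Q.filter fun h => A t h).card) ≤ ∑ _t ∈ W, g :=
          Finset.sum_le_sum fun t _ => by
            rw [hgdef]; exact Finset.card_filter_le _ _
      _ = W.card * g := by rw [Finset.sum_const, smul_eq_mul]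
  have hupN : (∑ t ∈ S.filter (fun t =>
      ¬ 3 ≤ (Finset.univ.filter fun h => h ∉ C ∧ A t h).card),
      (Q.filter fun h => A t h).card) ≤ 2 * w2 := by
    have hb : ∀ t ∈ S.filter (fun t =>
        ¬ 3 ≤ (Finset.univ.filter fun h => h ∉ C ∧ A t h).card),
        (Q.filter fun h => A t h).card ≤ 2 := by
      intro t ht
      obtain ⟨htS, hnot⟩ := Finset.mem_filter.mp ht
      have hsub3 : (Q.filter fun h => A t h) ⊆
          (Finset.univ.filter fun h => h ∉ C ∧ A t h) := by
        intro h hh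
        obtain ⟨hhQ, hAth⟩ := Finset.mem_filter.mp hh
        exact Finset.mem_filter.mpr ⟨Finset.mem_univ _, hQC h hhQ, hAth⟩
      have h7 := Finset.card_le_card hsub3
      omega
    calc (∑ t ∈ S.filter (fun t =>
        ¬ 3 ≤ (Finset.univ.filter fun h => h ∉ C ∧ A t h).card),
        (Q.filter fun h => A t h).card)
        ≤ ∑ _t ∈ S.filter (fun t =>
            ¬ 3 ≤ (Finset.univ.filter fun h => h ∉ C ∧ A t h).card), 2 :=
          Finset.sum_le_sum hb
      _ = 2 * w2 := by rw [Finset.sum_const, smul_eq_mul, ← hw2def, Nat.mul_comm]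
  have hup : (∑ t ∈ S, (Q.filter fun h => A t h).card) ≤ W.card * g + 2 * w2 := by
    rw [← Finset.sum_filter_add_sum_filter_not S (fun t =>
      3 ≤ (Finset.univ.filter fun h => h ∉ C ∧ A t h).card)
      (fun t => (Q.filter fun h => A t h).card)]
    rw [← hWdef]
    exact add_le_add hupW hupN
  have hwT3 : W.card ≤ T3s.card := by
    apply Finset.card_le_card
    intro t ht
    rw [hWdef] at ht
    obtain ⟨htS, h3⟩ := Finset.mem_filter.mp ht
    have htC : t ∈ C := (hmemCt t).mp ((hmemS t).mp htS).1
    rw [hT3def]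
    exact Finset.mem_filter.mpr ⟨Finset.mem_univ _, htC, h3⟩
  have f4 : g * D ≤ (∑ t ∈ S, (Q.filter fun h => A t h).card) + g * g := by
    rw [← hSsum]; exact hlow
  have f7 : n + k ≤ 2 * D := by rw [hDdef]; omega
  have f11 : k + Hs.card ≤ p + g := by omega
  have f12 : k ≤ g := by omega
  set E := ∑ t ∈ S, (Q.filter fun h => A t h).card with hEdef
  have c4 : (g : ℝ) * D ≤ (E : ℝ) + (g : ℝ) * g := by exact_mod_cast f4
  have c5 : (E : ℝ) ≤ (W.card : ℝ) * g + 2 * w2 := by exact_mod_cast hup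
  have c6 : (W.card : ℝ) + w2 = S.card := by exact_mod_cast hww2
  have c1 : (S.card : ℝ) + R.card ≤ C.length := by exact_mod_cast hSR
  have c2 : (D : ℝ) ≤ (R.card : ℝ) + p := by exact_mod_cast houtdeg
  have c7 : (n : ℝ) + k ≤ 2 * D := by exact_mod_cast f7
  have c8 : ((C.length : ℝ)) + Hs.card = n := by exact_mod_cast hcm
  have c9 : (g : ℝ) ≤ Hs.card := by exact_mod_cast hgm
  have c10 : (p : ℝ) ≤ Hs.card := by exact_mod_cast hpm
  have c12 : (k : ℝ) ≤ g := by exact_mod_cast f12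
  have ck3 : (3 : ℝ) ≤ k := by exact_mod_cast hk
  have cT3 : (W.card : ℝ) ≤ T3s.card := by exact_mod_cast hwT3
  have hprod1 : (0 : ℝ) ≤ ((g : ℝ) - k) * ((Hs.card : ℝ) - g) :=
    mul_nonneg (by linarith) (by linarith)
  have hprod2 : (0 : ℝ) ≤ ((k : ℝ) - 2) * (Hs.card : ℝ) :=
    mul_nonneg (by linarith) (Nat.cast_nonneg _)
  have hprod3 : ((g : ℝ) + 2) * ((n : ℝ) + k) ≤ ((g : ℝ) + 2) * (2 * D) :=
    mul_le_mul_of_nonneg_left c7 (by linarith)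
  have step1 : ((g : ℝ) + 2) * D - g * g - 2 * C.length - 2 * p ≤ ((g : ℝ) - 2) * W.card := by
    nlinarith [c4, c5, c6, c1, c2]
  have step2 : ((g : ℝ) - 2) * (((n : ℝ) - k) / 2 - Hs.card)
      ≤ ((g : ℝ) + 2) * D - g * g - 2 * C.length - 2 * p := by
    nlinarith [hprod1, hprod2, hprod3, c8, c10]
  have hgpos : (0 : ℝ) < (g : ℝ) - 2 := by linarith
  have final : ((n : ℝ) - k) / 2 - Hs.card ≤ (T3s.card : ℝ) := by
    have hh := step2.trans (step1.trans (mul_le_mul_of_nonneg_left cT3 (le_of_lt hgpos)))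
    exact le_of_mul_le_mul_left hh hgpos
  exact final


theorem ofFn_rev {V : Type*} {k : ℕ} (s : Fin k → V) :
    List.ofFn (fun i => s (Fin.rev i)) = (List.ofFn s).reverse := by
  apply List.ext_get
  · simp
  · intro i h1 h2
    have hk : i < k := by simpa using h1
    have hlen : (List.ofFn s).length = k := by simp
    rw [List.get_ofFn]
    have h3 : (List.ofFn s).length - 1 - i < (List.ofFn s).length := by
      rw [hlen]; omega
    rw [List.get_reverse' _ _ h3, List.get_ofFn]
    congr 1
    apply Fin.ext
    simp only [Fin.coe_cast, Fin.val_rev, hlen]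
    omega

theorem isCycleList_reverse {V : Type*} {A : V → V → Prop} {l : List V}
    (h : IsCycleList A l) : IsCycleList (fun a b => A b a) l.reverse := by
  obtain ⟨hlen, hnd, hch, hlh⟩ := h
  refine ⟨by simpa using hlen, by simpa using hnd, ?_, ?_⟩
  · show List.IsChain _ _; rw [List.isChain_reverse]
    exact hch
  · intro a ha b hb
    rw [List.getLast?_reverse] at ha
    rw [List.head?_reverse] at hb
    exact hlh b hb a ha

theorem encounters_reverse {V : Type*} {k : ℕ} {l : List V} {s : Fin k → V}
    (h : EncountersInOrder l s) :
    EncountersInOrder l.reverse (fun i => s (Fin.rev i)) := by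
  obtain ⟨r, hsub⟩ := h
  have h1 : l.reverse ~r (l.rotate r).reverse := List.IsRotated.reverse ⟨r, rfl⟩
  obtain ⟨r', hr'⟩ := h1
  refine ⟨r', ?_⟩
  rw [hr', ofFn_rev]
  exact hsub.reverse

end T3F3

set_option maxHeartbeats 2000000 in
/-- $|T_3|, |F_3| \ge (n-k)/2 - |H|$. -/
theorem T3_and_F3_size_bounds
    {V : Type*} [Fintype V] [DecidableEq V]
    (A : V → V → Prop) [DecidableRel A] (hirr : Irreflexive A)
    (n k : ℕ) (hn : n = Fintype.card V) (hk : 3 ≤ k)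
    (hdeg : ∀ v : V, (n + k + 1) / 2 - 1 ≤ (Finset.univ.filter fun w => A v w).card ∧
                     (n + k + 1) / 2 - 1 ≤ (Finset.univ.filter fun w => A w v).card)
    (s : Fin k → V) (hs : Function.Injective s)
    (C : List V) (hC : IsCycleList A C) (hCs : EncountersInOrder C s)
    (hmax : ∀ C' : List V, IsCycleList A C' → EncountersInOrder C' s → C'.length ≤ C.length)
    (hnotHam : ∃ v : V, v ∉ C) :
    ((n - k : ℝ) / 2 - (Finset.univ.filter fun v => (v ∉ C : Prop)).card ≤
      ((Finset.univ.filter fun v => v ∈ C ∧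
        3 ≤ (Finset.univ.filter fun h => h ∉ C ∧ A v h).card).card : ℝ)) ∧
    ((n - k : ℝ) / 2 - (Finset.univ.filter fun v => (v ∉ C : Prop)).card ≤
      ((Finset.univ.filter fun v => v ∈ C ∧
        3 ≤ (Finset.univ.filter fun h => h ∉ C ∧ A h v).card).card : ℝ)) := by
  constructor
  · exact T3F3.main_half A hirr n k hn hk hdeg s hs C hC hCs hmax hnotHam
  · letI hdecflip : DecidableRel (fun x y : V => A y x) := fun x y =>
      inferInstanceAs (Decidable (A y x))
    have hirr' : Irreflexive (fun x y : V => A y x) := fun x h => hirr x h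
    have hdeg' : ∀ v : V, (n + k + 1) / 2 - 1 ≤
          (Finset.univ.filter fun w => (fun x y : V => A y x) v w).card ∧
        (n + k + 1) / 2 - 1 ≤ (Finset.univ.filter fun w => (fun x y : V => A y x) w v).card := by
      intro v
      exact ⟨(hdeg v).2, (hdeg v).1⟩
    have hs' : Function.Injective (fun i : Fin k => s (Fin.rev i)) :=
      fun a b hab => Fin.rev_injective (hs hab)
    have hCrev : IsCycleList (fun x y : V => A y x) C.reverse := T3F3.isCycleList_reverse hC
    have hCsrev : EncountersInOrder C.reverse (fun i : Fin k => s (Fin.rev i)) :=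
      T3F3.encounters_reverse hCs
    have hmaxrev : ∀ C'' : List V, IsCycleList (fun x y : V => A y x) C'' →
        EncountersInOrder C'' (fun i : Fin k => s (Fin.rev i)) →
        C''.length ≤ C.reverse.length := by
      intro C'' hcyc henc
      have h1 : IsCycleList A C''.reverse := T3F3.isCycleList_reverse hcyc
      have h2 := T3F3.encounters_reverse henc
      have h2' : EncountersInOrder C''.reverse s := by
        have he : (fun i : Fin k => s (Fin.rev (Fin.rev i))) = s := by
          funext i; rw [Fin.rev_rev]
        rwa [he] at h2
      have h3 := hmax C''.reverse h1 h2'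
      rw [List.length_reverse] at h3
      rw [List.length_reverse]
      exact h3
    have hnotHam' : ∃ v : V, v ∉ C.reverse := by
      obtain ⟨v, hv⟩ := hnotHam
      exact ⟨v, by simpa using hv⟩
    have hres := T3F3.main_half (fun x y : V => A y x) hirr' n k hn hk hdeg'
      (fun i : Fin k => s (Fin.rev i)) hs' C.reverse hCrev hCsrev hmaxrev hnotHam'
    have eq1 : (Finset.univ.filter fun v => (v ∉ C.reverse : Prop))
        = (Finset.univ.filter fun v => (v ∉ C : Prop)) :=
      Finset.filter_congr fun x _ => by rw [List.mem_reverse]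
    have eq2 : ∀ v : V, (Finset.univ.filter fun h => h ∉ C.reverse ∧ (fun x y : V => A y x) v h)
        = (Finset.univ.filter fun h => h ∉ C ∧ A h v) :=
      fun v => Finset.filter_congr fun x _ => by rw [List.mem_reverse]
    have eq3 : (Finset.univ.filter fun v => v ∈ C.reverse ∧
          3 ≤ (Finset.univ.filter fun h => h ∉ C.reverse ∧ (fun x y : V => A y x) v h).card)
        = (Finset.univ.filter fun v => v ∈ C ∧
          3 ≤ (Finset.univ.filter fun h => h ∉ C ∧ A h v).card) := by
      apply Finset.filter_congr
      intro x _
      rw [List.mem_reverse, eq2 x]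
    rw [eq1, eq3] at hres
    exact hres
end
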